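/- arXiv:2504.07391 — 8 statements merged into one kernel-verified Lean document; each statement's English description precedes it below -/
import Mathlib

section
/- Let T > 0, let 0 < β ≤ 1, and let u ∈ C^{0,β}([0,T]) with Hölder seminorm [u]_{C^{0,β}[0,T]}. Fix N ∈ ℕ, τ = T/N, t_j = jτ, and let j be an integer with 1 ≤ j and j+1 ≤ N. Then for every s ∈ [t_{j-1}, t_{j+1}], |u(s) − Π_{2,j}u(s)| ≤ [ (2^{β−1} + 2)(t_{j+1} − s) τ^{β−1} + (t_{j+1} − s)^β ] · [u]_{C^{0,β}[0,T]}. -/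
open Set

/-- `M` is a Hölder bound (with exponent `β`) for `u` on `[0, T]`, i.e.
`[u]_{C^{0,β}[0,T]} ≤ M`; used with the least such `M`, it encodes the Hölder seminorm. -/
def holderBnd (T β M : ℝ) (u : ℝ → ℝ) : Prop :=
  ∀ x ∈ Set.Icc (0:ℝ) T, ∀ y ∈ Set.Icc (0:ℝ) T, |u x - u y| ≤ M * |x - y| ^ β

/-- The quadratic Lagrange interpolant `Π_{2,j} u` of `u` at the nodes
`t_{j-1} = (j-1)τ`, `t_j = jτ`, `t_{j+1} = (j+1)τ`. -/
noncomputable def Pi2 (τ : ℝ) (u : ℝ → ℝ) (j : ℕ) (s : ℝ) : ℝ :=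
  (s - (j:ℝ)*τ) * (s - ((j:ℝ)+1)*τ) / (2*τ^2) * u (((j:ℝ)-1)*τ)
  - (s - ((j:ℝ)-1)*τ) * (s - ((j:ℝ)+1)*τ) / τ^2 * u ((j:ℝ)*τ)
  + (s - ((j:ℝ)-1)*τ) * (s - (j:ℝ)*τ) / (2*τ^2) * u (((j:ℝ)+1)*τ)

theorem stmt0 (T : ℝ) (hT : 0 < T) (β : ℝ) (hβ0 : 0 < β) (hβ1 : β ≤ 1)
    (u : ℝ → ℝ) (hu : ContinuousOn u (Set.Icc 0 T))
    (M : ℝ) (hM0 : 0 ≤ M) (hM : holderBnd T β M u)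
    (N : ℕ) (hN : 0 < N) (τ : ℝ) (hτ : τ = T / N)
    (j : ℕ) (hj : 1 ≤ j) (hjN : j + 1 ≤ N)
    (s : ℝ) (hs : s ∈ Set.Icc (((j:ℝ)-1)*τ) (((j:ℝ)+1)*τ)) :
    |u s - Pi2 τ u j s| ≤
      ((2 ^ (β - 1) + 2) * (((j:ℝ)+1)*τ - s) * τ ^ (β - 1)
        + (((j:ℝ)+1)*τ - s) ^ β) * M := by
  have hN' : (0:ℝ) < N := by exact_mod_cast hN
  have hτ0 : 0 < τ := by rw [hτ]; positivity
  have hτne : τ ≠ 0 := ne_of_gt hτ0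
  have hNτ : (N:ℝ) * τ = T := by rw [hτ]; field_simp
  have hj1 : (1:ℝ) ≤ (j:ℝ) := by exact_mod_cast hj
  have hjN' : (j:ℝ) + 1 ≤ (N:ℝ) := by exact_mod_cast hjN
  obtain ⟨hs1, hs2⟩ := hs
  have htm : ((j:ℝ)-1)*τ ∈ Set.Icc (0:ℝ) T := ⟨by nlinarith, by nlinarith⟩
  have ht₀ : (j:ℝ)*τ ∈ Set.Icc (0:ℝ) T := ⟨by nlinarith, by nlinarith⟩
  have htp : ((j:ℝ)+1)*τ ∈ Set.Icc (0:ℝ) T := ⟨by nlinarith, by nlinarith⟩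
  have hs' : s ∈ Set.Icc (0:ℝ) T := ⟨le_trans htm.1 hs1, le_trans hs2 htp.2⟩
  set A : ℝ := s - ((j:ℝ)-1)*τ with hAdef
  set B : ℝ := ((j:ℝ)+1)*τ - s with hBdef
  set D : ℝ := s - (j:ℝ)*τ with hDdef
  have hA0 : 0 ≤ A := by simp [hAdef]; linarith
  have hB0 : 0 ≤ B := by simp [hBdef]; linarith
  have hAB : A + B = 2*τ := by rw [hAdef, hBdef]; ring
  have hA2 : A ≤ 2*τ := by linarith
  have hD : |D| ≤ τ := abs_le.2 ⟨by rw [hDdef]; linarith, by rw [hDdef]; linarith⟩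
  have hD0 : 0 ≤ |D| := abs_nonneg _
  -- Hölder bounds
  have em : |u s - u (((j:ℝ)-1)*τ)| ≤ M * A ^ β := by
    have h := hM s hs' _ htm
    rwa [show |s - (((j:ℝ)-1)*τ)| = A from abs_of_nonneg hA0] at h
  have e₀ : |u s - u ((j:ℝ)*τ)| ≤ M * |D| ^ β := hM s hs' _ ht₀
  have ep : |u s - u (((j:ℝ)+1)*τ)| ≤ M * B ^ β := by
    have h := hM s hs' _ htp
    rwa [show |s - (((j:ℝ)+1)*τ)| = B by rw [abs_sub_comm]; exact abs_of_nonneg hB0] at h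
  -- key identity
  have key : u s - Pi2 τ u j s =
      D * (s - ((j:ℝ)+1)*τ) / (2*τ^2) * (u s - u (((j:ℝ)-1)*τ))
      - A * (s - ((j:ℝ)+1)*τ) / τ^2 * (u s - u ((j:ℝ)*τ))
      + A * D / (2*τ^2) * (u s - u (((j:ℝ)+1)*τ)) := by
    rw [hAdef, hDdef]
    unfold Pi2
    field_simp
    ring
  -- rpow facts
  have f1 : (2*τ) ^ β = (2:ℝ) ^ β * τ ^ β := Real.mul_rpow (by norm_num) hτ0.le
  have f2 : (2:ℝ) ^ (β-1) = (2:ℝ) ^ β / 2 := by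
    rw [Real.rpow_sub (by norm_num), Real.rpow_one]
  have f3 : τ ^ (β-1) = τ ^ β / τ := by
    rw [Real.rpow_sub hτ0, Real.rpow_one]
  have hAβ : A ^ β ≤ (2*τ) ^ β := Real.rpow_le_rpow hA0 hA2 hβ0.le
  have hDβ : |D| ^ β ≤ τ ^ β := Real.rpow_le_rpow hD0 hD hβ0.le
  have hBβ0 : 0 ≤ B ^ β := Real.rpow_nonneg hB0 β
  have hτβ0 : 0 ≤ τ ^ β := Real.rpow_nonneg hτ0.le β
  have h2τβ0 : 0 ≤ (2*τ) ^ β := Real.rpow_nonneg (by linarith) β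
  -- three term bounds
  have h1 : |D * (s - ((j:ℝ)+1)*τ) / (2*τ^2) * (u s - u (((j:ℝ)-1)*τ))|
      ≤ 2 ^ (β-1) * B * τ ^ (β-1) * M := by
    rw [abs_mul, abs_div, abs_mul, abs_of_pos (show (0:ℝ) < 2*τ^2 by positivity),
      show |s - (((j:ℝ)+1)*τ)| = B by rw [abs_sub_comm]; exact abs_of_nonneg hB0]
    calc |D| * B / (2*τ^2) * |u s - u (((j:ℝ)-1)*τ)|
        ≤ τ * B / (2*τ^2) * (M * ((2*τ) ^ β)) := by
          apply mul_le_mul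
          · gcongr
          · exact em.trans (by gcongr)
          · exact abs_nonneg _
          · positivity
      _ = 2 ^ (β-1) * B * τ ^ (β-1) * M := by
          rw [f1, f2, f3]; field_simp
  have h2 : |A * (s - ((j:ℝ)+1)*τ) / τ^2 * (u s - u ((j:ℝ)*τ))|
      ≤ 2 * B * τ ^ (β-1) * M := by
    rw [abs_mul, abs_div, abs_mul, abs_of_pos (show (0:ℝ) < τ^2 by positivity),
      abs_of_nonneg hA0,
      show |s - (((j:ℝ)+1)*τ)| = B by rw [abs_sub_comm]; exact abs_of_nonneg hB0]
    calc A * B / τ^2 * |u s - u ((j:ℝ)*τ)|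
        ≤ (2*τ) * B / τ^2 * (M * τ ^ β) := by
          apply mul_le_mul
          · gcongr
          · exact e₀.trans (by gcongr)
          · exact abs_nonneg _
          · positivity
      _ = 2 * B * τ ^ (β-1) * M := by rw [f3]; field_simp
  have h3 : |A * D / (2*τ^2) * (u s - u (((j:ℝ)+1)*τ))| ≤ B ^ β * M := by
    rw [abs_mul, abs_div, abs_mul, abs_of_pos (show (0:ℝ) < 2*τ^2 by positivity),
      abs_of_nonneg hA0]
    calc A * |D| / (2*τ^2) * |u s - u (((j:ℝ)+1)*τ)|
        ≤ (2*τ) * τ / (2*τ^2) * (M * B ^ β) := by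
          apply mul_le_mul
          · gcongr
          · exact ep
          · exact abs_nonneg _
          · positivity
      _ = B ^ β * M := by field_simp
  have tri : |u s - Pi2 τ u j s| ≤
      |D * (s - ((j:ℝ)+1)*τ) / (2*τ^2) * (u s - u (((j:ℝ)-1)*τ))|
      + |A * (s - ((j:ℝ)+1)*τ) / τ^2 * (u s - u ((j:ℝ)*τ))|
      + |A * D / (2*τ^2) * (u s - u (((j:ℝ)+1)*τ))| := by
    rw [key]
    exact (abs_add_le _ _).trans (add_le_add_left (abs_sub _ _) _)
  have hrhs : ((2 ^ (β - 1) + 2) * B * τ ^ (β - 1) + B ^ β) * M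
      = 2 ^ (β-1) * B * τ ^ (β-1) * M + 2 * B * τ ^ (β-1) * M + B ^ β * M := by ring
  calc |u s - Pi2 τ u j s| ≤ _ := tri
    _ ≤ 2 ^ (β-1) * B * τ ^ (β-1) * M + 2 * B * τ ^ (β-1) * M + B ^ β * M := by
        gcongr
    _ = ((2 ^ (β - 1) + 2) * B * τ ^ (β - 1) + B ^ β) * M := by ring
end

section
/- Let T > 0, let 0 < β ≤ 1, and let u ∈ C^{1,β}([0,T]). Fix N ∈ ℕ, τ = T/N, t_j = jτ, and let j be an integer with 1 ≤ j and j+1 ≤ N. Then for every s ∈ [t_{j-1}, t_{j+1}], |u(s) − Π_{2,j}u(s)| ≤ 2 (t_{j+1} − s) τ^β · [u']_{C^{0,β}[0,T]}. -/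
open Set

lemma Pi2_hasDerivAt (τ : ℝ) (u : ℝ → ℝ) (j : ℕ) (x : ℝ) :
    HasDerivAt (fun s => Pi2 τ u j s)
      ((2*x - (j:ℝ)*τ - ((j:ℝ)+1)*τ) / (2*τ^2) * u (((j:ℝ)-1)*τ)
        - (2*x - ((j:ℝ)-1)*τ - ((j:ℝ)+1)*τ) / τ^2 * u ((j:ℝ)*τ)
        + (2*x - ((j:ℝ)-1)*τ - (j:ℝ)*τ) / (2*τ^2) * u (((j:ℝ)+1)*τ)) x := by
  have h1 := ((((hasDerivAt_id x).sub_const ((j:ℝ)*τ)).mul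
      ((hasDerivAt_id x).sub_const (((j:ℝ)+1)*τ))).div_const (2*τ^2)).mul_const
      (u (((j:ℝ)-1)*τ))
  have h2 := ((((hasDerivAt_id x).sub_const (((j:ℝ)-1)*τ)).mul
      ((hasDerivAt_id x).sub_const (((j:ℝ)+1)*τ))).div_const (τ^2)).mul_const
      (u ((j:ℝ)*τ))
  have h3 := ((((hasDerivAt_id x).sub_const (((j:ℝ)-1)*τ)).mul
      ((hasDerivAt_id x).sub_const ((j:ℝ)*τ))).div_const (2*τ^2)).mul_const
      (u (((j:ℝ)+1)*τ))
  have := (h1.sub h2).add h3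
  simp only [id_eq] at this
  refine this.congr_deriv ?_
  ring

set_option maxHeartbeats 1000000 in
theorem stmt1 (T : ℝ) (hT : 0 < T) (β : ℝ) (hβ0 : 0 < β) (hβ1 : β ≤ 1)
    (u u' : ℝ → ℝ)
    (hderiv : ∀ t ∈ Set.Icc (0:ℝ) T, HasDerivWithinAt u (u' t) (Set.Icc 0 T) t)
    (hu' : ContinuousOn u' (Set.Icc 0 T))
    (M : ℝ) (hM0 : 0 ≤ M) (hM : holderBnd T β M u')
    (N : ℕ) (hN : 0 < N) (τ : ℝ) (hτ : τ = T / N)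
    (j : ℕ) (hj : 1 ≤ j) (hjN : j + 1 ≤ N)
    (s : ℝ) (hs : s ∈ Set.Icc (((j:ℝ)-1)*τ) (((j:ℝ)+1)*τ)) :
    |u s - Pi2 τ u j s| ≤ 2 * (((j:ℝ)+1)*τ - s) * τ ^ β * M := by
  have hτpos : 0 < τ := by rw [hτ]; positivity
  have hτne : τ ≠ 0 := ne_of_gt hτpos
  have hj1 : (1:ℝ) ≤ (j:ℝ) := by exact_mod_cast hj
  have hjN' : (j:ℝ) + 1 ≤ (N:ℝ) := by exact_mod_cast hjN
  have hNτ : (N:ℝ) * τ = T := by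
    rw [hτ]; field_simp
  -- the three nodes
  set t0 : ℝ := ((j:ℝ)-1)*τ with ht0
  set t1 : ℝ := (j:ℝ)*τ with ht1
  set t2 : ℝ := ((j:ℝ)+1)*τ with ht2
  have h01 : t0 < t1 := by rw [ht0, ht1]; nlinarith
  have h12 : t1 < t2 := by rw [ht1, ht2]; nlinarith
  have hd01 : t1 - t0 = τ := by rw [ht0, ht1]; ring
  have hd12 : t2 - t1 = τ := by rw [ht1, ht2]; ring
  have hd02 : t2 - t0 = 2*τ := by rw [ht0, ht2]; ring
  have ht0nn : 0 ≤ t0 := by rw [ht0]; nlinarith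
  have ht2T : t2 ≤ T := by
    rw [ht2, ← hNτ]
    exact mul_le_mul_of_nonneg_right hjN' hτpos.le
  have hsub : Icc t0 t2 ⊆ Icc (0:ℝ) T := Icc_subset_Icc ht0nn ht2T
  have hcont : ContinuousOn u (Icc (0:ℝ) T) := fun x hx => (hderiv x hx).continuousWithinAt
  -- mean value theorem on the two subintervals
  have hmvt : ∀ a b : ℝ, a < b → t0 ≤ a → b ≤ t2 →
      ∃ η ∈ Ioo a b, u' η = (u b - u a) / (b - a) := by
    intro a b hab ha hb
    apply exists_hasDerivAt_eq_slope u u' hab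
    · exact hcont.mono (fun x hx => hsub ⟨le_trans ha hx.1, le_trans hx.2 hb⟩)
    · intro x hx
      have hx0 : 0 < x := lt_of_le_of_lt (le_trans ht0nn ha) hx.1
      have hxT : x < T := lt_of_lt_of_le hx.2 (le_trans hb ht2T)
      exact (hderiv x ⟨hx0.le, hxT.le⟩).hasDerivAt (Icc_mem_nhds hx0 hxT)
  obtain ⟨η1, hη1mem, hη1⟩ := hmvt t0 t1 h01 le_rfl h12.le
  obtain ⟨η2, hη2mem, hη2⟩ := hmvt t1 t2 h12 h01.le le_rfl
  have hη1' : u t1 - u t0 = τ * u' η1 := by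
    rw [hη1, hd01]; field_simp
  have hη2' : u t2 - u t1 = τ * u' η2 := by
    rw [hη2, hd12]; field_simp
  have hη1T : η1 ∈ Icc (0:ℝ) T := hsub ⟨hη1mem.1.le, le_trans hη1mem.2.le h12.le⟩
  have hη2T : η2 ∈ Icc (0:ℝ) T := hsub ⟨le_trans h01.le hη2mem.1.le, hη2mem.2.le⟩
  -- the derivative of the interpolant
  set Q : ℝ → ℝ := fun x => (2*x - t1 - t2) / (2*τ^2) * u t0
      - (2*x - t0 - t2) / τ^2 * u t1 + (2*x - t0 - t1) / (2*τ^2) * u t2 with hQdef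
  have hQ : ∀ x : ℝ, HasDerivAt (fun s => Pi2 τ u j s) (Q x) x := by
    intro x
    rw [hQdef]
    exact Pi2_hasDerivAt τ u j x
  -- rpow facts
  have hτβpos : (0:ℝ) < τ ^ β := Real.rpow_pos_of_pos hτpos β
  have h2τβ : (2*τ) ^ β ≤ 2 * τ ^ β := by
    rw [Real.mul_rpow (by norm_num) hτpos.le]
    have : (2:ℝ) ^ β ≤ 2 ^ (1:ℝ) := Real.rpow_le_rpow_of_exponent_le one_le_two hβ1
    rw [Real.rpow_one] at this
    exact mul_le_mul_of_nonneg_right this hτβpos.le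
  -- a convenient Hölder estimate
  have hold : ∀ x ∈ Icc (0:ℝ) T, ∀ y ∈ Icc (0:ℝ) T, ∀ r : ℝ, 0 ≤ r → |x - y| ≤ r →
      |u' x - u' y| ≤ M * r ^ β := by
    intro x hx y hy r hr hxy
    refine le_trans (hM x hx y hy) ?_
    exact mul_le_mul_of_nonneg_left (Real.rpow_le_rpow (abs_nonneg _) hxy hβ0.le) hM0
  -- key pointwise derivative bound
  have key : ∀ σ ∈ Icc t0 t2, |u' σ - Q σ| ≤ 2 * τ ^ β * M := by
    intro σ hσ
    have hσT : σ ∈ Icc (0:ℝ) T := hsub hσ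
    set lam : ℝ := (2*σ - t0 - t1) / (2*τ) with hlam
    have hrep : Q σ = (1 - lam) * u' η1 + lam * u' η2 := by
      have e1 : u' η1 = (u t1 - u t0) / τ := by
        rw [hη1']; field_simp
      have e2 : u' η2 = (u t2 - u t1) / τ := by
        rw [hη2']; field_simp
      rw [hQdef, hlam, e1, e2, ht0, ht1, ht2]
      field_simp
      ring
    have he12 : |u' η2 - u' η1| ≤ M * (2*τ) ^ β := by
      apply hold η2 hη2T η1 hη1T (2*τ) (by linarith)
      rw [abs_le]
      constructor <;> [skip; skip] <;>
        · have := hη1mem.1; have := hη1mem.2; have := hη2mem.1; have := hη2mem.2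
          linarith
    have he12' : |u' η2 - u' η1| ≤ M * (2 * τ ^ β) :=
      le_trans he12 (mul_le_mul_of_nonneg_left h2τβ hM0)
    rcases le_or_gt 0 lam with hl0 | hl0
    · rcases le_or_gt lam 1 with hl1 | hl1
      · -- middle case: convex combination
        have he1 : |u' σ - u' η1| ≤ M * (2*τ) ^ β := by
          apply hold σ hσT η1 hη1T (2*τ) (by linarith)
          rw [abs_le]
          constructor <;>
            · have := hη1mem.1; have := hη1mem.2; have := hσ.1; have := hσ.2
              linarith
        have he2 : |u' σ - u' η2| ≤ M * (2*τ) ^ β := by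
          apply hold σ hσT η2 hη2T (2*τ) (by linarith)
          rw [abs_le]
          constructor <;>
            · have := hη2mem.1; have := hη2mem.2; have := hσ.1; have := hσ.2
              linarith
        have hid : u' σ - Q σ = (1 - lam) * (u' σ - u' η1) + lam * (u' σ - u' η2) := by
          rw [hrep]; ring
        calc |u' σ - Q σ| ≤ (1 - lam) * |u' σ - u' η1| + lam * |u' σ - u' η2| := by
              rw [hid]
              refine le_trans (abs_add_le _ _) ?_
              rw [abs_mul, abs_mul, abs_of_nonneg (by linarith : (0:ℝ) ≤ 1 - lam),
                abs_of_nonneg hl0]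
          _ ≤ (1 - lam) * (M * (2*τ) ^ β) + lam * (M * (2*τ) ^ β) := by
              gcongr <;> linarith
          _ = M * (2*τ) ^ β := by ring
          _ ≤ M * (2 * τ ^ β) := mul_le_mul_of_nonneg_left h2τβ hM0
          _ = 2 * τ ^ β * M := by ring
      · -- right case: lam > 1
        have hσt1 : t1 ≤ σ := by
          have : 2*τ < 2*σ - t0 - t1 := by
            rw [hlam] at hl1
            have := (lt_div_iff₀ (by linarith : (0:ℝ) < 2*τ)).mp hl1
            linarith
          linarith
        have hlam32 : lam ≤ 3/2 := by
          rw [hlam, div_le_iff₀ (by linarith : (0:ℝ) < 2*τ)]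
          have h := hσ.2
          linarith
        have he2 : |u' σ - u' η2| ≤ M * τ ^ β := by
          apply hold σ hσT η2 hη2T τ hτpos.le
          rw [abs_le]
          constructor <;>
            · have := hη2mem.1; have := hη2mem.2; have := hσ.2
              linarith
        have hid : u' σ - Q σ = (u' σ - u' η2) + (1 - lam) * (u' η2 - u' η1) := by
          rw [hrep]; ring
        have habs : |(1 - lam) * (u' η2 - u' η1)| ≤ (1/2) * (M * (2 * τ ^ β)) := by
          rw [abs_mul]
          apply mul_le_mul _ he12' (abs_nonneg _) (by norm_num)
          rw [abs_le]; constructor <;> linarith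
        calc |u' σ - Q σ| ≤ |u' σ - u' η2| + |(1 - lam) * (u' η2 - u' η1)| := by
              rw [hid]; exact abs_add_le _ _
          _ ≤ M * τ ^ β + (1/2) * (M * (2 * τ ^ β)) := add_le_add he2 habs
          _ = 2 * τ ^ β * M := by ring
    · -- left case: lam < 0
      have hσt1 : σ ≤ t1 := by
        have : 2*σ - t0 - t1 < 0 := by
          rw [hlam] at hl0
          have := (div_neg_iff.mp hl0)
          rcases this with ⟨h1, h2⟩ | ⟨h1, h2⟩
          · linarith
          · linarith
        linarith
      have hlamhalf : -(1/2) ≤ lam := by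
        rw [hlam, le_div_iff₀ (by linarith : (0:ℝ) < 2*τ)]
        have h := hσ.1
        linarith
      have he1 : |u' σ - u' η1| ≤ M * τ ^ β := by
        apply hold σ hσT η1 hη1T τ hτpos.le
        rw [abs_le]
        constructor <;>
          · have := hη1mem.1; have := hη1mem.2; have := hσ.1
            linarith
      have hid : u' σ - Q σ = (u' σ - u' η1) - lam * (u' η2 - u' η1) := by
        rw [hrep]; ring
      have habs : |lam * (u' η2 - u' η1)| ≤ (1/2) * (M * (2 * τ ^ β)) := by
        rw [abs_mul]
        apply mul_le_mul _ he12' (abs_nonneg _) (by norm_num)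
        rw [abs_le]; constructor <;> linarith
      calc |u' σ - Q σ| ≤ |u' σ - u' η1| + |lam * (u' η2 - u' η1)| := by
            rw [hid]; exact abs_sub _ _
        _ ≤ M * τ ^ β + (1/2) * (M * (2 * τ ^ β)) := add_le_add he1 habs
        _ = 2 * τ ^ β * M := by ring
  -- mean value inequality on [t0, t2]
  have hE : ∀ x ∈ Icc t0 t2, HasDerivWithinAt (fun y => u y - Pi2 τ u j y)
      (u' x - Q x) (Icc t0 t2) x := by
    intro x hx
    exact ((hderiv x (hsub hx)).mono hsub).sub ((hQ x).hasDerivWithinAt)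
  have hbound : ∀ x ∈ Icc t0 t2, ‖u' x - Q x‖ ≤ 2 * τ ^ β * M := by
    intro x hx
    rw [Real.norm_eq_abs]
    exact key x hx
  have ht2mem : t2 ∈ Icc t0 t2 := ⟨by linarith, le_rfl⟩
  have hmvi := (convex_Icc t0 t2).norm_image_sub_le_of_norm_hasDerivWithin_le
      hE hbound ht2mem hs
  have hPit2 : Pi2 τ u j t2 = u t2 := by
    rw [ht2]
    simp only [Pi2]
    field_simp
    ring
  rw [Real.norm_eq_abs, Real.norm_eq_abs, hPit2, sub_self, sub_zero,
    abs_of_nonpos (by linarith [hs.2] : s - t2 ≤ 0)] at hmvi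
  calc |u s - Pi2 τ u j s| ≤ 2 * τ ^ β * M * -(s - t2) := hmvi
    _ = 2 * (t2 - s) * τ ^ β * M := by ring
end

section
/- Let T > 0, let 0 < β ≤ 1, and let u ∈ C^{2,β}([0,T]). Fix N ∈ ℕ, τ = T/N, t_j = jτ, and let j be an integer with 1 ≤ j and j+1 ≤ N. Then for every s ∈ [t_{j-1}, t_{j+1}], |u(s) − Π_{2,j}u(s)| ≤ (2^{β+1} + 2)(t_{j+1} − s) τ^{β+1} · [u'']_{C^{0,β}[0,T]}. -/
open Set

open intervalIntegral in

lemma key_incr (f f' : ℝ → ℝ) (a b C : ℝ) (hab : a ≤ b) (hC : 0 ≤ C)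
    (hcont : ContinuousOn f (Icc a b))
    (hf'cont : ContinuousOn f' (Icc a b))
    (hd : ∀ x ∈ Ioo a b, HasDerivAt f (f' x) x)
    (hbound : ∀ x ∈ Icc a b, |f' x| ≤ C * (x - a)) :
    |f b - f a| ≤ C * (b - a)^2 / 2 := by
  have hint : IntervalIntegrable f' MeasureTheory.volume a b := by
    apply ContinuousOn.intervalIntegrable
    rwa [uIcc_of_le hab]
  have hFTC : ∫ y in a..b, f' y = f b - f a :=
    integral_eq_sub_of_hasDeriv_right_of_le hab hcont
      (fun x hx => (hd x hx).hasDerivWithinAt) hint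
  rw [← hFTC]
  have h1 : |∫ y in a..b, f' y| ≤ |∫ y in a..b, C * (y - a)| := by
    rw [← Real.norm_eq_abs]
    apply intervalIntegral.norm_integral_le_abs_of_norm_le
    · filter_upwards [MeasureTheory.ae_restrict_mem measurableSet_uIoc] with y hy
      rw [uIoc_of_le hab] at hy
      exact hbound y ⟨hy.1.le, hy.2⟩
    · exact (continuous_const.mul (continuous_id.sub continuous_const)).intervalIntegrable a b
  have h2 : (∫ y in a..b, C * (y - a)) = C * (b - a)^2 / 2 := by
    rw [intervalIntegral.integral_const_mul,
      intervalIntegral.integral_sub intervalIntegrable_id (intervalIntegrable_const),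
      integral_id, integral_const]
    simp [smul_eq_mul]; ring
  rw [h2] at h1
  refine h1.trans (le_of_eq (abs_of_nonneg (by positivity)))

open intervalIntegral in
lemma key_decr (f f' : ℝ → ℝ) (a b C : ℝ) (hab : a ≤ b) (hC : 0 ≤ C)
    (hcont : ContinuousOn f (Icc a b))
    (hf'cont : ContinuousOn f' (Icc a b))
    (hd : ∀ x ∈ Ioo a b, HasDerivAt f (f' x) x)
    (hbound : ∀ x ∈ Icc a b, |f' x| ≤ C * (b - x)) :
    |f b - f a| ≤ C * (b - a)^2 / 2 := by
  have hint : IntervalIntegrable f' MeasureTheory.volume a b := by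
    apply ContinuousOn.intervalIntegrable
    rwa [uIcc_of_le hab]
  have hFTC : ∫ y in a..b, f' y = f b - f a :=
    integral_eq_sub_of_hasDeriv_right_of_le hab hcont
      (fun x hx => (hd x hx).hasDerivWithinAt) hint
  rw [← hFTC]
  have h1 : |∫ y in a..b, f' y| ≤ |∫ y in a..b, C * (b - y)| := by
    rw [← Real.norm_eq_abs]
    apply intervalIntegral.norm_integral_le_abs_of_norm_le
    · filter_upwards [MeasureTheory.ae_restrict_mem measurableSet_uIoc] with y hy
      rw [uIoc_of_le hab] at hy
      exact hbound y ⟨hy.1.le, hy.2⟩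
    · exact (continuous_const.mul (continuous_const.sub continuous_id)).intervalIntegrable a b
  have h2 : (∫ y in a..b, C * (b - y)) = C * (b - a)^2 / 2 := by
    rw [intervalIntegral.integral_const_mul,
      intervalIntegral.integral_sub (intervalIntegrable_const) intervalIntegrable_id,
      integral_id, integral_const]
    simp [smul_eq_mul]; ring
  rw [h2] at h1
  refine h1.trans (le_of_eq (abs_of_nonneg (by positivity)))

lemma taylorBnd (T β M : ℝ) (hT : 0 < T) (hβ0 : 0 < β) (hM0 : 0 ≤ M)
    (u u' u'' : ℝ → ℝ)
    (hderiv : ∀ t ∈ Set.Icc (0:ℝ) T, HasDerivWithinAt u (u' t) (Set.Icc 0 T) t)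
    (hderiv2 : ∀ t ∈ Set.Icc (0:ℝ) T, HasDerivWithinAt u' (u'' t) (Set.Icc 0 T) t)
    (hM : holderBnd T β M u'')
    (s t : ℝ) (hs : s ∈ Set.Icc (0:ℝ) T) (ht : t ∈ Set.Icc (0:ℝ) T) :
    |u t - (u s + u' s * (t - s) + u'' s / 2 * (t - s)^2)| ≤
      M / 2 * |t - s| ^ β * (t - s)^2 := by
  set C : ℝ := M * |t - s| ^ β with hC
  have hC0 : 0 ≤ C := by positivity
  have hsub : uIcc s t ⊆ Icc 0 T := by
    rw [← uIcc_of_le hT.le]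
    exact uIcc_subset_uIcc (by rw [uIcc_of_le hT.le]; exact hs) (by rw [uIcc_of_le hT.le]; exact ht)
  -- first-order estimate for u'
  have hA : ∀ x ∈ uIcc s t, |u' x - u' s - u'' s * (x - s)| ≤ C * |x - s| := by
    intro x hx
    have hg : ∀ y ∈ uIcc s t, HasDerivWithinAt (fun σ => u' σ - u'' s * σ)
        (u'' y - u'' s) (uIcc s t) y := by
      intro y hy
      have h2 : HasDerivWithinAt (fun σ : ℝ => u'' s * σ) (u'' s) (uIcc s t) y := by
        simpa using (hasDerivWithinAt_id y (uIcc s t)).const_mul (u'' s)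
      exact ((hderiv2 y (hsub hy)).mono hsub).sub h2
    have hb : ∀ y ∈ uIcc s t, ‖u'' y - u'' s‖ ≤ C := by
      intro y hy
      have h1 : |u'' y - u'' s| ≤ M * |y - s| ^ β := hM y (hsub hy) s (hsub left_mem_uIcc)
      refine h1.trans ?_
      have : |y - s| ^ β ≤ |t - s| ^ β :=
        Real.rpow_le_rpow (abs_nonneg _) (abs_sub_left_of_mem_uIcc hy) hβ0.le
      exact mul_le_mul_of_nonneg_left this hM0
    have := (convex_uIcc s t).norm_image_sub_le_of_norm_hasDerivWithin_le hg hb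
      left_mem_uIcc hx
    rw [Real.norm_eq_abs, Real.norm_eq_abs] at this
    calc |u' x - u' s - u'' s * (x - s)| = |(u' x - u'' s * x) - (u' s - u'' s * s)| := by
          ring_nf
      _ ≤ C * |x - s| := this
  -- second-order estimate
  have hucont : ContinuousOn u (Icc 0 T) := fun x hx => (hderiv x hx).continuousWithinAt
  have hu'cont : ContinuousOn u' (Icc 0 T) := fun x hx => (hderiv2 x hx).continuousWithinAt
  set h : ℝ → ℝ := fun σ => u σ - u' s * σ - u'' s / 2 * (σ - s)^2 with hh
  set h' : ℝ → ℝ := fun σ => u' σ - u' s - u'' s * (σ - s) with hh'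
  have hgoal : u t - (u s + u' s * (t - s) + u'' s / 2 * (t - s)^2) = h t - h s := by
    simp only [hh]; ring
  have hdh : ∀ x ∈ Ioo (min s t) (max s t), HasDerivAt h (h' x) x := by
    intro x hx
    have hx0 : 0 < x := lt_of_le_of_lt (le_min hs.1 ht.1) hx.1
    have hxT : x < T := lt_of_lt_of_le hx.2 (max_le hs.2 ht.2)
    have hmem : Icc (0:ℝ) T ∈ nhds x := Icc_mem_nhds hx0 hxT
    have hu : HasDerivAt u (u' x) x :=
      (hderiv x ⟨hx0.le, hxT.le⟩).hasDerivAt hmem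
    have hq : HasDerivAt (fun σ : ℝ => u'' s / 2 * (σ - s)^2)
        (u'' s / 2 * (2 * (x - s) ^ 1 * 1)) x :=
      (((hasDerivAt_id x).sub_const s).pow 2).const_mul (u'' s / 2)
    have := (hu.sub ((hasDerivAt_id x).const_mul (u' s))).sub hq
    refine this.congr_deriv ?_
    show _ = (u' x - u' s - u'' s * (x - s))
    push_cast
    ring
  have hhcont : ContinuousOn h (Icc (min s t) (max s t)) := by
    have h1 : Icc (min s t) (max s t) ⊆ Icc 0 T := by
      rw [← uIcc]; exact hsub
    exact ((hucont.mono h1).sub ((continuous_const.mul continuous_id).continuousOn)).sub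
      ((continuous_const.mul ((continuous_id.sub continuous_const).pow 2)).continuousOn)
  have hh'cont : ContinuousOn h' (Icc (min s t) (max s t)) := by
    have h1 : Icc (min s t) (max s t) ⊆ Icc 0 T := by
      rw [← uIcc]; exact hsub
    exact ((hu'cont.mono h1).sub continuousOn_const).sub
      ((continuous_const.mul (continuous_id.sub continuous_const)).continuousOn)
  rcases le_total s t with hst | hst
  · have hmin : min s t = s := min_eq_left hst
    have hmax : max s t = t := max_eq_right hst
    rw [hmin, hmax] at hdh hhcont hh'cont
    have hb : ∀ x ∈ Icc s t, |h' x| ≤ C * (x - s) := by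
      intro x hx
      calc |h' x| = |u' x - u' s - u'' s * (x - s)| := rfl
        _ ≤ C * |x - s| := hA x (by rw [uIcc_of_le hst]; exact hx)
        _ = C * (x - s) := by rw [abs_of_nonneg (by linarith [hx.1] : (0:ℝ) ≤ x - s)]
    have := key_incr h h' s t C hst hC0 hhcont hh'cont hdh hb
    rw [hgoal]
    calc |h t - h s| ≤ C * (t - s)^2 / 2 := this
      _ = M / 2 * |t - s| ^ β * (t - s)^2 := by rw [hC]; ring
  · have hmin : min s t = t := min_eq_right hst
    have hmax : max s t = s := max_eq_left hst
    rw [hmin, hmax] at hdh hhcont hh'cont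
    have hb : ∀ x ∈ Icc t s, |h' x| ≤ C * (s - x) := by
      intro x hx
      calc |h' x| = |u' x - u' s - u'' s * (x - s)| := rfl
        _ ≤ C * |x - s| := hA x (by rw [uIcc_comm, uIcc_of_le hst]; exact hx)
        _ = C * (s - x) := by
            rw [abs_of_nonpos (by linarith [hx.2] : x - s ≤ 0), neg_sub]
    have := key_decr h h' t s C hst hC0 hhcont hh'cont hdh hb
    rw [hgoal]
    have h2 : |h t - h s| = |h s - h t| := abs_sub_comm _ _
    rw [h2]
    calc |h s - h t| ≤ C * (s - t)^2 / 2 := this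
      _ = M / 2 * |t - s| ^ β * (t - s)^2 := by rw [hC]; ring

set_option maxHeartbeats 2000000 in
theorem stmt2 (T : ℝ) (hT : 0 < T) (β : ℝ) (hβ0 : 0 < β) (hβ1 : β ≤ 1)
    (u u' u'' : ℝ → ℝ)
    (hderiv : ∀ t ∈ Set.Icc (0:ℝ) T, HasDerivWithinAt u (u' t) (Set.Icc 0 T) t)
    (hderiv2 : ∀ t ∈ Set.Icc (0:ℝ) T, HasDerivWithinAt u' (u'' t) (Set.Icc 0 T) t)
    (hu'' : ContinuousOn u'' (Set.Icc 0 T))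
    (M : ℝ) (hM0 : 0 ≤ M) (hM : holderBnd T β M u'')
    (N : ℕ) (hN : 0 < N) (τ : ℝ) (hτ : τ = T / N)
    (j : ℕ) (hj : 1 ≤ j) (hjN : j + 1 ≤ N)
    (s : ℝ) (hs : s ∈ Set.Icc (((j:ℝ)-1)*τ) (((j:ℝ)+1)*τ)) :
    |u s - Pi2 τ u j s| ≤ (2 ^ (β + 1) + 2) * (((j:ℝ)+1)*τ - s) * τ ^ (β + 1) * M := by
  have hτ0 : 0 < τ := by
    rw [hτ]; exact div_pos hT (by exact_mod_cast hN)
  have hτne : τ ≠ 0 := hτ0.ne'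
  have hj1 : (1:ℝ) ≤ (j:ℝ) := by exact_mod_cast hj
  have hjN' : (j:ℝ) + 1 ≤ (N:ℝ) := by exact_mod_cast hjN
  have hNτ : (N:ℝ) * τ = T := by
    rw [hτ]; field_simp
  -- the three nodes and s are in [0,T]
  have ht1L : 0 ≤ ((j:ℝ)-1)*τ := mul_nonneg (by linarith) hτ0.le
  have ht3R : ((j:ℝ)+1)*τ ≤ T := by
    calc ((j:ℝ)+1)*τ ≤ (N:ℝ)*τ := by nlinarith
      _ = T := hNτ
  have ht1 : ((j:ℝ)-1)*τ ∈ Icc (0:ℝ) T := ⟨ht1L, by nlinarith⟩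
  have ht2 : (j:ℝ)*τ ∈ Icc (0:ℝ) T := ⟨by positivity, by nlinarith⟩
  have ht3 : ((j:ℝ)+1)*τ ∈ Icc (0:ℝ) T := ⟨by positivity, ht3R⟩
  have hsT : s ∈ Icc (0:ℝ) T := ⟨le_trans ht1L hs.1, le_trans hs.2 ht3R⟩
  -- abbreviations
  have ha : 0 ≤ s - ((j:ℝ)-1)*τ := by linarith [hs.1]
  have hb : 0 ≤ ((j:ℝ)+1)*τ - s := by linarith [hs.2]
  have ha2 : s - ((j:ℝ)-1)*τ ≤ 2*τ := by linarith [hs.2]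
  have hb2 : ((j:ℝ)+1)*τ - s ≤ 2*τ := by linarith [hs.1]
  have hcabs : |s - (j:ℝ)*τ| ≤ τ := by
    rw [abs_le]; constructor <;> [linarith [hs.1]; linarith [hs.2]]
  -- Taylor bounds at the three nodes
  have hB1 := taylorBnd T β M hT hβ0 hM0 u u' u'' hderiv hderiv2 hM s (((j:ℝ)-1)*τ) hsT ht1
  have hB2 := taylorBnd T β M hT hβ0 hM0 u u' u'' hderiv hderiv2 hM s ((j:ℝ)*τ) hsT ht2
  have hB3 := taylorBnd T β M hT hβ0 hM0 u u' u'' hderiv hderiv2 hM s (((j:ℝ)+1)*τ) hsT ht3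
  -- split identity
  have hsplit : u s - Pi2 τ u j s =
      -((s - (j:ℝ)*τ) * (((j:ℝ)+1)*τ - s) / (2*τ^2)) *
        ((u s + u' s * ((((j:ℝ)-1)*τ) - s) + u'' s / 2 * ((((j:ℝ)-1)*τ) - s)^2) - u (((j:ℝ)-1)*τ))
      + ((s - ((j:ℝ)-1)*τ) * (((j:ℝ)+1)*τ - s) / τ^2) *
        ((u s + u' s * (((j:ℝ)*τ) - s) + u'' s / 2 * (((j:ℝ)*τ) - s)^2) - u ((j:ℝ)*τ))
      + ((s - ((j:ℝ)-1)*τ) * (s - (j:ℝ)*τ) / (2*τ^2)) *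
        ((u s + u' s * ((((j:ℝ)+1)*τ) - s) + u'' s / 2 * ((((j:ℝ)+1)*τ) - s)^2) - u (((j:ℝ)+1)*τ)) := by
    simp only [Pi2]
    field_simp
    ring
  -- bounds on rpow pieces
  have hτb : (0:ℝ) < τ ^ β := Real.rpow_pos_of_pos hτ0 β
  have h2τβ : (2*τ) ^ β = 2 ^ β * τ ^ β := Real.mul_rpow (by norm_num) hτ0.le
  have hr1 : |(((j:ℝ)-1)*τ) - s| ^ β ≤ 2 ^ β * τ ^ β := by
    rw [← h2τβ]
    apply Real.rpow_le_rpow (abs_nonneg _) _ hβ0.le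
    rw [abs_le]; constructor <;> linarith
  have hr2 : |((j:ℝ)*τ) - s| ^ β ≤ τ ^ β := by
    apply Real.rpow_le_rpow (abs_nonneg _) _ hβ0.le
    rw [abs_sub_comm]; exact hcabs
  have hr3 : |(((j:ℝ)+1)*τ) - s| ^ β ≤ 2 ^ β * τ ^ β := by
    rw [← h2τβ]
    apply Real.rpow_le_rpow (abs_nonneg _) _ hβ0.le
    rw [abs_le]; constructor <;> linarith
  -- three term bounds
  have hterm1 : |-((s - (j:ℝ)*τ) * (((j:ℝ)+1)*τ - s) / (2*τ^2)) *
        ((u s + u' s * ((((j:ℝ)-1)*τ) - s) + u'' s / 2 * ((((j:ℝ)-1)*τ) - s)^2) - u (((j:ℝ)-1)*τ))|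
      ≤ 2 ^ β * (((j:ℝ)+1)*τ - s) * τ ^ (β+1) * M := by
    rw [abs_mul, abs_neg, abs_div, abs_mul]
    rw [abs_of_nonneg hb, abs_of_nonneg (by positivity : (0:ℝ) ≤ 2*τ^2)]
    calc |s - (j:ℝ)*τ| * (((j:ℝ)+1)*τ - s) / (2*τ^2) *
          |u s + u' s * ((((j:ℝ)-1)*τ) - s) + u'' s / 2 * ((((j:ℝ)-1)*τ) - s)^2 - u (((j:ℝ)-1)*τ)|
        ≤ τ * (((j:ℝ)+1)*τ - s) / (2*τ^2) * (M / 2 * (2 ^ β * τ ^ β) * (2*τ)^2) := by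
          apply mul_le_mul ?_ ?_ (abs_nonneg _) (by positivity)
          · gcongr
          · calc |u s + u' s * ((((j:ℝ)-1)*τ) - s) + u'' s / 2 * ((((j:ℝ)-1)*τ) - s)^2 - u (((j:ℝ)-1)*τ)|
                = |u (((j:ℝ)-1)*τ) - (u s + u' s * ((((j:ℝ)-1)*τ) - s) + u'' s / 2 * ((((j:ℝ)-1)*τ) - s)^2)| := abs_sub_comm _ _
              _ ≤ M / 2 * |(((j:ℝ)-1)*τ) - s| ^ β * ((((j:ℝ)-1)*τ) - s)^2 := hB1
              _ ≤ M / 2 * (2 ^ β * τ ^ β) * (2*τ)^2 := by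
                  have hsq : ((((j:ℝ)-1)*τ) - s)^2 ≤ (2*τ)^2 :=
                    sq_le_sq' (by linarith) (by linarith)
                  gcongr
      _ = 2 ^ β * (((j:ℝ)+1)*τ - s) * τ ^ (β+1) * M := by
          rw [Real.rpow_add_one hτne]
          field_simp
  have hterm2 : |((s - ((j:ℝ)-1)*τ) * (((j:ℝ)+1)*τ - s) / τ^2) *
        ((u s + u' s * (((j:ℝ)*τ) - s) + u'' s / 2 * (((j:ℝ)*τ) - s)^2) - u ((j:ℝ)*τ))|
      ≤ (((j:ℝ)+1)*τ - s) * τ ^ (β+1) * M := by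
    rw [abs_mul, abs_div, abs_mul]
    rw [abs_of_nonneg ha, abs_of_nonneg hb, abs_of_nonneg (by positivity : (0:ℝ) ≤ τ^2)]
    calc (s - ((j:ℝ)-1)*τ) * (((j:ℝ)+1)*τ - s) / τ^2 *
          |u s + u' s * (((j:ℝ)*τ) - s) + u'' s / 2 * (((j:ℝ)*τ) - s)^2 - u ((j:ℝ)*τ)|
        ≤ (2*τ) * (((j:ℝ)+1)*τ - s) / τ^2 * (M / 2 * τ ^ β * τ^2) := by
          apply mul_le_mul ?_ ?_ (abs_nonneg _) (by positivity)
          · gcongr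
          · calc |u s + u' s * (((j:ℝ)*τ) - s) + u'' s / 2 * (((j:ℝ)*τ) - s)^2 - u ((j:ℝ)*τ)|
                = |u ((j:ℝ)*τ) - (u s + u' s * (((j:ℝ)*τ) - s) + u'' s / 2 * (((j:ℝ)*τ) - s)^2)| := abs_sub_comm _ _
              _ ≤ M / 2 * |((j:ℝ)*τ) - s| ^ β * (((j:ℝ)*τ) - s)^2 := hB2
              _ ≤ M / 2 * τ ^ β * τ^2 := by
                  have hsq : (((j:ℝ)*τ) - s)^2 ≤ τ^2 :=
                    sq_le_sq' (by linarith [hs.2]) (by linarith [hs.1])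
                  gcongr
      _ = (((j:ℝ)+1)*τ - s) * τ ^ (β+1) * M := by
          rw [Real.rpow_add_one hτne]
          field_simp
  have hterm3 : |((s - ((j:ℝ)-1)*τ) * (s - (j:ℝ)*τ) / (2*τ^2)) *
        ((u s + u' s * ((((j:ℝ)+1)*τ) - s) + u'' s / 2 * ((((j:ℝ)+1)*τ) - s)^2) - u (((j:ℝ)+1)*τ))|
      ≤ 2 ^ β * (((j:ℝ)+1)*τ - s) * τ ^ (β+1) * M := by
    rw [abs_mul, abs_div, abs_mul]
    rw [abs_of_nonneg ha, abs_of_nonneg (by positivity : (0:ℝ) ≤ 2*τ^2)]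
    calc (s - ((j:ℝ)-1)*τ) * |s - (j:ℝ)*τ| / (2*τ^2) *
          |u s + u' s * ((((j:ℝ)+1)*τ) - s) + u'' s / 2 * ((((j:ℝ)+1)*τ) - s)^2 - u (((j:ℝ)+1)*τ)|
        ≤ (2*τ) * τ / (2*τ^2) * (M / 2 * (2 ^ β * τ ^ β) * ((2*τ) * (((j:ℝ)+1)*τ - s))) := by
          apply mul_le_mul ?_ ?_ (abs_nonneg _) (by positivity)
          · gcongr
          · calc |u s + u' s * ((((j:ℝ)+1)*τ) - s) + u'' s / 2 * ((((j:ℝ)+1)*τ) - s)^2 - u (((j:ℝ)+1)*τ)|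
                = |u (((j:ℝ)+1)*τ) - (u s + u' s * ((((j:ℝ)+1)*τ) - s) + u'' s / 2 * ((((j:ℝ)+1)*τ) - s)^2)| := abs_sub_comm _ _
              _ ≤ M / 2 * |(((j:ℝ)+1)*τ) - s| ^ β * ((((j:ℝ)+1)*τ) - s)^2 := hB3
              _ ≤ M / 2 * (2 ^ β * τ ^ β) * ((2*τ) * (((j:ℝ)+1)*τ - s)) := by
                  have hsq : ((((j:ℝ)+1)*τ) - s)^2 ≤ (2*τ) * (((j:ℝ)+1)*τ - s) := by nlinarith
                  gcongr
      _ = 2 ^ β * (((j:ℝ)+1)*τ - s) * τ ^ (β+1) * M := by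
          rw [Real.rpow_add_one hτne]
          field_simp
  -- assemble
  have htri : |u s - Pi2 τ u j s| ≤
      2 ^ β * (((j:ℝ)+1)*τ - s) * τ ^ (β+1) * M
      + (((j:ℝ)+1)*τ - s) * τ ^ (β+1) * M
      + 2 ^ β * (((j:ℝ)+1)*τ - s) * τ ^ (β+1) * M := by
    rw [hsplit]
    refine (abs_add_le _ _).trans ?_
    have h12 := abs_add_le
      (-((s - (j:ℝ)*τ) * (((j:ℝ)+1)*τ - s) / (2*τ^2)) *
        ((u s + u' s * ((((j:ℝ)-1)*τ) - s) + u'' s / 2 * ((((j:ℝ)-1)*τ) - s)^2) - u (((j:ℝ)-1)*τ)))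
      (((s - ((j:ℝ)-1)*τ) * (((j:ℝ)+1)*τ - s) / τ^2) *
        ((u s + u' s * (((j:ℝ)*τ) - s) + u'' s / 2 * (((j:ℝ)*τ) - s)^2) - u ((j:ℝ)*τ)))
    linarith
  refine htri.trans ?_
  have h2b : (2:ℝ)^(β+1) = 2^β*2 := Real.rpow_add_one two_ne_zero β
  have hpos : 0 ≤ (((j:ℝ)+1)*τ - s) * τ^(β+1) * M := by positivity
  calc 2 ^ β * (((j:ℝ)+1)*τ - s) * τ ^ (β+1) * M
      + (((j:ℝ)+1)*τ - s) * τ ^ (β+1) * M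
      + 2 ^ β * (((j:ℝ)+1)*τ - s) * τ ^ (β+1) * M
      = (2^β*2+1) * ((((j:ℝ)+1)*τ - s) * τ^(β+1) * M) := by ring
    _ ≤ (2^β*2+2) * ((((j:ℝ)+1)*τ - s) * τ^(β+1) * M) := by
        apply mul_le_mul_of_nonneg_right (by linarith) hpos
    _ = (2 ^ (β + 1) + 2) * (((j:ℝ)+1)*τ - s) * τ ^ (β + 1) * M := by
        rw [h2b]; ring
end

section
/- Let T > 0, let 0 < α < β ≤ 1, and let u ∈ C^{0,β}([0,T]). Fix N ∈ ℕ, τ = T/N, t_j = jτ, and let n be an integer with 2 ≤ n ≤ N. Then the far-field part of the L2 truncation error integral satisfies Σ_{j=1}^{n−1} ∫_{t_{j−1}}^{t_j} |Π_{2,j}u(s) − u(s)| / (t_n − s)^{1+α} ds ≤ ((2^{β+1} + 4)(1 − n^{−α}) / α) · [u]_{C^{0,β}[0,T]} · τ^{β−α}. -/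
set_option maxHeartbeats 1000000

open Set MeasureTheory

lemma intpow (α : ℝ) (hα : 0 < α) (a b c : ℝ) (hab : a ≤ b) (hbc : b < c) :
    ∫ s in a..b, (c - s) ^ (-(1+α)) = ((c - b) ^ (-α) - (c - a) ^ (-α)) / α := by
  have key : ∀ s ∈ Set.uIcc a b, HasDerivAt (fun t => (c - t) ^ (-α) / α) ((c - s) ^ (-(1+α))) s := by
    intro s hs
    rw [Set.uIcc_of_le hab] at hs
    have hcs : 0 < c - s := by linarith [hs.2]
    have h1 : HasDerivAt (fun t : ℝ => c - t) (-1) s := by simpa using (hasDerivAt_id' s).const_sub c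
    have h2 : HasDerivAt (fun x : ℝ => x ^ (-α)) (-α * (c - s) ^ (-α - 1)) (c - s) :=
      Real.hasDerivAt_rpow_const (Or.inl hcs.ne')
    have h4 : HasDerivAt (fun t => (c - t) ^ (-α) / α) (-α * (c - s) ^ (-α - 1) * -1 / α) s := (h2.comp s h1).div_const α
    convert h4 using 1
    rw [show -(1+α) = -α - 1 by ring]
    field_simp
  have hint : IntervalIntegrable (fun s => (c - s) ^ (-(1+α))) volume a b := by
    apply ContinuousOn.intervalIntegrable
    apply ContinuousOn.rpow_const
    · exact (continuousOn_const.sub continuousOn_id)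
    · intro x hx
      rw [Set.uIcc_of_le hab] at hx
      left; have : 0 < c - x := by linarith [hx.2]
      exact this.ne'
  rw [intervalIntegral.integral_eq_sub_of_hasDerivAt key hint]
  ring

lemma ptwise (T β M : ℝ) (u : ℝ → ℝ) (hβ0 : 0 < β) (hβ1 : β ≤ 1)
    (hM0 : 0 ≤ M) (hM : holderBnd T β M u) (τ : ℝ) (hτ0 : 0 < τ)
    (j : ℕ) (hj : 1 ≤ j) (hjT : ((j:ℝ)+1)*τ ≤ T)
    (s : ℝ) (hs : s ∈ Set.Icc (((j:ℝ)-1)*τ) ((j:ℝ)*τ)) :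
    |Pi2 τ u j s - u s| ≤ 4 * M * τ ^ β := by
  have hj1 : (1:ℝ) ≤ (j:ℝ) := by exact_mod_cast hj
  obtain ⟨hs1, hs2⟩ := hs
  have hτ2 : (0:ℝ) < τ^2 := by positivity
  -- membership in [0,T]
  have hmem : ∀ x : ℝ, ((j:ℝ)-1)*τ ≤ x → x ≤ ((j:ℝ)+1)*τ → x ∈ Set.Icc (0:ℝ) T := by
    intro x h1 h2
    constructor
    · nlinarith
    · linarith
  have hsmem : s ∈ Set.Icc (0:ℝ) T := hmem s hs1 (by nlinarith)
  have ha : (((j:ℝ)-1)*τ) ∈ Set.Icc (0:ℝ) T := hmem _ le_rfl (by nlinarith)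
  have hb : ((j:ℝ)*τ) ∈ Set.Icc (0:ℝ) T := hmem _ (by nlinarith) (by nlinarith)
  have hd : (((j:ℝ)+1)*τ) ∈ Set.Icc (0:ℝ) T := hmem _ (by nlinarith) le_rfl
  -- Hölder bounds
  have hrpow : ∀ x y : ℝ, |x - y| ≤ 2*τ → |u x - u y| ≤ M * |x-y|^β → |u x - u y| ≤ 2 * (M * τ ^ β) := by
    intro x y hxy hb
    refine hb.trans ?_
    have h2 : |x-y|^β ≤ (2*τ)^β := Real.rpow_le_rpow (abs_nonneg _) hxy (by linarith)
    have h3 : (2*τ)^β = 2^β * τ^β := Real.mul_rpow (by norm_num) hτ0.le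
    have h4 : (2:ℝ)^β ≤ 2 := by
      calc (2:ℝ)^β ≤ (2:ℝ)^(1:ℝ) := Real.rpow_le_rpow_of_exponent_le (by norm_num) hβ1
      _ = 2 := Real.rpow_one 2
    have h5 : (0:ℝ) ≤ τ^β := (Real.rpow_pos_of_pos hτ0 β).le
    calc M * |x-y|^β ≤ M * (2^β * τ^β) := by rw [← h3]; exact mul_le_mul_of_nonneg_left h2 hM0
      _ ≤ M * (2 * τ^β) := by nlinarith [mul_nonneg (mul_nonneg hM0 h5) (by linarith : (0:ℝ) ≤ 2 - 2^β)]
      _ = 2 * (M * τ^β) := by ring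
  have hrpow1 : ∀ x y : ℝ, x ∈ Set.Icc (0:ℝ) T → y ∈ Set.Icc (0:ℝ) T → |x - y| ≤ τ → |u x - u y| ≤ M * τ ^ β := by
    intro x y hx hy hxy
    refine (hM x hx y hy).trans ?_
    exact mul_le_mul_of_nonneg_left (Real.rpow_le_rpow (abs_nonneg _) hxy (by linarith)) hM0
  have hA : |u (((j:ℝ)-1)*τ) - u s| ≤ M * τ ^ β := by
    apply hrpow1 _ _ ha hsmem
    rw [abs_le]; constructor <;> nlinarith
  have hB : |u ((j:ℝ)*τ) - u s| ≤ M * τ ^ β := by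
    apply hrpow1 _ _ hb hsmem
    rw [abs_le]; constructor <;> nlinarith
  have hD : |u (((j:ℝ)+1)*τ) - u s| ≤ 2 * (M * τ ^ β) := by
    apply hrpow _ _ _ (hM _ hd _ hsmem)
    rw [abs_le]; constructor <;> nlinarith
  -- decomposition
  have key : Pi2 τ u j s - u s =
      (s - (j:ℝ)*τ) * (s - ((j:ℝ)+1)*τ) / (2*τ^2) * (u (((j:ℝ)-1)*τ) - u s)
      - (s - ((j:ℝ)-1)*τ) * (s - ((j:ℝ)+1)*τ) / τ^2 * (u ((j:ℝ)*τ) - u s)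
      + (s - ((j:ℝ)-1)*τ) * (s - (j:ℝ)*τ) / (2*τ^2) * (u (((j:ℝ)+1)*τ) - u s) := by
    unfold Pi2; field_simp; ring
  -- coefficient bounds
  have hc1 : |(s - (j:ℝ)*τ) * (s - ((j:ℝ)+1)*τ) / (2*τ^2)| ≤ 1 := by
    rw [abs_div, abs_mul, abs_of_pos (by positivity : (0:ℝ) < 2*τ^2), div_le_one (by positivity)]
    have e1 : |s - (j:ℝ)*τ| ≤ τ := by rw [abs_le]; constructor <;> nlinarith
    have e2 : |s - ((j:ℝ)+1)*τ| ≤ 2*τ := by rw [abs_le]; constructor <;> nlinarith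
    nlinarith [abs_nonneg (s - (j:ℝ)*τ), abs_nonneg (s - ((j:ℝ)+1)*τ)]
  have hc2 : |(s - ((j:ℝ)-1)*τ) * (s - ((j:ℝ)+1)*τ) / τ^2| ≤ 2 := by
    rw [abs_div, abs_mul, abs_of_pos hτ2, div_le_iff₀ hτ2]
    have e1 : |s - ((j:ℝ)-1)*τ| ≤ τ := by rw [abs_le]; constructor <;> nlinarith
    have e2 : |s - ((j:ℝ)+1)*τ| ≤ 2*τ := by rw [abs_le]; constructor <;> nlinarith
    nlinarith [abs_nonneg (s - ((j:ℝ)-1)*τ), abs_nonneg (s - ((j:ℝ)+1)*τ)]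
  have hc3 : |(s - ((j:ℝ)-1)*τ) * (s - (j:ℝ)*τ) / (2*τ^2)| ≤ 1/2 := by
    rw [abs_div, abs_mul, abs_of_pos (by positivity : (0:ℝ) < 2*τ^2), div_le_iff₀ (by positivity)]
    have e1 : |s - ((j:ℝ)-1)*τ| ≤ τ := by rw [abs_le]; constructor <;> nlinarith
    have e2 : |s - (j:ℝ)*τ| ≤ τ := by rw [abs_le]; constructor <;> nlinarith
    nlinarith [abs_nonneg (s - ((j:ℝ)-1)*τ), abs_nonneg (s - (j:ℝ)*τ)]
  rw [key]
  have hMτ : (0:ℝ) ≤ M * τ ^ β := by positivity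
  calc |_ - _ + _| ≤ |(s - (j:ℝ)*τ) * (s - ((j:ℝ)+1)*τ) / (2*τ^2) * (u (((j:ℝ)-1)*τ) - u s)|
        + |(s - ((j:ℝ)-1)*τ) * (s - ((j:ℝ)+1)*τ) / τ^2 * (u ((j:ℝ)*τ) - u s)|
        + |(s - ((j:ℝ)-1)*τ) * (s - (j:ℝ)*τ) / (2*τ^2) * (u (((j:ℝ)+1)*τ) - u s)| := by
        refine (abs_add_le _ _).trans ?_
        gcongr
        exact abs_sub _ _
    _ ≤ 1 * (M * τ ^ β) + 2 * (M * τ ^ β) + (1/2) * (2 * (M * τ ^ β)) := by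
        gcongr ?_ + ?_ + ?_
        · rw [abs_mul]
          exact mul_le_mul hc1 hA (abs_nonneg _) one_pos.le
        · rw [abs_mul]
          exact mul_le_mul hc2 hB (abs_nonneg _) (by norm_num)
        · rw [abs_mul]
          exact mul_le_mul hc3 hD (abs_nonneg _) (by norm_num)
    _ = 4 * M * τ ^ β := by ring

lemma term_bnd (T : ℝ) (α β M : ℝ) (hα : 0 < α) (hβ0 : 0 < β) (hβ1 : β ≤ 1)
    (u : ℝ → ℝ) (hu : ContinuousOn u (Set.Icc 0 T))
    (hM0 : 0 ≤ M) (hM : holderBnd T β M u) (τ : ℝ) (hτ0 : 0 < τ)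
    (n j : ℕ) (hj : 1 ≤ j) (hjn : (j:ℝ) + 1 ≤ (n:ℝ)) (hnT : (n:ℝ)*τ ≤ T) :
    (∫ s in (((j:ℝ)-1)*τ)..((j:ℝ)*τ), |Pi2 τ u j s - u s| / ((n:ℝ)*τ - s) ^ (1+α))
      ≤ 4*M*τ^β/α * ((((n:ℝ)-(j:ℝ))*τ)^(-α) - (((n:ℝ)-(j:ℝ)+1)*τ)^(-α)) := by
  have hj1 : (1:ℝ) ≤ (j:ℝ) := by exact_mod_cast hj
  set a : ℝ := ((j:ℝ)-1)*τ with ha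
  set b : ℝ := (j:ℝ)*τ with hb
  set c : ℝ := (n:ℝ)*τ with hc
  have hab : a ≤ b := by rw [ha, hb]; nlinarith
  have hbc : b < c := by rw [hb, hc]; nlinarith
  have hjT : ((j:ℝ)+1)*τ ≤ T := by nlinarith
  have hsubT : Set.Icc a b ⊆ Set.Icc (0:ℝ) T := by
    intro x hx
    obtain ⟨h1, h2⟩ := hx
    constructor
    · rw [ha] at h1; nlinarith
    · rw [hb] at h2; nlinarith
  have hPicont : Continuous (Pi2 τ u j) := by
    unfold Pi2; fun_prop
  have hcs : ∀ s ∈ Set.Icc a b, 0 < c - s := by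
    intro s hs; have := hs.2; linarith
  have hcont : ContinuousOn (fun s => |Pi2 τ u j s - u s| / (c - s) ^ (1+α)) (Set.Icc a b) := by
    apply ContinuousOn.div
    · exact ((hPicont.continuousOn.sub (hu.mono hsubT))).abs
    · apply ContinuousOn.rpow_const
      · exact continuousOn_const.sub continuousOn_id
      · intro x hx; left; exact (hcs x hx).ne'
    · intro x hx
      exact (Real.rpow_pos_of_pos (hcs x hx) _).ne'
  have hint1 : IntervalIntegrable (fun s => |Pi2 τ u j s - u s| / (c - s) ^ (1+α)) volume a b := by
    apply ContinuousOn.intervalIntegrable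
    rwa [Set.uIcc_of_le hab]
  have hint2 : IntervalIntegrable (fun s => 4*M*τ^β * (c - s) ^ (-(1+α))) volume a b := by
    apply ContinuousOn.intervalIntegrable
    rw [Set.uIcc_of_le hab]
    apply ContinuousOn.mul continuousOn_const
    apply ContinuousOn.rpow_const
    · exact continuousOn_const.sub continuousOn_id
    · intro x hx; left; exact (hcs x hx).ne'
  have hptall : ∀ s ∈ Set.Icc a b,
      |Pi2 τ u j s - u s| / (c - s) ^ (1+α) ≤ 4*M*τ^β * (c - s) ^ (-(1+α)) := by
    intro s hs
    have h1 : 0 < c - s := hcs s hs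
    have hpt : |Pi2 τ u j s - u s| ≤ 4 * M * τ ^ β :=
      ptwise T β M u hβ0 hβ1 hM0 hM τ hτ0 j hj hjT s hs
    calc |Pi2 τ u j s - u s| / (c - s) ^ (1+α)
        ≤ (4*M*τ^β) / (c - s) ^ (1+α) :=
          (div_le_div_iff_of_pos_right (Real.rpow_pos_of_pos h1 _)).mpr hpt
      _ = 4*M*τ^β * (c - s) ^ (-(1+α)) := by
          rw [Real.rpow_neg h1.le]; ring
  have hmono := intervalIntegral.integral_mono_on hab hint1 hint2 hptall
  refine hmono.trans ?_
  rw [intervalIntegral.integral_const_mul, intpow α hα a b c hab hbc]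
  have e1 : c - b = ((n:ℝ)-(j:ℝ))*τ := by rw [hb, hc]; ring
  have e2 : c - a = ((n:ℝ)-(j:ℝ)+1)*τ := by rw [ha, hc]; ring
  rw [e1, e2]
  ring_nf
  exact le_refl _

theorem stmt4 (T : ℝ) (hT : 0 < T) (α β : ℝ) (hα : 0 < α) (hαβ : α < β) (hβ1 : β ≤ 1)
    (u : ℝ → ℝ) (hu : ContinuousOn u (Set.Icc 0 T))
    (M : ℝ) (hM0 : 0 ≤ M) (hM : holderBnd T β M u)
    (N : ℕ) (hN : 0 < N) (τ : ℝ) (hτ : τ = T / N)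
    (n : ℕ) (hn : 2 ≤ n) (hnN : n ≤ N) :
    ∑ j ∈ Finset.Icc 1 (n-1),
        ∫ s in (((j:ℝ)-1)*τ)..((j:ℝ)*τ),
          |Pi2 τ u j s - u s| / ((n:ℝ)*τ - s) ^ (1+α) ≤
      (2 ^ (β + 1) + 4) * (1 - (n:ℝ) ^ (-α)) / α * M * τ ^ (β - α) := by
  have hτ0 : 0 < τ := by rw [hτ]; positivity
  have hβ0 : 0 < β := lt_trans hα hαβ
  have hnT : (n:ℝ)*τ ≤ T := by
    rw [hτ]
    have h1 : (n:ℝ) ≤ (N:ℝ) := by exact_mod_cast hnN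
    have h2 : (0:ℝ) < (N:ℝ) := by exact_mod_cast hN
    rw [div_eq_mul_inv]
    calc (n:ℝ) * (T * (N:ℝ)⁻¹) ≤ (N:ℝ) * (T * (N:ℝ)⁻¹) := by
          apply mul_le_mul_of_nonneg_right h1; positivity
      _ = T := by field_simp
  set G : ℕ → ℝ := fun i => 4*M*τ^β/α * (((n:ℝ)-(i:ℝ))*τ)^(-α) with hG
  have key : ∀ j ∈ Finset.Icc 1 (n-1),
      (∫ s in (((j:ℝ)-1)*τ)..((j:ℝ)*τ), |Pi2 τ u j s - u s| / ((n:ℝ)*τ - s) ^ (1+α))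
        ≤ G j - G (j-1) := by
    intro j hj
    rw [Finset.mem_Icc] at hj
    obtain ⟨hj1, hj2⟩ := hj
    have hjn : (j:ℝ) + 1 ≤ (n:ℝ) := by
      have : j + 1 ≤ n := by omega
      exact_mod_cast this
    have hb := term_bnd T α β M hα hβ0 hβ1 u hu hM0 hM τ hτ0 n j hj1 hjn hnT
    refine hb.trans (le_of_eq ?_)
    rw [hG]
    have hcast : ((j-1:ℕ):ℝ) = (j:ℝ) - 1 := by
      have h1 : (1:ℕ) ≤ j := hj1
      push_cast [h1]; ring
    simp only [hcast]
    ring_nf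
  have hsum := Finset.sum_le_sum key
  refine hsum.trans ?_
  have htel : ∑ j ∈ Finset.Icc 1 (n-1), (G j - G (j-1)) = G (n-1) - G 0 := by
    rw [show Finset.Icc 1 (n-1) = Finset.Ico 1 n from by
      rw [← Finset.Ico_add_one_right_eq_Icc]; congr 1; omega]
    rw [Finset.sum_Ico_eq_sum_range]
    have hr : n - 1 = n - 1 := rfl
    have hcg : ∀ i, G (1+i) - G ((1+i)-1) = G (i+1) - G i := by
      intro i
      rw [show (1+i)-1 = i from by omega, show 1+i = i+1 from by omega]
    rw [Finset.sum_congr rfl (fun i _ => hcg i)]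
    exact Finset.sum_range_sub G (n-1)
  rw [htel]
  have hn1 : ((n-1:ℕ):ℝ) = (n:ℝ) - 1 := by
    have h1 : (1:ℕ) ≤ n := by omega
    push_cast [h1]; ring
  have hGn : G (n-1) = 4*M*τ^β/α * τ^(-α) := by
    rw [hG]; simp only [hn1]
    norm_num
  have hG0 : G 0 = 4*M*τ^β/α * ((n:ℝ)^(-α) * τ^(-α)) := by
    rw [hG]
    simp only [Nat.cast_zero, sub_zero]
    rw [Real.mul_rpow (by positivity) hτ0.le]
  rw [hGn, hG0]
  have hτβα : τ^(β-α) = τ^β * τ^(-α) := by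
    rw [show β - α = β + (-α) from by ring, Real.rpow_add hτ0]
  have hnα : (n:ℝ)^(-α) ≤ 1 := by
    apply Real.rpow_le_one_of_one_le_of_nonpos
    · have h1 : (1:ℕ) ≤ n := by omega
      exact_mod_cast h1
    · linarith
  have h2β : (0:ℝ) ≤ 2^(β+1) := (Real.rpow_pos_of_pos two_pos _).le
  have hτα : (0:ℝ) < τ^(-α) := Real.rpow_pos_of_pos hτ0 _
  have hτβ : (0:ℝ) < τ^β := Real.rpow_pos_of_pos hτ0 _
  rw [hτβα]
  rw [show 4*M*τ^β/α * τ^(-α) - 4*M*τ^β/α * ((n:ℝ)^(-α) * τ^(-α))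
      = (4*M*τ^β*τ^(-α) - 4*M*τ^β*((n:ℝ)^(-α)*τ^(-α)))/α from by ring,
    show (2^(β+1)+4) * (1-(n:ℝ)^(-α))/α * M * (τ^β * τ^(-α))
      = ((2^(β+1)+4) * (1-(n:ℝ)^(-α)) * M * (τ^β * τ^(-α)))/α from by ring]
  apply (div_le_div_iff_of_pos_right hα).mpr
  nlinarith [mul_nonneg (mul_nonneg (mul_nonneg h2β hM0) hτβ.le) (mul_nonneg hτα.le (sub_nonneg.2 hnα)), mul_nonneg (mul_nonneg hM0 hτβ.le) hτα.le, mul_nonneg (mul_nonneg (mul_nonneg h2β hM0) hτβ.le) hτα.le]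
end

section
/- Let T > 0, let 0 < α < β ≤ 1, and let u ∈ C^{0,β}([0,T]). Fix N ∈ ℕ, τ = T/N, t_j = jτ, and let n be an integer with 2 ≤ n ≤ N. Then the last-subinterval part of the L2 truncation error integral satisfies ∫_{t_{n−1}}^{t_n} |Π_{2,n−1}u(s) − u(s)| / (t_n − s)^{1+α} ds ≤ ( (2^{β−1} + 2)/(1 − α) + 1/(β − α) ) · [u]_{C^{0,β}[0,T]} · τ^{β−α}. -/
open Set MeasureTheory

lemma aux_intable (b τ p : ℝ) (hp : -1 < p) :
    IntervalIntegrable (fun s => (b - s) ^ p) volume (b - τ) b := by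
  simpa using ((intervalIntegral.intervalIntegrable_rpow' (a := 0) (b := τ) hp).comp_sub_left b).symm

lemma aux_integral (b τ p : ℝ) (hp : -1 < p) :
    ∫ s in (b - τ)..b, (b - s) ^ p = τ ^ (p+1) / (p+1) := by
  rw [show (∫ s in (b-τ)..b, (b - s)^p) = ∫ x in (b-b)..(b-(b-τ)), x ^ p from
    intervalIntegral.integral_comp_sub_left (fun x => x ^ p) b,
    sub_self, sub_sub_cancel, integral_rpow (Or.inl hp), Real.zero_rpow (by linarith)]
  ring

set_option maxHeartbeats 1600000 in
theorem stmt5 (T : ℝ) (hT : 0 < T) (α β : ℝ) (hα : 0 < α) (hαβ : α < β) (hβ1 : β ≤ 1)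
    (u : ℝ → ℝ) (hu : ContinuousOn u (Set.Icc 0 T))
    (M : ℝ) (hM0 : 0 ≤ M) (hM : holderBnd T β M u)
    (N : ℕ) (hN : 0 < N) (τ : ℝ) (hτ : τ = T / N)
    (n : ℕ) (hn : 2 ≤ n) (hnN : n ≤ N) :
    ∫ s in (((n:ℝ)-1)*τ)..((n:ℝ)*τ),
        |Pi2 τ u (n-1) s - u s| / ((n:ℝ)*τ - s) ^ (1+α) ≤
      ((2 ^ (β - 1) + 2) / (1 - α) + 1 / (β - α)) * M * τ ^ (β - α) := by
  have hα1 : α < 1 := lt_of_lt_of_le hαβ hβ1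
  have hβ0 : 0 < β := lt_trans hα hαβ
  have hN0 : (0:ℝ) < N := by exact_mod_cast hN
  have hτ0 : 0 < τ := by rw [hτ]; positivity
  set a : ℝ := ((n:ℝ)-1)*τ with ha
  set b : ℝ := (n:ℝ)*τ with hb
  have hn2 : (2:ℝ) ≤ (n:ℝ) := by exact_mod_cast hn
  have hnNr : (n:ℝ) ≤ (N:ℝ) := by exact_mod_cast hnN
  have hba : a = b - τ := by rw [ha, hb]; ring
  have hab : a < b := by rw [hba]; linarith
  have hNT : (N:ℝ)*τ = T := by rw [hτ]; field_simp
  have ha0 : 0 ≤ a := by rw [ha]; exact mul_nonneg (by linarith) hτ0.le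
  have hbT : b ≤ T := by rw [hb, ← hNT]; exact mul_le_mul_of_nonneg_right hnNr hτ0.le
  have hcast : ((n-1:ℕ):ℝ) = (n:ℝ) - 1 := by
    have h1 : (1:ℕ) ≤ n := by omega
    push_cast [h1]; ring
  set B : ℝ := (2:ℝ) ^ (β-1) with hB
  set A : ℝ := τ ^ (β-1) with hA
  have hBpos : 0 < B := Real.rpow_pos_of_pos (by norm_num) _
  have hApos : 0 < A := Real.rpow_pos_of_pos hτ0 _
  have hτβ : τ ^ β = A * τ := by
    rw [hA, ← Real.rpow_add_one hτ0.ne' (β-1), sub_add_cancel]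
  have h2β : (2:ℝ)^β = B*2 := by
    rw [hB, ← Real.rpow_add_one (by norm_num : (2:ℝ) ≠ 0) (β-1), sub_add_cancel]
  have h2τβ : (2*τ) ^ β = 2*B*(A*τ) := by
    rw [Real.mul_rpow (by norm_num) hτ0.le, hτβ, h2β]
    ring
  clear_value a b B A
  -- pointwise bound
  have key : ∀ s ∈ Icc a b, |Pi2 τ u (n-1) s - u s| / (b - s) ^ (1+α) ≤
      M*(B+2)*A * (b-s)^(-α) + M * (b-s)^(β-α-1) := by
    intro s hs
    rcases eq_or_lt_of_le hs.2 with hsb | hsb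
    · rw [hsb, sub_self, Real.zero_rpow (by positivity : (1+α) ≠ 0), div_zero,
        Real.zero_rpow (by linarith : -α ≠ 0), Real.zero_rpow (by linarith : β-α-1 ≠ 0)]
      simp
    set d : ℝ := b - s with hdd
    clear_value d
    have hd0 : 0 < d := by rw [hdd]; exact sub_pos.mpr hsb
    have hdτ : d ≤ τ := by
      have h1 := hs.1; rw [hba] at h1; rw [hdd]; linarith
    have hs0 : 0 ≤ s := le_trans ha0 hs.1
    have hsT : s ≤ T := le_trans hs.2 hbT
    have ht0 : ((n:ℝ)-2)*τ = b - 2*τ := by rw [hb]; ring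
    have ht0mem : ((n:ℝ)-2)*τ ∈ Icc (0:ℝ) T := by
      constructor
      · exact mul_nonneg (by linarith) hτ0.le
      · rw [ht0]; linarith
    have hamem : a ∈ Icc (0:ℝ) T := ⟨ha0, le_trans hab.le hbT⟩
    have hbmem : b ∈ Icc (0:ℝ) T := ⟨le_trans ha0 hab.le, hbT⟩
    have hsmem : s ∈ Icc (0:ℝ) T := ⟨hs0, hsT⟩
    have hdβ : (0:ℝ) ≤ d ^ β := Real.rpow_nonneg hd0.le _
    -- Hölder bounds
    have h0 : |u (((n:ℝ)-2)*τ) - u s| ≤ M * (2*τ)^β := by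
      refine le_trans (hM _ ht0mem _ hsmem) ?_
      refine mul_le_mul_of_nonneg_left ?_ hM0
      refine Real.rpow_le_rpow (abs_nonneg _) ?_ hβ0.le
      have heq : ((n:ℝ)-2)*τ - s = d - 2*τ := by rw [ht0, hdd]; ring
      rw [abs_le, heq]; constructor <;> linarith
    have h1 : |u a - u s| ≤ M * τ^β := by
      refine le_trans (hM _ hamem _ hsmem) ?_
      refine mul_le_mul_of_nonneg_left ?_ hM0
      refine Real.rpow_le_rpow (abs_nonneg _) ?_ hβ0.le
      have heq : a - s = d - τ := by rw [hba, hdd]; ring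
      rw [abs_le, heq]; constructor <;> linarith
    have h2 : |u b - u s| ≤ M * d^β := by
      refine le_trans (hM _ hbmem _ hsmem) ?_
      refine mul_le_mul_of_nonneg_left (le_of_eq ?_) hM0
      rw [abs_of_nonneg (by linarith : (0:ℝ) ≤ b - s), hdd]
    -- expansion
    have expand : Pi2 τ u (n-1) s - u s =
        (τ - d)*(-d)/(2*τ^2) * (u (((n:ℝ)-2)*τ) - u s)
        - (2*τ - d)*(-d)/τ^2 * (u a - u s)
        + (2*τ - d)*(τ - d)/(2*τ^2) * (u b - u s) := by
      have e1 : (((n:ℝ)-1)-1)*τ = ((n:ℝ)-2)*τ := by ring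
      have e2 : (((n:ℝ)-1)+1)*τ = (n:ℝ)*τ := by ring
      have e3 : τ - d = s - ((n:ℝ)-1)*τ := by rw [hdd, hb]; ring
      have e4 : -d = s - (n:ℝ)*τ := by rw [hdd, hb]; ring
      have e5 : 2*τ - d = s - ((n:ℝ)-2)*τ := by rw [hdd, hb]; ring
      rw [ha, hb]
      simp only [Pi2, hcast]
      rw [e1, e2, e3, e4, e5]
      generalize u (((n:ℝ)-2)*τ) = U0
      generalize u (((n:ℝ)-1)*τ) = U1
      generalize u ((n:ℝ)*τ) = U2
      generalize u s = Us
      field_simp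
      ring
    have hnum : |Pi2 τ u (n-1) s - u s| ≤ M*(B+2)*A*d + M*d^β := by
      rw [expand]
      have habs : |(τ - d)*(-d)/(2*τ^2) * (u (((n:ℝ)-2)*τ) - u s)
          - (2*τ - d)*(-d)/τ^2 * (u a - u s)
          + (2*τ - d)*(τ - d)/(2*τ^2) * (u b - u s)|
          ≤ |(τ - d)*(-d)/(2*τ^2)| * |u (((n:ℝ)-2)*τ) - u s|
          + |(2*τ - d)*(-d)/τ^2| * |u a - u s|
          + |(2*τ - d)*(τ - d)/(2*τ^2)| * |u b - u s| := by
        calc _ ≤ |(τ - d)*(-d)/(2*τ^2) * (u (((n:ℝ)-2)*τ) - u s)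
              - (2*τ - d)*(-d)/τ^2 * (u a - u s)|
              + |(2*τ - d)*(τ - d)/(2*τ^2) * (u b - u s)| := abs_add_le _ _
          _ ≤ _ := by
              gcongr ?_ + ?_
              · refine le_trans (abs_sub _ _) ?_
                rw [abs_mul, abs_mul]
              · rw [abs_mul]
      refine le_trans habs ?_
      have c0 : |(τ - d)*(-d)/(2*τ^2)| = (τ - d)*d/(2*τ^2) := by
        rw [abs_div, abs_mul, abs_neg, abs_of_nonneg (by linarith : (0:ℝ) ≤ τ - d),
          abs_of_nonneg hd0.le, abs_of_nonneg (by positivity : (0:ℝ) ≤ 2*τ^2)]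
      have c1 : |(2*τ - d)*(-d)/τ^2| = (2*τ - d)*d/τ^2 := by
        rw [abs_div, abs_mul, abs_neg, abs_of_nonneg (by linarith : (0:ℝ) ≤ 2*τ - d),
          abs_of_nonneg hd0.le, abs_of_nonneg (by positivity : (0:ℝ) ≤ τ^2)]
      have c2 : |(2*τ - d)*(τ - d)/(2*τ^2)| = (2*τ - d)*(τ - d)/(2*τ^2) := by
        rw [abs_of_nonneg]
        exact div_nonneg (mul_nonneg (by linarith) (by linarith)) (by positivity)
      rw [c0, c1, c2]
      have t0le : (τ - d)*d/(2*τ^2) * |u (((n:ℝ)-2)*τ) - u s| ≤ M*B*A*d := by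
        have hc : 0 ≤ (τ - d)*d/(2*τ^2) :=
          div_nonneg (mul_nonneg (by linarith) hd0.le) (by positivity)
        calc (τ - d)*d/(2*τ^2) * |u (((n:ℝ)-2)*τ) - u s|
            ≤ (τ - d)*d/(2*τ^2) * (M*(2*τ)^β) := mul_le_mul_of_nonneg_left h0 hc
          _ ≤ M*B*A*d := by
              rw [h2τβ, div_mul_eq_mul_div, div_le_iff₀ (by positivity)]
              have hMBA : 0 ≤ M*B*A := mul_nonneg (mul_nonneg hM0 hBpos.le) hApos.le
              have hdiff : M*B*A*d*(2*τ^2) - (τ - d)*d*(M*(2*B*(A*τ)))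
                  = 2*(M*B*A)*(d*d*τ) := by ring
              have hnn : 0 ≤ 2*(M*B*A)*(d*d*τ) :=
                mul_nonneg (by linarith) (by positivity)
              linarith
      have t1le : (2*τ - d)*d/τ^2 * |u a - u s| ≤ M*2*A*d := by
        have hc : 0 ≤ (2*τ - d)*d/τ^2 :=
          div_nonneg (mul_nonneg (by linarith) hd0.le) (by positivity)
        calc (2*τ - d)*d/τ^2 * |u a - u s|
            ≤ (2*τ - d)*d/τ^2 * (M*τ^β) := mul_le_mul_of_nonneg_left h1 hc
          _ ≤ M*2*A*d := by
              rw [hτβ, div_mul_eq_mul_div, div_le_iff₀ (by positivity)]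
              have hMA : 0 ≤ M*A := mul_nonneg hM0 hApos.le
              have hdiff : M*2*A*d*τ^2 - (2*τ - d)*d*(M*(A*τ)) = (M*A)*(d*d*τ) := by ring
              have hnn : 0 ≤ (M*A)*(d*d*τ) := mul_nonneg hMA (by positivity)
              linarith
      have t2le : (2*τ - d)*(τ - d)/(2*τ^2) * |u b - u s| ≤ M*d^β := by
        have hc1 : (2*τ - d)*(τ - d)/(2*τ^2) ≤ 1 := by
          rw [div_le_one (by positivity)]
          have hdiff : 2*τ^2 - (2*τ - d)*(τ - d) = d*(3*τ - d) := by ring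
          have hnn : 0 ≤ d*(3*τ - d) := mul_nonneg hd0.le (by linarith)
          linarith
        have hc : 0 ≤ (2*τ - d)*(τ - d)/(2*τ^2) :=
          div_nonneg (mul_nonneg (by linarith) (by linarith)) (by positivity)
        calc (2*τ - d)*(τ - d)/(2*τ^2) * |u b - u s|
            ≤ 1 * (M*d^β) := mul_le_mul hc1 h2 (abs_nonneg _) zero_le_one
          _ = M*d^β := one_mul _
      calc _ ≤ M*B*A*d + M*2*A*d + M*d^β := add_le_add (add_le_add t0le t1le) t2le
        _ = M*(B+2)*A*d + M*d^β := by ring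
    -- division step
    have e1 : d ^ (-α) = d / d^(1+α) := by
      rw [show -α = 1 - (1+α) by ring, Real.rpow_sub hd0, Real.rpow_one]
    have e2 : d ^ (β-α-1) = d^β / d^(1+α) := by
      rw [show β-α-1 = β - (1+α) by ring, Real.rpow_sub hd0]
    calc |Pi2 τ u (n-1) s - u s| / d ^ (1+α)
        ≤ (M*(B+2)*A*d + M*d^β) / d ^ (1+α) := by gcongr
      _ = M*(B+2)*A * d^(-α) + M * d^(β-α-1) := by rw [e1, e2]; ring
  -- integrability
  have hgi1 : IntervalIntegrable (fun s => (b-s)^(-α)) volume a b := by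
    rw [hba]; exact aux_intable b τ _ (by linarith)
  have hgi2 : IntervalIntegrable (fun s => (b-s)^(β-α-1)) volume a b := by
    rw [hba]; exact aux_intable b τ _ (by linarith)
  have hg_int : IntervalIntegrable
      (fun s => M*(B+2)*A * (b-s)^(-α) + M * (b-s)^(β-α-1)) volume a b :=
    (hgi1.const_mul _).add (hgi2.const_mul _)
  have hf_int : IntervalIntegrable
      (fun s => |Pi2 τ u (n-1) s - u s| / (b - s)^(1+α)) volume a b := by
    apply hg_int.mono_fun
    · rw [uIoc_of_le hab.le, ← Measure.restrict_congr_set Ioo_ae_eq_Ioc]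
      apply ContinuousOn.aestronglyMeasurable ?_ measurableSet_Ioo
      apply ContinuousOn.div
      · apply ContinuousOn.abs
        apply ContinuousOn.sub
        · apply Continuous.continuousOn
          unfold Pi2; fun_prop
        · exact hu.mono (fun x hx => ⟨le_trans ha0 hx.1.le, le_trans hx.2.le hbT⟩)
      · exact ((continuous_const.sub continuous_id).rpow_const
          (fun x => Or.inr (by linarith))).continuousOn
      · intro x hx
        exact (Real.rpow_pos_of_pos (by simpa using sub_pos.mpr hx.2) _).ne'
    · filter_upwards [ae_restrict_mem measurableSet_uIoc] with x hx
      rw [uIoc_of_le hab.le] at hx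
      have hx' : x ∈ Icc a b := ⟨hx.1.le, hx.2⟩
      have hbx : 0 ≤ b - x := by linarith [hx.2]
      rw [Real.norm_eq_abs, Real.norm_eq_abs,
        abs_of_nonneg (div_nonneg (abs_nonneg _) (Real.rpow_nonneg hbx _))]
      exact le_trans (key x hx') (le_abs_self _)
  -- final computation
  have hAτ : A * τ^(1-α) = τ^(β-α) := by
    rw [hA, ← Real.rpow_add hτ0]; ring_nf
  calc ∫ s in a..b, |Pi2 τ u (n-1) s - u s| / (b - s)^(1+α)
      ≤ ∫ s in a..b, (M*(B+2)*A * (b-s)^(-α) + M * (b-s)^(β-α-1)) :=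
        intervalIntegral.integral_mono_on hab.le hf_int hg_int key
    _ = M*(B+2)*A * (τ^(1-α)/(1-α)) + M * (τ^(β-α)/(β-α)) := by
        rw [intervalIntegral.integral_add (hgi1.const_mul _) (hgi2.const_mul _),
          intervalIntegral.integral_const_mul, intervalIntegral.integral_const_mul]
        rw [hba, aux_integral b τ _ (by linarith), aux_integral b τ _ (by linarith),
          show -α+1 = 1-α by ring, show β-α-1+1 = β-α by ring]
    _ = ((B + 2) / (1 - α) + 1 / (β - α)) * M * τ ^ (β - α) := by
        rw [show M*(B+2)*A * (τ^(1-α)/(1-α)) + M * (τ^(β-α)/(β-α))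
            = M*(B+2)*(A * τ^(1-α))/(1-α) + M * (τ^(β-α)/(β-α)) by ring, hAτ]
        ring
end

section
/- Let T > 0, 0 < α < 1, 0 < β ≤ 1, and let u ∈ C^{1,β}([0,T]). Fix N ∈ ℕ, τ = T/N, t_j = jτ, and let n be an integer with 2 ≤ n ≤ N. Then the L2 scheme satisfies |D_t^α u(t_n) − δ_τ^α u(t_n)| ≤ (α/Γ(1−α)) · ( 4(1 − n^{−α})/α + 2/(1−α) ) · [u']_{C^{0,β}[0,T]} · τ^{1+β−α}. -/
set_option maxHeartbeats 1000000


open Set MeasureTheory intervalIntegral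

/-- The Caputo fractional derivative of order `α` in integrated form:
`D_t^α u(t) = (1/Γ(1-α)) (u(t)-u(0))/t^α + (α/Γ(1-α)) ∫_0^t (u(t)-u(s))/(t-s)^{α+1} ds`. -/
noncomputable def caputo (α : ℝ) (u : ℝ → ℝ) (t : ℝ) : ℝ :=
  (1 / Real.Gamma (1 - α)) * (u t - u 0) / t ^ α
    + (α / Real.Gamma (1 - α)) * ∫ s in (0:ℝ)..t, (u t - u s) / (t - s) ^ (α + 1)

/-- The piecewise interpolant `P^n u` of the L2 scheme: it equals `Π_{2,j} u` on
`(t_{j-1}, t_j)` for `1 ≤ j ≤ n-1` and `Π_{2,n-1} u` on `(t_{n-1}, t_n)`.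
(For `s ∈ (t_{j-1}, t_j)` one has `⌈s/τ⌉ = j`.) -/
noncomputable def L2interp (τ : ℝ) (u : ℝ → ℝ) (n : ℕ) (s : ℝ) : ℝ :=
  if ((n:ℝ)-1)*τ < s then Pi2 τ u (n-1) s else Pi2 τ u ⌈s/τ⌉₊ s

/-- The L2 approximation `δ_τ^α u(t_n) = D_t^α (P^n u)(t_n)` of the Caputo derivative. -/
noncomputable def L2approx (α τ : ℝ) (u : ℝ → ℝ) (n : ℕ) : ℝ :=
  caputo α (L2interp τ u n) ((n:ℝ)*τ)

lemma avg_diff (φ : ℝ → ℝ) (p q r w K : ℝ) (hpq : p ≤ q) (hrw : r ≤ w) (hK : 0 ≤ K)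
    (hint1 : IntervalIntegrable φ volume p q) (hint2 : IntervalIntegrable φ volume r w)
    (hb : ∀ x ∈ Set.Icc p q, ∀ y ∈ Set.Icc r w, |φ x - φ y| ≤ K) :
    |(w - r) * (∫ x in p..q, φ x) - (q - p) * ∫ y in r..w, φ y| ≤ K * (q - p) * (w - r) := by
  have key : (w - r) * (∫ x in p..q, φ x) - (q - p) * (∫ y in r..w, φ y)
      = ∫ x in p..q, ((w - r) * φ x - ∫ y in r..w, φ y) := by
    rw [intervalIntegral.integral_sub (hint1.const_mul _) intervalIntegrable_const]
    rw [intervalIntegral.integral_const, smul_eq_mul, intervalIntegral.integral_const_mul]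
  rw [key]
  have h1 : ∀ x ∈ Set.uIoc p q, ‖(w - r) * φ x - ∫ y in r..w, φ y‖ ≤ K * (w - r) := by
    intro x hx
    have hx' : x ∈ Set.Icc p q := by
      rw [Set.uIoc_of_le hpq] at hx; exact ⟨hx.1.le, hx.2⟩
    have e : (w - r) * φ x - (∫ y in r..w, φ y) = ∫ y in r..w, (φ x - φ y) := by
      rw [intervalIntegral.integral_sub intervalIntegrable_const hint2,
        intervalIntegral.integral_const, smul_eq_mul]
    rw [e]
    have h2 : ∀ y ∈ Set.uIoc r w, ‖φ x - φ y‖ ≤ K := by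
      intro y hy
      have hy' : y ∈ Set.Icc r w := by
        rw [Set.uIoc_of_le hrw] at hy; exact ⟨hy.1.le, hy.2⟩
      simpa [Real.norm_eq_abs] using hb x hx' y hy'
    calc ‖∫ y in r..w, (φ x - φ y)‖ ≤ K * |w - r| :=
          intervalIntegral.norm_integral_le_of_norm_le_const h2
      _ = K * (w - r) := by rw [abs_of_nonneg (by linarith)]
  calc ‖∫ x in p..q, ((w - r) * φ x - ∫ y in r..w, φ y)‖ ≤ (K * (w - r)) * |q - p| :=
        intervalIntegral.norm_integral_le_of_norm_le_const h1
    _ = K * (q - p) * (w - r) := by rw [abs_of_nonneg (by linarith)]; ring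

lemma ftc (T : ℝ) (u u' : ℝ → ℝ)
    (hderiv : ∀ t ∈ Set.Icc (0:ℝ) T, HasDerivWithinAt u (u' t) (Set.Icc 0 T) t)
    (hu' : ContinuousOn u' (Set.Icc 0 T))
    {x y : ℝ} (hx : 0 ≤ x) (hxy : x ≤ y) (hy : y ≤ T) :
    ∫ r in x..y, u' r = u y - u x := by
  have hcont : ContinuousOn u (Set.Icc 0 T) := fun z hz => (hderiv z hz).continuousWithinAt
  have hT0 : (0:ℝ) ≤ T := le_trans hx (le_trans hxy hy)
  refine intervalIntegral.integral_eq_sub_of_hasDeriv_right_of_le hxy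
    (hcont.mono (Set.Icc_subset_Icc hx hy)) (fun z hz => ?_) ?_
  · exact ((hderiv z ⟨by linarith [hz.1], by linarith [hz.2]⟩).hasDerivAt
      (Icc_mem_nhds (by linarith [hz.1]) (by linarith [hz.2]))).hasDerivWithinAt
  · apply ContinuousOn.intervalIntegrable
    rw [Set.uIcc_of_le hxy]
    exact hu'.mono (Set.Icc_subset_Icc hx hy)

lemma errA (T β M : ℝ) (hβ0 : 0 < β) (hβ1 : β ≤ 1) (hM0 : 0 ≤ M)
    (u u' : ℝ → ℝ)
    (hderiv : ∀ t ∈ Set.Icc (0:ℝ) T, HasDerivWithinAt u (u' t) (Set.Icc 0 T) t)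
    (hu' : ContinuousOn u' (Set.Icc 0 T))
    (hM : holderBnd T β M u')
    (τ : ℝ) (hτ0 : 0 < τ) (j : ℕ) (hj : 1 ≤ j) (hcT : ((j:ℝ)+1)*τ ≤ T)
    (s : ℝ) (hs1 : ((j:ℝ)-1)*τ ≤ s) (hs2 : s ≤ (j:ℝ)*τ) :
    |Pi2 τ u j s - u s| ≤ 2 * M * τ ^ β * τ := by
  have hj' : (1:ℝ) ≤ (j:ℝ) := by exact_mod_cast hj
  have hT0 : 0 ≤ T := le_trans (by nlinarith) hcT
  have ha0 : (0:ℝ) ≤ ((j:ℝ)-1)*τ := by nlinarith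
  have hab : ((j:ℝ)-1)*τ ≤ (j:ℝ)*τ := by nlinarith
  have hbc : (j:ℝ)*τ ≤ ((j:ℝ)+1)*τ := by nlinarith
  have hbT : (j:ℝ)*τ ≤ T := by nlinarith
  have hτne : τ ≠ 0 := ne_of_gt hτ0
  have hint : ∀ x y : ℝ, 0 ≤ x → x ≤ y → y ≤ T → IntervalIntegrable u' volume x y := by
    intro x y hx hxy hy
    apply ContinuousOn.intervalIntegrable
    rw [Set.uIcc_of_le hxy]; exact hu'.mono (Set.Icc_subset_Icc hx hy)
  obtain ⟨I1, hI1d⟩ : ∃ x:ℝ, x = ∫ r in (((j:ℝ)-1)*τ)..((j:ℝ)*τ), u' r := ⟨_, rfl⟩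
  obtain ⟨I2, hI2d⟩ : ∃ x:ℝ, x = ∫ r in ((j:ℝ)*τ)..(((j:ℝ)+1)*τ), u' r := ⟨_, rfl⟩
  obtain ⟨I5, hI5d⟩ : ∃ x:ℝ, x = ∫ r in s..((j:ℝ)*τ), u' r := ⟨_, rfl⟩
  obtain ⟨I4, hI4d⟩ : ∃ x:ℝ, x = ∫ r in (((j:ℝ)-1)*τ)..s, u' r := ⟨_, rfl⟩
  have e1 : I1 = u ((j:ℝ)*τ) - u (((j:ℝ)-1)*τ) := hI1d.trans (ftc T u u' hderiv hu' ha0 hab hbT)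
  have e2 : I2 = u (((j:ℝ)+1)*τ) - u ((j:ℝ)*τ) := hI2d.trans (ftc T u u' hderiv hu' (le_trans ha0 hab) hbc hcT)
  have e5 : I5 = u ((j:ℝ)*τ) - u s := hI5d.trans (ftc T u u' hderiv hu' (le_trans ha0 hs1) hs2 hbT)
  have e4 : I4 = u s - u (((j:ℝ)-1)*τ) := hI4d.trans (ftc T u u' hderiv hu' ha0 hs1 (le_trans hs2 hbT))
  have hI4 : I4 = I1 - I5 := by rw [e1, e4, e5]; ring
  have eua : u (((j:ℝ)-1)*τ) = u ((j:ℝ)*τ) - I1 := by rw [e1]; ring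
  have euc : u (((j:ℝ)+1)*τ) = u ((j:ℝ)*τ) + I2 := by rw [e2]; ring
  have eus : u s = u ((j:ℝ)*τ) - I5 := by rw [e5]; ring
  have key : Pi2 τ u j s - u s =
      -((s-((j:ℝ)-1)*τ)*(((j:ℝ)*τ-s)*I2 - τ*I5))/(2*τ^2)
      + ((((j:ℝ)+1)*τ-s)*((s-((j:ℝ)-1)*τ)*I5 - ((j:ℝ)*τ-s)*(I1-I5)))/(2*τ^2) := by
    simp only [Pi2]
    rw [eua, euc, eus]
    field_simp
    ring
  have hbnd1 : ∀ x ∈ Set.Icc ((j:ℝ)*τ) (((j:ℝ)+1)*τ), ∀ y ∈ Set.Icc s ((j:ℝ)*τ),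
      |u' x - u' y| ≤ M*(2*τ)^β := by
    intro x hx y hy
    have hx0T : x ∈ Set.Icc (0:ℝ) T := ⟨by nlinarith [hx.1], le_trans hx.2 hcT⟩
    have hy0T : y ∈ Set.Icc (0:ℝ) T := ⟨by nlinarith [hy.1], by nlinarith [hy.2]⟩
    have h2 : |x - y| ≤ 2*τ := by
      rw [abs_of_nonneg (by nlinarith [hx.1, hy.2])]
      nlinarith [hx.2, hy.1]
    calc |u' x - u' y| ≤ M * |x-y|^β := hM x hx0T y hy0T
      _ ≤ M * (2*τ)^β :=
        mul_le_mul_of_nonneg_left (Real.rpow_le_rpow (abs_nonneg _) h2 hβ0.le) hM0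
  have hbnd2 : ∀ x ∈ Set.Icc s ((j:ℝ)*τ), ∀ y ∈ Set.Icc (((j:ℝ)-1)*τ) s,
      |u' x - u' y| ≤ M*τ^β := by
    intro x hx y hy
    have hx0T : x ∈ Set.Icc (0:ℝ) T := ⟨by nlinarith [hx.1], by nlinarith [hx.2]⟩
    have hy0T : y ∈ Set.Icc (0:ℝ) T := ⟨by nlinarith [hy.1], by nlinarith [hy.2]⟩
    have h2 : |x - y| ≤ τ := by
      rw [abs_of_nonneg (by nlinarith [hx.1, hy.2])]
      nlinarith [hx.2, hy.1]
    calc |u' x - u' y| ≤ M * |x-y|^β := hM x hx0T y hy0T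
      _ ≤ M * τ^β :=
        mul_le_mul_of_nonneg_left (Real.rpow_le_rpow (abs_nonneg _) h2 hβ0.le) hM0
  have hB1 := avg_diff u' ((j:ℝ)*τ) (((j:ℝ)+1)*τ) s ((j:ℝ)*τ) (M*(2*τ)^β) hbc hs2
    (by positivity) (hint _ _ (le_trans ha0 hab) hbc hcT) (hint _ _ (le_trans ha0 hs1) hs2 hbT)
    hbnd1
  have hB2 := avg_diff u' s ((j:ℝ)*τ) (((j:ℝ)-1)*τ) s (M*τ^β) hs2 hs1
    (by positivity) (hint _ _ (le_trans ha0 hs1) hs2 hbT) (hint _ _ ha0 hs1 (le_trans hs2 hbT))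
    hbnd2
  rw [← hI2d, ← hI5d] at hB1
  rw [← hI5d, ← hI4d, hI4] at hB2
  have hcbτ : ((j:ℝ)+1)*τ - (j:ℝ)*τ = τ := by ring
  rw [hcbτ] at hB1
  have h2b : M*(2*τ)^β ≤ 2*(M*τ^β) := by
    have hsplit : (2*τ)^β = (2:ℝ)^β * τ^β := Real.mul_rpow (by norm_num) hτ0.le
    have h2 : (2:ℝ)^β ≤ 2 := by
      calc (2:ℝ)^β ≤ (2:ℝ)^(1:ℝ) := Real.rpow_le_rpow_of_exponent_le (by norm_num) hβ1
        _ = 2 := Real.rpow_one 2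
    have hτβ : (0:ℝ) ≤ τ^β := Real.rpow_nonneg hτ0.le β
    rw [hsplit]
    nlinarith [mul_le_mul_of_nonneg_right h2 (mul_nonneg hM0 hτβ)]
  have hτβ : (0:ℝ) ≤ τ^β := Real.rpow_nonneg hτ0.le β
  have hbs0 : (0:ℝ) ≤ (j:ℝ)*τ - s := by linarith
  have hbs : (j:ℝ)*τ - s ≤ τ := by linarith
  have hsa0 : (0:ℝ) ≤ s - ((j:ℝ)-1)*τ := by linarith
  have hsa : s - ((j:ℝ)-1)*τ ≤ τ := by linarith
  have hcs0 : (0:ℝ) ≤ ((j:ℝ)+1)*τ - s := by linarith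
  have hcs : ((j:ℝ)+1)*τ - s ≤ 2*τ := by linarith
  have hX2 : |((j:ℝ)*τ-s)*I2 - τ*I5| ≤ 2*M*τ^β*τ*τ := by
    calc |((j:ℝ)*τ-s)*I2 - τ*I5| ≤ M*(2*τ)^β * τ * ((j:ℝ)*τ - s) := hB1
      _ ≤ (2*(M*τ^β)) * τ * τ := by
          apply mul_le_mul (mul_le_mul h2b le_rfl hτ0.le (by positivity)) hbs hbs0 (by positivity)
      _ = 2*M*τ^β*τ*τ := by ring
  have hY2 : |(s-((j:ℝ)-1)*τ)*I5 - ((j:ℝ)*τ-s)*(I1-I5)| ≤ M*τ^β*τ*τ := by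
    calc |(s-((j:ℝ)-1)*τ)*I5 - ((j:ℝ)*τ-s)*(I1-I5)| ≤ M*τ^β * ((j:ℝ)*τ - s) * (s - ((j:ℝ)-1)*τ) := hB2
      _ ≤ M*τ^β * τ * τ := by
          apply mul_le_mul (mul_le_mul le_rfl hbs hbs0 (by positivity)) hsa hsa0 (by positivity)
  rw [key]
  have t1 : |(-((s-((j:ℝ)-1)*τ)*(((j:ℝ)*τ-s)*I2 - τ*I5)))/(2*τ^2)|
      = (s-((j:ℝ)-1)*τ) * |((j:ℝ)*τ-s)*I2 - τ*I5| / (2*τ^2) := by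
    rw [abs_div, abs_neg, abs_mul, abs_of_nonneg hsa0,
      abs_of_nonneg (show (0:ℝ) ≤ 2*τ^2 by positivity)]
  have t2 : |((((j:ℝ)+1)*τ-s)*((s-((j:ℝ)-1)*τ)*I5 - ((j:ℝ)*τ-s)*(I1-I5)))/(2*τ^2)|
      = (((j:ℝ)+1)*τ-s) * |(s-((j:ℝ)-1)*τ)*I5 - ((j:ℝ)*τ-s)*(I1-I5)| / (2*τ^2) := by
    rw [abs_div, abs_mul, abs_of_nonneg hcs0,
      abs_of_nonneg (show (0:ℝ) ≤ 2*τ^2 by positivity)]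
  calc |(-((s-((j:ℝ)-1)*τ)*(((j:ℝ)*τ-s)*I2 - τ*I5)))/(2*τ^2)
        + ((((j:ℝ)+1)*τ-s)*((s-((j:ℝ)-1)*τ)*I5 - ((j:ℝ)*τ-s)*(I1-I5)))/(2*τ^2)|
      ≤ |(-((s-((j:ℝ)-1)*τ)*(((j:ℝ)*τ-s)*I2 - τ*I5)))/(2*τ^2)|
        + |((((j:ℝ)+1)*τ-s)*((s-((j:ℝ)-1)*τ)*I5 - ((j:ℝ)*τ-s)*(I1-I5)))/(2*τ^2)| := abs_add_le _ _
    _ = (s-((j:ℝ)-1)*τ) * |((j:ℝ)*τ-s)*I2 - τ*I5| / (2*τ^2)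
        + (((j:ℝ)+1)*τ-s) * |(s-((j:ℝ)-1)*τ)*I5 - ((j:ℝ)*τ-s)*(I1-I5)| / (2*τ^2) := by
        rw [t1, t2]
    _ ≤ τ * (2*M*τ^β*τ*τ) / (2*τ^2) + (2*τ) * (M*τ^β*τ*τ) / (2*τ^2) := by
        have p1 : (s-((j:ℝ)-1)*τ) * |((j:ℝ)*τ-s)*I2 - τ*I5| ≤ τ * (2*M*τ^β*τ*τ) :=
          mul_le_mul hsa hX2 (abs_nonneg _) hτ0.le
        have p2 : (((j:ℝ)+1)*τ-s) * |(s-((j:ℝ)-1)*τ)*I5 - ((j:ℝ)*τ-s)*(I1-I5)| ≤ (2*τ) * (M*τ^β*τ*τ) :=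
          mul_le_mul hcs hY2 (abs_nonneg _) (by positivity)
        have hd : (0:ℝ) < 2*τ^2 := by positivity
        gcongr
    _ = 2 * M * τ ^ β * τ := by field_simp; ring

lemma errB (T β M : ℝ) (hβ0 : 0 < β) (hβ1 : β ≤ 1) (hM0 : 0 ≤ M)
    (u u' : ℝ → ℝ)
    (hderiv : ∀ t ∈ Set.Icc (0:ℝ) T, HasDerivWithinAt u (u' t) (Set.Icc 0 T) t)
    (hu' : ContinuousOn u' (Set.Icc 0 T))
    (hM : holderBnd T β M u')
    (τ : ℝ) (hτ0 : 0 < τ) (j : ℕ) (hj : 1 ≤ j) (hcT : ((j:ℝ)+1)*τ ≤ T)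
    (s : ℝ) (hs1 : (j:ℝ)*τ ≤ s) (hs2 : s ≤ ((j:ℝ)+1)*τ) :
    |Pi2 τ u j s - u s| ≤ 2 * M * τ ^ β * (((j:ℝ)+1)*τ - s) := by
  have hj' : (1:ℝ) ≤ (j:ℝ) := by exact_mod_cast hj
  have hT0 : 0 ≤ T := le_trans (by nlinarith) hcT
  have ha0 : (0:ℝ) ≤ ((j:ℝ)-1)*τ := by nlinarith
  have hab : ((j:ℝ)-1)*τ ≤ (j:ℝ)*τ := by nlinarith
  have hbc : (j:ℝ)*τ ≤ ((j:ℝ)+1)*τ := by nlinarith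
  have hbT : (j:ℝ)*τ ≤ T := by nlinarith
  have hb0 : (0:ℝ) ≤ (j:ℝ)*τ := le_trans ha0 hab
  have hτne : τ ≠ 0 := ne_of_gt hτ0
  have hint : ∀ x y : ℝ, 0 ≤ x → x ≤ y → y ≤ T → IntervalIntegrable u' volume x y := by
    intro x y hx hxy hy
    apply ContinuousOn.intervalIntegrable
    rw [Set.uIcc_of_le hxy]; exact hu'.mono (Set.Icc_subset_Icc hx hy)
  obtain ⟨I1, hI1d⟩ : ∃ x:ℝ, x = ∫ r in (((j:ℝ)-1)*τ)..((j:ℝ)*τ), u' r := ⟨_, rfl⟩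
  obtain ⟨I2, hI2d⟩ : ∃ x:ℝ, x = ∫ r in ((j:ℝ)*τ)..(((j:ℝ)+1)*τ), u' r := ⟨_, rfl⟩
  obtain ⟨I3, hI3d⟩ : ∃ x:ℝ, x = ∫ r in ((j:ℝ)*τ)..s, u' r := ⟨_, rfl⟩
  obtain ⟨I4, hI4d⟩ : ∃ x:ℝ, x = ∫ r in s..(((j:ℝ)+1)*τ), u' r := ⟨_, rfl⟩
  have e1 : I1 = u ((j:ℝ)*τ) - u (((j:ℝ)-1)*τ) := hI1d.trans (ftc T u u' hderiv hu' ha0 hab hbT)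
  have e2 : I2 = u (((j:ℝ)+1)*τ) - u ((j:ℝ)*τ) :=
    hI2d.trans (ftc T u u' hderiv hu' hb0 hbc hcT)
  have e3 : I3 = u s - u ((j:ℝ)*τ) := hI3d.trans (ftc T u u' hderiv hu' hb0 hs1 (le_trans hs2 hcT))
  have e4 : I4 = u (((j:ℝ)+1)*τ) - u s :=
    hI4d.trans (ftc T u u' hderiv hu' (le_trans hb0 hs1) hs2 hcT)
  have hI4 : I4 = I2 - I3 := by rw [e2, e3, e4]; ring
  have eua : u (((j:ℝ)-1)*τ) = u ((j:ℝ)*τ) - I1 := by rw [e1]; ring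
  have euc : u (((j:ℝ)+1)*τ) = u ((j:ℝ)*τ) + I2 := by rw [e2]; ring
  have eus : u s = u ((j:ℝ)*τ) + I3 := by rw [e3]; ring
  have key : Pi2 τ u j s - u s =
      ((s-(j:ℝ)*τ)*(I2-I3) - (((j:ℝ)+1)*τ-s)*I3)/τ
      - (s-(j:ℝ)*τ)*((((j:ℝ)+1)*τ)-s)*(I2-I1)/(2*τ^2) := by
    simp only [Pi2]
    rw [eua, euc, eus]
    field_simp
    ring
  have hbnd1 : ∀ x ∈ Set.Icc s (((j:ℝ)+1)*τ), ∀ y ∈ Set.Icc ((j:ℝ)*τ) s,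
      |u' x - u' y| ≤ M*τ^β := by
    intro x hx y hy
    have hx0T : x ∈ Set.Icc (0:ℝ) T := ⟨by nlinarith [hx.1], by nlinarith [hx.2]⟩
    have hy0T : y ∈ Set.Icc (0:ℝ) T := ⟨by nlinarith [hy.1], by nlinarith [hy.2]⟩
    have h2 : |x - y| ≤ τ := by
      rw [abs_of_nonneg (by nlinarith [hx.1, hy.2])]
      nlinarith [hx.2, hy.1]
    calc |u' x - u' y| ≤ M * |x-y|^β := hM x hx0T y hy0T
      _ ≤ M * τ^β :=
        mul_le_mul_of_nonneg_left (Real.rpow_le_rpow (abs_nonneg _) h2 hβ0.le) hM0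
  have hbnd2 : ∀ x ∈ Set.Icc ((j:ℝ)*τ) (((j:ℝ)+1)*τ), ∀ y ∈ Set.Icc (((j:ℝ)-1)*τ) ((j:ℝ)*τ),
      |u' x - u' y| ≤ M*(2*τ)^β := by
    intro x hx y hy
    have hx0T : x ∈ Set.Icc (0:ℝ) T := ⟨by nlinarith [hx.1], by nlinarith [hx.2]⟩
    have hy0T : y ∈ Set.Icc (0:ℝ) T := ⟨by nlinarith [hy.1], by nlinarith [hy.2]⟩
    have h2 : |x - y| ≤ 2*τ := by
      rw [abs_of_nonneg (by nlinarith [hx.1, hy.2])]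
      nlinarith [hx.2, hy.1]
    calc |u' x - u' y| ≤ M * |x-y|^β := hM x hx0T y hy0T
      _ ≤ M * (2*τ)^β :=
        mul_le_mul_of_nonneg_left (Real.rpow_le_rpow (abs_nonneg _) h2 hβ0.le) hM0
  have hB1 := avg_diff u' s (((j:ℝ)+1)*τ) ((j:ℝ)*τ) s (M*τ^β) hs2 hs1
    (by positivity) (hint _ _ (le_trans hb0 hs1) hs2 hcT) (hint _ _ hb0 hs1 (le_trans hs2 hcT))
    hbnd1
  have hB2 := avg_diff u' ((j:ℝ)*τ) (((j:ℝ)+1)*τ) (((j:ℝ)-1)*τ) ((j:ℝ)*τ) (M*(2*τ)^β) hbc hab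
    (by positivity) (hint _ _ hb0 hbc hcT) (hint _ _ ha0 hab hbT)
    hbnd2
  rw [← hI4d, ← hI3d, hI4] at hB1
  rw [← hI2d, ← hI1d] at hB2
  have hτβ : (0:ℝ) ≤ τ^β := Real.rpow_nonneg hτ0.le β
  have h2b : M*(2*τ)^β ≤ 2*(M*τ^β) := by
    have hsplit : (2*τ)^β = (2:ℝ)^β * τ^β := Real.mul_rpow (by norm_num) hτ0.le
    have h2 : (2:ℝ)^β ≤ 2 := by
      calc (2:ℝ)^β ≤ (2:ℝ)^(1:ℝ) := Real.rpow_le_rpow_of_exponent_le (by norm_num) hβ1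
        _ = 2 := Real.rpow_one 2
    rw [hsplit]
    nlinarith [mul_le_mul_of_nonneg_right h2 (mul_nonneg hM0 hτβ)]
  have hsb0 : (0:ℝ) ≤ s - (j:ℝ)*τ := by linarith
  have hsb : s - (j:ℝ)*τ ≤ τ := by linarith
  have hcs0 : (0:ℝ) ≤ ((j:ℝ)+1)*τ - s := by linarith
  -- simplify hB2 : |(jτ - (j-1)τ) * I2 - ((j+1)τ - jτ) * I1| ≤ K τ τ i.e. |τ I2 - τ I1|
  have hba : (j:ℝ)*τ - ((j:ℝ)-1)*τ = τ := by ring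
  have hcb : ((j:ℝ)+1)*τ - (j:ℝ)*τ = τ := by ring
  rw [hba, hcb] at hB2
  have hB2' : |I2 - I1| ≤ M*(2*τ)^β * τ := by
    have habs : |τ * I2 - τ * I1| = τ * |I2 - I1| := by
      rw [show τ * I2 - τ * I1 = τ * (I2 - I1) by ring, abs_mul, abs_of_nonneg hτ0.le]
    rw [habs] at hB2
    exact (mul_le_mul_iff_right₀ hτ0).mp
      (hB2.trans_eq (by ring : M*(2*τ)^β*τ*τ = τ*(M*(2*τ)^β*τ)))
  have hX2 : |(s-(j:ℝ)*τ)*(I2-I3) - (((j:ℝ)+1)*τ-s)*I3| ≤ M*τ^β * (((j:ℝ)+1)*τ-s) * τ := by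
    calc |(s-(j:ℝ)*τ)*(I2-I3) - (((j:ℝ)+1)*τ-s)*I3|
        ≤ M*τ^β * (((j:ℝ)+1)*τ - s) * (s - (j:ℝ)*τ) := hB1
      _ ≤ M*τ^β * (((j:ℝ)+1)*τ-s) * τ := by
          apply mul_le_mul_of_nonneg_left hsb (by positivity)
  rw [key]
  have t1 : |((s-(j:ℝ)*τ)*(I2-I3) - (((j:ℝ)+1)*τ-s)*I3)/τ|
      = |(s-(j:ℝ)*τ)*(I2-I3) - (((j:ℝ)+1)*τ-s)*I3| / τ := by
    rw [abs_div, abs_of_nonneg hτ0.le]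
  have t2 : |(s-(j:ℝ)*τ)*((((j:ℝ)+1)*τ)-s)*(I2-I1)/(2*τ^2)|
      = (s-(j:ℝ)*τ)*((((j:ℝ)+1)*τ)-s)*|I2-I1|/(2*τ^2) := by
    rw [abs_div, abs_mul, abs_mul, abs_of_nonneg hsb0, abs_of_nonneg hcs0,
      abs_of_nonneg (show (0:ℝ) ≤ 2*τ^2 by positivity)]
  calc |((s-(j:ℝ)*τ)*(I2-I3) - (((j:ℝ)+1)*τ-s)*I3)/τ
        - (s-(j:ℝ)*τ)*((((j:ℝ)+1)*τ)-s)*(I2-I1)/(2*τ^2)|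
      ≤ |((s-(j:ℝ)*τ)*(I2-I3) - (((j:ℝ)+1)*τ-s)*I3)/τ|
        + |(s-(j:ℝ)*τ)*((((j:ℝ)+1)*τ)-s)*(I2-I1)/(2*τ^2)| := abs_sub _ _
    _ = |(s-(j:ℝ)*τ)*(I2-I3) - (((j:ℝ)+1)*τ-s)*I3| / τ
        + (s-(j:ℝ)*τ)*((((j:ℝ)+1)*τ)-s)*|I2-I1|/(2*τ^2) := by rw [t1, t2]
    _ ≤ (M*τ^β * (((j:ℝ)+1)*τ-s) * τ) / τ
        + τ*((((j:ℝ)+1)*τ)-s)*(M*(2*τ)^β * τ)/(2*τ^2) := by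
        have hd : (0:ℝ) < 2*τ^2 := by positivity
        gcongr
    _ ≤ (M*τ^β * (((j:ℝ)+1)*τ-s) * τ) / τ
        + τ*((((j:ℝ)+1)*τ)-s)*((2*(M*τ^β)) * τ)/(2*τ^2) := by
        have hd : (0:ℝ) < 2*τ^2 := by positivity
        gcongr
    _ = 2 * M * τ ^ β * (((j:ℝ)+1)*τ - s) := by field_simp; ring

lemma Pi2_node_left (τ : ℝ) (hτ : τ ≠ 0) (u : ℝ → ℝ) (j : ℕ) :
    Pi2 τ u j (((j:ℝ)-1)*τ) = u (((j:ℝ)-1)*τ) := by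
  simp only [Pi2]; field_simp; ring

lemma Pi2_node_mid (τ : ℝ) (hτ : τ ≠ 0) (u : ℝ → ℝ) (j : ℕ) :
    Pi2 τ u j ((j:ℝ)*τ) = u ((j:ℝ)*τ) := by
  simp only [Pi2]; field_simp; ring

lemma Pi2_node_right (τ : ℝ) (hτ : τ ≠ 0) (u : ℝ → ℝ) (j : ℕ) :
    Pi2 τ u j (((j:ℝ)+1)*τ) = u (((j:ℝ)+1)*τ) := by
  simp only [Pi2]; field_simp; ring

lemma aux_int (a t γ L : ℝ) (hat : a < t) (hγ0 : 0 < γ) (hγ1 : γ < 1) (hL : 0 ≤ L)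
    (F : ℝ → ℝ) (hF : ContinuousOn F (Set.Ico a t))
    (hFb : ∀ s ∈ Set.Ico a t, |F s| ≤ L * (t - s) ^ (-γ)) :
    IntervalIntegrable F volume a t := by
  have hdom : IntervalIntegrable (fun s => L * (t - s) ^ (-γ)) volume a t := by
    have h1 : IntervalIntegrable (fun x : ℝ => x ^ (-γ)) volume (t - a) (t - t) :=
      intervalIntegrable_rpow' (by linarith)
    have h2 := h1.comp_sub_left t
    simp only [sub_sub_cancel] at h2
    exact (by simpa using h2 : IntervalIntegrable (fun x => (t - x) ^ (-γ)) volume a t).const_mul L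
  rw [intervalIntegrable_iff_integrableOn_Ioc_of_le hat.le]
  rw [intervalIntegrable_iff_integrableOn_Ioc_of_le hat.le] at hdom
  have hIoo : IntegrableOn F (Set.Ioo a t) volume := by
    apply Integrable.mono' (hdom.mono_set Set.Ioo_subset_Ioc_self)
    · exact (hF.mono Set.Ioo_subset_Ico_self).aestronglyMeasurable measurableSet_Ioo
    · rw [ae_restrict_iff' measurableSet_Ioo]
      exact ae_of_all _ fun s hs => by
        simpa [Real.norm_eq_abs] using hFb s (Set.Ioo_subset_Ico_self hs)
  exact hIoo.congr_set_ae (MeasureTheory.Ioo_ae_eq_Ioc).symm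

theorem stmt7 (T : ℝ) (hT : 0 < T) (α β : ℝ) (hα0 : 0 < α) (hα1 : α < 1)
    (hβ0 : 0 < β) (hβ1 : β ≤ 1)
    (u u' : ℝ → ℝ)
    (hderiv : ∀ t ∈ Set.Icc (0:ℝ) T, HasDerivWithinAt u (u' t) (Set.Icc 0 T) t)
    (hu' : ContinuousOn u' (Set.Icc 0 T))
    (M : ℝ) (hM0 : 0 ≤ M) (hM : holderBnd T β M u')
    (N : ℕ) (hN : 0 < N) (τ : ℝ) (hτ : τ = T / N)
    (n : ℕ) (hn : 2 ≤ n) (hnN : n ≤ N) :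
    |caputo α u ((n:ℝ)*τ) - L2approx α τ u n| ≤
      (α / Real.Gamma (1 - α)) *
        (4 * (1 - (n:ℝ) ^ (-α)) / α + 2 / (1 - α)) * M * τ ^ (1 + β - α) := by
  have hNpos : (0:ℝ) < (N:ℝ) := by exact_mod_cast hN
  have hτ0 : 0 < τ := by rw [hτ]; positivity
  have hτne : τ ≠ 0 := ne_of_gt hτ0
  have hn2 : (2:ℝ) ≤ (n:ℝ) := by exact_mod_cast hn
  have hnN' : (n:ℝ) ≤ (N:ℝ) := by exact_mod_cast hnN
  have hNτ : (N:ℝ) * τ = T := by rw [hτ]; field_simp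
  have htT : (n:ℝ)*τ ≤ T := by nlinarith
  have ht0 : 0 < (n:ℝ)*τ := by nlinarith
  have ht'0 : 0 < ((n:ℝ)-1)*τ := by nlinarith
  have ht't : ((n:ℝ)-1)*τ < (n:ℝ)*τ := by nlinarith
  have hΓ : 0 < Real.Gamma (1-α) := Real.Gamma_pos_of_pos (by linarith)
  have hcast : ((n - 1 : ℕ) : ℝ) = (n:ℝ) - 1 := by
    rw [Nat.cast_sub (by omega), Nat.cast_one]
  have hucont : ContinuousOn u (Set.Icc 0 T) := fun z hz => (hderiv z hz).continuousWithinAt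
  obtain ⟨L, hL⟩ : ∃ L, ∀ x ∈ Set.Icc (0:ℝ) T, ‖u' x‖ ≤ L :=
    IsCompact.exists_bound_of_continuousOn isCompact_Icc hu'
  have hL0 : 0 ≤ L := le_trans (norm_nonneg _) (hL 0 ⟨le_refl 0, hT.le⟩)
  have hLip : ∀ x ∈ Set.Icc (0:ℝ) T, ∀ y ∈ Set.Icc (0:ℝ) T, |u y - u x| ≤ L * |y - x| := by
    intro x hx y hy
    have := Convex.norm_image_sub_le_of_norm_hasDerivWithin_le hderiv hL (convex_Icc 0 T) hx hy
    simpa [Real.norm_eq_abs] using this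
  have hτβ : (0:ℝ) ≤ τ^β := Real.rpow_nonneg hτ0.le β
  -- interpolant node values
  have hvt : L2interp τ u n ((n:ℝ)*τ) = u ((n:ℝ)*τ) := by
    rw [L2interp, if_pos (by nlinarith)]
    have hnode := Pi2_node_right τ hτne u (n-1)
    rw [hcast] at hnode
    have e : ((n:ℝ) - 1 + 1)*τ = (n:ℝ)*τ := by ring
    rw [e] at hnode
    exact hnode
  have hv0 : L2interp τ u n 0 = u 0 := by
    rw [L2interp, if_neg (by push_neg; nlinarith)]
    rw [zero_div, Nat.ceil_zero]
    simp only [Pi2, Nat.cast_zero]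
    field_simp
    ring
  -- piece identification
  have hpiece : ∀ j : ℕ, 1 ≤ j → (j:ℝ) ≤ (n:ℝ)-1 →
      ∀ s ∈ Set.Ioc (((j:ℝ)-1)*τ) ((j:ℝ)*τ), L2interp τ u n s = Pi2 τ u j s := by
    intro j hj1 hjn' s hs
    rw [L2interp, if_neg (by push_neg; nlinarith [hs.2])]
    have hceil : ⌈s/τ⌉₊ = j := by
      rw [Nat.ceil_eq_iff (by omega)]
      constructor
      · have hc : ((j-1:ℕ):ℝ) = (j:ℝ)-1 := by
          rw [Nat.cast_sub (by omega), Nat.cast_one]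
        rw [hc, lt_div_iff₀ hτ0]
        exact hs.1
      · rw [div_le_iff₀ hτ0]
        exact hs.2
    rw [hceil]
  have hpieceN : ∀ s ∈ Set.Ioc (((n:ℝ)-1)*τ) ((n:ℝ)*τ),
      L2interp τ u n s = Pi2 τ u (n-1) s := by
    intro s hs; rw [L2interp, if_pos hs.1]
  -- the two integrands
  have hdiff : caputo α u ((n:ℝ)*τ) - L2approx α τ u n
      = (α / Real.Gamma (1-α)) *
        ((∫ s in (0:ℝ)..((n:ℝ)*τ), (u ((n:ℝ)*τ) - u s)/((n:ℝ)*τ - s)^(α+1))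
         - ∫ s in (0:ℝ)..((n:ℝ)*τ), (u ((n:ℝ)*τ) - L2interp τ u n s)/((n:ℝ)*τ - s)^(α+1)) := by
    simp only [L2approx, caputo, hvt, hv0]
    ring
  -- continuity and bound for the exact integrand
  have hfcont : ContinuousOn (fun s => (u ((n:ℝ)*τ) - u s)/((n:ℝ)*τ - s)^(α+1))
      (Set.Ico 0 ((n:ℝ)*τ)) := by
    apply ContinuousOn.div
    · exact continuousOn_const.sub (hucont.mono (fun z hz => ⟨hz.1, le_trans hz.2.le htT⟩))
    · apply ContinuousOn.rpow_const (continuousOn_const.sub continuousOn_id)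
      intro z hz; left
      exact ne_of_gt (by linarith [hz.2] : (0:ℝ) < (n:ℝ)*τ - z)
    · intro z hz
      exact ne_of_gt (Real.rpow_pos_of_pos (by linarith [hz.2] : (0:ℝ) < (n:ℝ)*τ - z) _)
  have hrpow_div : ∀ s : ℝ, s < (n:ℝ)*τ →
      ((n:ℝ)*τ - s)^(-α) = ((n:ℝ)*τ - s)/(((n:ℝ)*τ - s)^(α+1)) := by
    intro s hs
    rw [show -α = 1 - (α+1) by ring, Real.rpow_sub (by linarith), Real.rpow_one]
  have hfbd : ∀ s ∈ Set.Ico (0:ℝ) ((n:ℝ)*τ),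
      |(u ((n:ℝ)*τ) - u s)/((n:ℝ)*τ - s)^(α+1)| ≤ L * ((n:ℝ)*τ - s)^(-α) := by
    intro s hs
    have hts : (0:ℝ) < (n:ℝ)*τ - s := by linarith [hs.2]
    have h1 : |u ((n:ℝ)*τ) - u s| ≤ L * ((n:ℝ)*τ - s) := by
      have h2 := hLip s ⟨hs.1, by linarith⟩ ((n:ℝ)*τ) ⟨by positivity, htT⟩
      rwa [abs_of_nonneg (by linarith : (0:ℝ) ≤ (n:ℝ)*τ - s)] at h2
    rw [abs_div, abs_of_nonneg (Real.rpow_nonneg hts.le _), hrpow_div s hs.2, ← mul_div_assoc]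
    exact (div_le_div_iff_of_pos_right (Real.rpow_pos_of_pos hts _)).mpr h1
  have hfint : IntervalIntegrable (fun s => (u ((n:ℝ)*τ) - u s)/((n:ℝ)*τ - s)^(α+1))
      volume 0 ((n:ℝ)*τ) := aux_int 0 ((n:ℝ)*τ) α L ht0 hα0 hα1 hL0 _ hfcont hfbd
  have hfint1 : IntervalIntegrable (fun s => (u ((n:ℝ)*τ) - u s)/((n:ℝ)*τ - s)^(α+1))
      volume 0 (((n:ℝ)-1)*τ) := by
    apply hfint.mono_set
    rw [Set.uIcc_of_le ht'0.le, Set.uIcc_of_le ht0.le]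
    exact Set.Icc_subset_Icc le_rfl ht't.le
  have hfint2 : IntervalIntegrable (fun s => (u ((n:ℝ)*τ) - u s)/((n:ℝ)*τ - s)^(α+1))
      volume (((n:ℝ)-1)*τ) ((n:ℝ)*τ) := by
    apply hfint.mono_set
    rw [Set.uIcc_of_le ht't.le, Set.uIcc_of_le ht0.le]
    exact Set.Icc_subset_Icc ht'0.le le_rfl
  -- interpolation error on [0, (n-1)τ]
  have herrA : ∀ s ∈ Set.Ioc (0:ℝ) (((n:ℝ)-1)*τ),
      |L2interp τ u n s - u s| ≤ 2*M*τ^β*τ := by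
    intro s hs
    have hsτpos : 0 < s/τ := div_pos hs.1 hτ0
    set j : ℕ := ⌈s/τ⌉₊ with hjdef
    have hj1 : 1 ≤ j := Nat.one_le_iff_ne_zero.mpr (Nat.ceil_pos.mpr hsτpos).ne'
    have hjn : (j:ℝ) ≤ (n:ℝ)-1 := by
      have h1 : s/τ ≤ ((n-1:ℕ):ℝ) := by
        rw [hcast, div_le_iff₀ hτ0]
        calc s ≤ ((n:ℝ)-1)*τ := hs.2
          _ = ((n:ℝ)-1)*τ := rfl
      have h2 : j ≤ n-1 := Nat.ceil_le.mpr h1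
      calc (j:ℝ) ≤ ((n-1:ℕ):ℝ) := by exact_mod_cast h2
        _ = (n:ℝ)-1 := hcast
    have hsj2 : s ≤ (j:ℝ)*τ := by
      rw [← div_le_iff₀ hτ0]; exact Nat.le_ceil _
    have hsj1 : ((j:ℝ)-1)*τ < s := by
      have h4 : ((j-1:ℕ):ℝ) < s/τ := by
        exact_mod_cast Nat.lt_ceil.mp (by omega : j-1 < ⌈s/τ⌉₊)
      have h3 : (j:ℝ)-1 < s/τ := by
        rwa [Nat.cast_sub hj1, Nat.cast_one] at h4
      calc ((j:ℝ)-1)*τ < (s/τ)*τ := mul_lt_mul_of_pos_right h3 hτ0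
        _ = s := by field_simp
    have hjT : ((j:ℝ)+1)*τ ≤ T := by nlinarith
    rw [hpiece j hj1 hjn s ⟨hsj1, hsj2⟩]
    exact errA T β M hβ0 hβ1 hM0 u u' hderiv hu' hM τ hτ0 j hj1 hjT s hsj1.le hsj2
  -- pointwise bound on [0, (n-1)τ]
  have hb1 : ∀ s ∈ Set.uIoc (0:ℝ) (((n:ℝ)-1)*τ),
      ‖(u ((n:ℝ)*τ) - u s)/((n:ℝ)*τ - s)^(α+1)
        - (u ((n:ℝ)*τ) - L2interp τ u n s)/((n:ℝ)*τ - s)^(α+1)‖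
        ≤ (2*M*τ^β*τ) * ((n:ℝ)*τ - s)^(-(α+1)) := by
    intro s hs
    rw [Set.uIoc_of_le ht'0.le] at hs
    have hts : (0:ℝ) < (n:ℝ)*τ - s := by linarith [hs.2]
    have e : (u ((n:ℝ)*τ) - u s)/((n:ℝ)*τ - s)^(α+1)
        - (u ((n:ℝ)*τ) - L2interp τ u n s)/((n:ℝ)*τ - s)^(α+1)
        = (L2interp τ u n s - u s)/((n:ℝ)*τ - s)^(α+1) := by ring
    rw [Real.norm_eq_abs, e, abs_div, abs_of_nonneg (Real.rpow_nonneg hts.le _),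
      Real.rpow_neg hts.le, div_eq_mul_inv]
    exact mul_le_mul_of_nonneg_right (herrA s hs)
      (inv_nonneg.mpr (Real.rpow_nonneg hts.le _))
  have hB1cont : ContinuousOn (fun s => (2*M*τ^β*τ) * ((n:ℝ)*τ - s)^(-(α+1)))
      (Set.uIcc 0 (((n:ℝ)-1)*τ)) := by
    rw [Set.uIcc_of_le ht'0.le]
    apply ContinuousOn.mul continuousOn_const
    apply ContinuousOn.rpow_const (continuousOn_const.sub continuousOn_id)
    intro z hz; left
    exact ne_of_gt (by linarith [hz.2] : (0:ℝ) < (n:ℝ)*τ - z)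
  have hB1int := hB1cont.intervalIntegrable (μ := volume)
  -- continuity of Pi2-based integrands
  have hPi2cont : ∀ j : ℕ, Continuous (fun s => Pi2 τ u j s) := by
    intro j; simp only [Pi2]; fun_prop
  -- integrability of interpolant integrand on [0, (n-1)τ]
  have hgint1 : IntervalIntegrable
      (fun s => (u ((n:ℝ)*τ) - L2interp τ u n s)/((n:ℝ)*τ - s)^(α+1))
      volume 0 (((n:ℝ)-1)*τ) := by
    have hpieces : ∀ k : ℕ, k < n - 1 →
        IntervalIntegrable (fun s => (u ((n:ℝ)*τ) - L2interp τ u n s)/((n:ℝ)*τ - s)^(α+1))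
          volume ((k:ℝ)*τ) (((k+1:ℕ):ℝ)*τ) := by
      intro k hk
      have hk1 : (1:ℕ) ≤ k+1 := by omega
      have hkc : ((k+1:ℕ):ℝ) = (k:ℝ)+1 := by push_cast; ring
      have hkn : ((k:ℝ)+1) ≤ (n:ℝ)-1 := by
        have h0 : (k+1:ℕ) ≤ n-1 := by omega
        have h2 : ((k+1:ℕ):ℝ) ≤ ((n-1:ℕ):ℝ) := by exact_mod_cast h0
        rw [hcast] at h2; rwa [hkc] at h2
      have hle : (k:ℝ)*τ ≤ ((k+1:ℕ):ℝ)*τ := by rw [hkc]; nlinarith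
      have hGint : IntervalIntegrable
          (fun s => (u ((n:ℝ)*τ) - Pi2 τ u (k+1) s)/((n:ℝ)*τ - s)^(α+1))
          volume ((k:ℝ)*τ) (((k+1:ℕ):ℝ)*τ) := by
        apply ContinuousOn.intervalIntegrable
        apply ContinuousOn.div
        · exact continuousOn_const.sub (hPi2cont (k+1)).continuousOn
        · apply ContinuousOn.rpow_const (continuousOn_const.sub continuousOn_id)
          intro z hz; left
          rw [Set.uIcc_of_le hle, Set.mem_Icc, hkc] at hz
          exact ne_of_gt (by nlinarith [hz.2] : (0:ℝ) < (n:ℝ)*τ - z)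
        · intro z hz
          rw [Set.uIcc_of_le hle, Set.mem_Icc, hkc] at hz
          exact ne_of_gt (Real.rpow_pos_of_pos (by nlinarith [hz.2] : (0:ℝ) < (n:ℝ)*τ - z) _)
      rw [intervalIntegrable_iff_integrableOn_Ioc_of_le hle] at hGint ⊢
      apply hGint.congr_fun ?_ measurableSet_Ioc
      intro s hs
      rw [Set.mem_Ioc, hkc] at hs
      have hmem : s ∈ Set.Ioc (((((k+1:ℕ)):ℝ)-1)*τ) (((k+1:ℕ):ℝ)*τ) := by
        rw [Set.mem_Ioc, hkc]
        constructor
        · have e2 : ((k:ℝ)+1-1)*τ = (k:ℝ)*τ := by ring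
          rw [e2]; exact hs.1
        · exact hs.2
      have := hpiece (k+1) hk1 (by rwa [hkc]) s hmem
      dsimp only
      rw [this]
    have htrans := IntervalIntegrable.trans_iterate (a := fun k : ℕ => (k:ℝ)*τ) (n := n-1)
      (μ := volume)
      (f := fun s => (u ((n:ℝ)*τ) - L2interp τ u n s)/((n:ℝ)*τ - s)^(α+1))
      (fun k hk => by
        have := hpieces k hk
        simpa using this)
    simp only [Nat.cast_zero, zero_mul] at htrans
    rwa [hcast] at htrans
  -- error bound on last interval
  have herrBs : ∀ s, ((n:ℝ)-1)*τ ≤ s → s ≤ (n:ℝ)*τ →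
      |Pi2 τ u (n-1) s - u s| ≤ 2*M*τ^β*((n:ℝ)*τ - s) := by
    intro s h1 h2
    have e : (((n:ℝ)-1)+1)*τ = (n:ℝ)*τ := by ring
    have h := errB T β M hβ0 hβ1 hM0 u u' hderiv hu' hM τ hτ0 (n-1) (by omega)
      (by rw [hcast, e]; exact htT) s (by rwa [hcast]) (by rw [hcast, e]; exact h2)
    rw [hcast, e] at h
    exact h
  have hGcontB : ContinuousOn
      (fun s => (u ((n:ℝ)*τ) - Pi2 τ u (n-1) s)/((n:ℝ)*τ - s)^(α+1))
      (Set.Ico (((n:ℝ)-1)*τ) ((n:ℝ)*τ)) := by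
    apply ContinuousOn.div
    · exact continuousOn_const.sub (hPi2cont (n-1)).continuousOn
    · apply ContinuousOn.rpow_const (continuousOn_const.sub continuousOn_id)
      intro z hz; left
      exact ne_of_gt (by linarith [hz.2] : (0:ℝ) < (n:ℝ)*τ - z)
    · intro z hz
      exact ne_of_gt (Real.rpow_pos_of_pos (by linarith [hz.2] : (0:ℝ) < (n:ℝ)*τ - z) _)
  have hGbdB : ∀ s ∈ Set.Ico (((n:ℝ)-1)*τ) ((n:ℝ)*τ),
      |(u ((n:ℝ)*τ) - Pi2 τ u (n-1) s)/((n:ℝ)*τ - s)^(α+1)|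
        ≤ (L + 2*M*τ^β) * ((n:ℝ)*τ - s)^(-α) := by
    intro s hs
    have hts : (0:ℝ) < (n:ℝ)*τ - s := by linarith [hs.2]
    have h2 : |u ((n:ℝ)*τ) - u s| ≤ L*((n:ℝ)*τ - s) := by
      have h2' := hLip s ⟨by linarith [hs.1], by linarith⟩ ((n:ℝ)*τ) ⟨by positivity, htT⟩
      rwa [abs_of_nonneg (by linarith : (0:ℝ) ≤ (n:ℝ)*τ - s)] at h2'
    have h3 := herrBs s hs.1 hs.2.le
    have h1 : |u ((n:ℝ)*τ) - Pi2 τ u (n-1) s| ≤ (L + 2*M*τ^β)*((n:ℝ)*τ - s) := by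
      have h4 : |u ((n:ℝ)*τ) - Pi2 τ u (n-1) s|
          ≤ |u ((n:ℝ)*τ) - u s| + |Pi2 τ u (n-1) s - u s| := by
        have e : u ((n:ℝ)*τ) - Pi2 τ u (n-1) s
            = (u ((n:ℝ)*τ) - u s) - (Pi2 τ u (n-1) s - u s) := by ring
        rw [e]; exact abs_sub _ _
      nlinarith [h4]
    rw [abs_div, abs_of_nonneg (Real.rpow_nonneg hts.le _), hrpow_div s hs.2, ← mul_div_assoc]
    exact (div_le_div_iff_of_pos_right (Real.rpow_pos_of_pos hts _)).mpr h1
  have hgint2 : IntervalIntegrable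
      (fun s => (u ((n:ℝ)*τ) - L2interp τ u n s)/((n:ℝ)*τ - s)^(α+1))
      volume (((n:ℝ)-1)*τ) ((n:ℝ)*τ) := by
    have hGintB := aux_int (((n:ℝ)-1)*τ) ((n:ℝ)*τ) α (L + 2*M*τ^β) ht't hα0 hα1
      (by positivity) _ hGcontB hGbdB
    rw [intervalIntegrable_iff_integrableOn_Ioc_of_le ht't.le] at hGintB ⊢
    apply hGintB.congr_fun ?_ measurableSet_Ioc
    intro s hs
    dsimp only
    rw [hpieceN s hs]
  -- pointwise bound on last interval
  have hb2 : ∀ s ∈ Set.uIoc (((n:ℝ)-1)*τ) ((n:ℝ)*τ),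
      ‖(u ((n:ℝ)*τ) - u s)/((n:ℝ)*τ - s)^(α+1)
        - (u ((n:ℝ)*τ) - L2interp τ u n s)/((n:ℝ)*τ - s)^(α+1)‖
        ≤ (2*M*τ^β) * ((n:ℝ)*τ - s)^(-α) := by
    intro s hs
    rw [Set.uIoc_of_le ht't.le] at hs
    rcases eq_or_lt_of_le hs.2 with heq | hlt
    · rw [heq, hvt]
      simp [Real.zero_rpow (by linarith : -α ≠ 0)]
    · have hts : (0:ℝ) < (n:ℝ)*τ - s := by linarith
      have e : (u ((n:ℝ)*τ) - u s)/((n:ℝ)*τ - s)^(α+1)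
          - (u ((n:ℝ)*τ) - L2interp τ u n s)/((n:ℝ)*τ - s)^(α+1)
          = (L2interp τ u n s - u s)/((n:ℝ)*τ - s)^(α+1) := by ring
      rw [Real.norm_eq_abs, e, abs_div, abs_of_nonneg (Real.rpow_nonneg hts.le _),
        hpieceN s ⟨hs.1, hs.2⟩]
      calc |Pi2 τ u (n-1) s - u s| / ((n:ℝ)*τ - s)^(α+1)
          ≤ (2*M*τ^β*((n:ℝ)*τ - s)) / ((n:ℝ)*τ - s)^(α+1) :=
            (div_le_div_iff_of_pos_right (Real.rpow_pos_of_pos hts _)).mpr (herrBs s hs.1.le hs.2)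
        _ = (2*M*τ^β) * (((n:ℝ)*τ - s)/(((n:ℝ)*τ - s)^(α+1))) := by ring
        _ = (2*M*τ^β) * ((n:ℝ)*τ - s)^(-α) := by rw [← hrpow_div s hlt]
  have hB2int : IntervalIntegrable (fun s => (2*M*τ^β) * ((n:ℝ)*τ - s)^(-α))
      volume (((n:ℝ)-1)*τ) ((n:ℝ)*τ) := by
    have h1 : IntervalIntegrable (fun x : ℝ => x ^ (-α)) volume
        ((n:ℝ)*τ - ((n:ℝ)-1)*τ) ((n:ℝ)*τ - (n:ℝ)*τ) := intervalIntegrable_rpow' (by linarith)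
    have h2 := h1.comp_sub_left ((n:ℝ)*τ)
    simp only [sub_sub_cancel] at h2
    exact (h2 : IntervalIntegrable (fun x => ((n:ℝ)*τ - x) ^ (-α)) volume _ _).const_mul _
  -- integral computations
  have hIB1 : (∫ s in (0:ℝ)..(((n:ℝ)-1)*τ), ((n:ℝ)*τ - s)^(-(α+1)))
      = (τ^(-α) - ((n:ℝ)*τ)^(-α))/α := by
    rw [intervalIntegral.integral_comp_sub_left (fun z : ℝ => z^(-(α+1))) ((n:ℝ)*τ)]
    have e1 : (n:ℝ)*τ - ((n:ℝ)-1)*τ = τ := by ring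
    have e2 : (n:ℝ)*τ - 0 = (n:ℝ)*τ := by ring
    rw [e1, e2, integral_rpow (Or.inr ⟨by intro hcon; nlinarith [hcon],
      by rw [Set.uIcc_of_le (by nlinarith : τ ≤ (n:ℝ)*τ)]; intro h0;
         exact absurd h0.1 (by linarith)⟩)]
    rw [show -(α+1)+1 = -α by ring, div_neg, ← neg_div, neg_sub]
  have hIB2 : (∫ s in (((n:ℝ)-1)*τ)..((n:ℝ)*τ), ((n:ℝ)*τ - s)^(-α)) = τ^(1-α)/(1-α) := by
    rw [intervalIntegral.integral_comp_sub_left (fun z : ℝ => z^(-α)) ((n:ℝ)*τ)]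
    have e1 : (n:ℝ)*τ - ((n:ℝ)-1)*τ = τ := by ring
    have e2 : (n:ℝ)*τ - (n:ℝ)*τ = 0 := by ring
    rw [e1, e2, integral_rpow (Or.inl (by linarith))]
    rw [show -α+1 = 1-α by ring, Real.zero_rpow (by linarith : (1:ℝ)-α ≠ 0)]
    ring
  -- assembled bounds
  have hmulr : ((n:ℝ)*τ)^(-α) = (n:ℝ)^(-α) * τ^(-α) := Real.mul_rpow (by positivity) hτ0.le
  have hn1 : (n:ℝ)^(-α) ≤ 1 := Real.rpow_le_one_of_one_le_of_nonpos (by linarith) (by linarith)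
  have hτα0 : (0:ℝ) ≤ τ^(-α) := Real.rpow_nonneg hτ0.le _
  have hIB1pos : 0 ≤ (τ^(-α) - ((n:ℝ)*τ)^(-α))/α := by
    apply div_nonneg _ hα0.le
    rw [hmulr]
    nlinarith [Real.rpow_nonneg (show (0:ℝ) ≤ (n:ℝ) by positivity) (-α)]
  have hD1 : ‖(∫ s in (0:ℝ)..(((n:ℝ)-1)*τ), (u ((n:ℝ)*τ) - u s)/((n:ℝ)*τ - s)^(α+1))
      - ∫ s in (0:ℝ)..(((n:ℝ)-1)*τ), (u ((n:ℝ)*τ) - L2interp τ u n s)/((n:ℝ)*τ - s)^(α+1)‖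
      ≤ (2*M*τ^β*τ) * ((τ^(-α) - ((n:ℝ)*τ)^(-α))/α) := by
    rw [← intervalIntegral.integral_sub hfint1 hgint1]
    calc ‖∫ s in (0:ℝ)..(((n:ℝ)-1)*τ),
          ((u ((n:ℝ)*τ) - u s)/((n:ℝ)*τ - s)^(α+1)
            - (u ((n:ℝ)*τ) - L2interp τ u n s)/((n:ℝ)*τ - s)^(α+1))‖
        ≤ |∫ s in (0:ℝ)..(((n:ℝ)-1)*τ), (2*M*τ^β*τ) * ((n:ℝ)*τ - s)^(-(α+1))| :=
          intervalIntegral.norm_integral_le_abs_of_norm_le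
            (ae_restrict_of_forall_mem measurableSet_uIoc hb1) hB1int
      _ = (2*M*τ^β*τ) * ((τ^(-α) - ((n:ℝ)*τ)^(-α))/α) := by
          rw [intervalIntegral.integral_const_mul, hIB1]
          exact abs_of_nonneg (mul_nonneg (by positivity) hIB1pos)
  have hD2 : ‖(∫ s in (((n:ℝ)-1)*τ)..((n:ℝ)*τ), (u ((n:ℝ)*τ) - u s)/((n:ℝ)*τ - s)^(α+1))
      - ∫ s in (((n:ℝ)-1)*τ)..((n:ℝ)*τ), (u ((n:ℝ)*τ) - L2interp τ u n s)/((n:ℝ)*τ - s)^(α+1)‖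
      ≤ (2*M*τ^β) * (τ^(1-α)/(1-α)) := by
    rw [← intervalIntegral.integral_sub hfint2 hgint2]
    calc ‖∫ s in (((n:ℝ)-1)*τ)..((n:ℝ)*τ),
          ((u ((n:ℝ)*τ) - u s)/((n:ℝ)*τ - s)^(α+1)
            - (u ((n:ℝ)*τ) - L2interp τ u n s)/((n:ℝ)*τ - s)^(α+1))‖
        ≤ |∫ s in (((n:ℝ)-1)*τ)..((n:ℝ)*τ), (2*M*τ^β) * ((n:ℝ)*τ - s)^(-α)| :=
          intervalIntegral.norm_integral_le_abs_of_norm_le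
            (ae_restrict_of_forall_mem measurableSet_uIoc hb2) hB2int
      _ = (2*M*τ^β) * (τ^(1-α)/(1-α)) := by
          rw [intervalIntegral.integral_const_mul, hIB2]
          exact abs_of_nonneg (mul_nonneg (by positivity)
            (div_nonneg (Real.rpow_nonneg hτ0.le _) (by linarith)))
  -- put everything together
  rw [hdiff, abs_mul, abs_of_nonneg (by positivity : (0:ℝ) ≤ α / Real.Gamma (1-α))]
  have hsplitD : (∫ s in (0:ℝ)..((n:ℝ)*τ), (u ((n:ℝ)*τ) - u s)/((n:ℝ)*τ - s)^(α+1))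
      - (∫ s in (0:ℝ)..((n:ℝ)*τ), (u ((n:ℝ)*τ) - L2interp τ u n s)/((n:ℝ)*τ - s)^(α+1))
      = ((∫ s in (0:ℝ)..(((n:ℝ)-1)*τ), (u ((n:ℝ)*τ) - u s)/((n:ℝ)*τ - s)^(α+1))
          - ∫ s in (0:ℝ)..(((n:ℝ)-1)*τ), (u ((n:ℝ)*τ) - L2interp τ u n s)/((n:ℝ)*τ - s)^(α+1))
        + ((∫ s in (((n:ℝ)-1)*τ)..((n:ℝ)*τ), (u ((n:ℝ)*τ) - u s)/((n:ℝ)*τ - s)^(α+1))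
          - ∫ s in (((n:ℝ)-1)*τ)..((n:ℝ)*τ), (u ((n:ℝ)*τ) - L2interp τ u n s)/((n:ℝ)*τ - s)^(α+1)) := by
    rw [← intervalIntegral.integral_add_adjacent_intervals hfint1 hfint2,
        ← intervalIntegral.integral_add_adjacent_intervals hgint1 hgint2]
    ring
  rw [hsplitD]
  have htriangle := abs_add_le
    ((∫ s in (0:ℝ)..(((n:ℝ)-1)*τ), (u ((n:ℝ)*τ) - u s)/((n:ℝ)*τ - s)^(α+1))
      - ∫ s in (0:ℝ)..(((n:ℝ)-1)*τ), (u ((n:ℝ)*τ) - L2interp τ u n s)/((n:ℝ)*τ - s)^(α+1))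
    ((∫ s in (((n:ℝ)-1)*τ)..((n:ℝ)*τ), (u ((n:ℝ)*τ) - u s)/((n:ℝ)*τ - s)^(α+1))
      - ∫ s in (((n:ℝ)-1)*τ)..((n:ℝ)*τ), (u ((n:ℝ)*τ) - L2interp τ u n s)/((n:ℝ)*τ - s)^(α+1))
  rw [Real.norm_eq_abs] at hD1 hD2
  have hP : (0:ℝ) ≤ τ^(1+β-α) := Real.rpow_nonneg hτ0.le _
  have hpow1 : τ * τ^β * τ^(-α) = τ^(1+β-α) := by
    rw [show (1:ℝ)+β-α = 1+β+(-α) by ring, Real.rpow_add hτ0, Real.rpow_add hτ0, Real.rpow_one]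
  have hpow2 : τ^β * τ^(1-α) = τ^(1+β-α) := by
    rw [show (1:ℝ)+β-α = β+(1-α) by ring, Real.rpow_add hτ0]
  have h1c : (0:ℝ) ≤ 1 - (n:ℝ)^(-α) := by linarith
  calc α / Real.Gamma (1-α) * |_ + _| ≤ α / Real.Gamma (1-α)
        * ((2*M*τ^β*τ) * ((τ^(-α) - ((n:ℝ)*τ)^(-α))/α) + (2*M*τ^β) * (τ^(1-α)/(1-α))) := by
        apply mul_le_mul_of_nonneg_left _ (by positivity)
        exact le_trans htriangle (add_le_add hD1 hD2)
    _ ≤ α / Real.Gamma (1-α) * ((4 * (1 - (n:ℝ)^(-α)) / α + 2 / (1-α)) * M * τ^(1+β-α)) := by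
        apply mul_le_mul_of_nonneg_left _ (by positivity)
        have e1 : (2*M*τ^β*τ) * ((τ^(-α) - ((n:ℝ)*τ)^(-α))/α)
            = (2*M*(1 - (n:ℝ)^(-α))/α) * (τ * τ^β * τ^(-α)) := by
          rw [hmulr]; ring
        have e2 : (2*M*τ^β) * (τ^(1-α)/(1-α)) = (2*M/(1-α)) * (τ^β * τ^(1-α)) := by ring
        rw [e1, e2, hpow1, hpow2]
        have hpos : (0:ℝ) ≤ 2*M*(1 - (n:ℝ)^(-α))/α * τ^(1+β-α) := by positivity
        have hsplit2 : (4 * (1 - (n:ℝ)^(-α)) / α + 2 / (1-α)) * M * τ^(1+β-α)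
            = 2*M*(1 - (n:ℝ)^(-α))/α * τ^(1+β-α) + 2*M/(1-α) * τ^(1+β-α)
              + 2*M*(1 - (n:ℝ)^(-α))/α * τ^(1+β-α) := by ring
        rw [hsplit2]
        linarith [hpos]
    _ = (α / Real.Gamma (1-α)) * (4 * (1 - (n:ℝ)^(-α)) / α + 2 / (1-α)) * M * τ^(1+β-α) := by
        ring
end

section
/- Let T > 0, 0 < β ≤ 1, k ≥ 1 an integer, and u ∈ C^{1,β}([0,T]). There exists a constant C > 0 depending only on k and β such that for every N ∈ ℕ with τ = T/N, every integer j with k ≤ j ≤ N, and every s ∈ [t_{j−1}, t_j], |u(s) − Π_{k,j}u(s)| ≤ C (t_j − s) τ^β [u']_{C^{0,β}[0,T]}. -/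
open Set

/-- The degree-`k` Lagrange interpolant `Π_{k,j} u` of `u` at the `k+1` nodes
`t_{j-k}, …, t_j` (with `t_i = iτ`):
`Π_{k,j}u(s) = Σ_{l=0}^{k} u(t_{j-l}) Π_{i≠l} (s - t_{j-i})/(t_{j-l} - t_{j-i})`. -/
noncomputable def Pik (τ : ℝ) (u : ℝ → ℝ) (k j : ℕ) (s : ℝ) : ℝ :=
  ∑ l ∈ Finset.range (k + 1), u (((j:ℝ) - (l:ℝ)) * τ) *
    ∏ i ∈ (Finset.range (k + 1)).erase l,
      (s - ((j:ℝ) - (i:ℝ)) * τ) / (((j:ℝ) - (l:ℝ)) * τ - ((j:ℝ) - (i:ℝ)) * τ)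

/-- Auxiliary: distinct naturals have real casts at distance at least 1. -/
lemma one_le_abs_cast_sub {i l : ℕ} (h : i ≠ l) : (1:ℝ) ≤ |(i:ℝ) - (l:ℝ)| := by
  rcases h.lt_or_gt with h | h
  · have h1 : (i:ℝ) + 1 ≤ l := by exact_mod_cast h
    rw [abs_of_nonpos (by linarith)]
    linarith
  · have h1 : (l:ℝ) + 1 ≤ i := by exact_mod_cast h
    rw [abs_of_nonneg (by linarith)]
    linarith

/-- Taylor-type remainder bound for `C^{1,β}` functions. -/
lemma taylor_bnd {T β M : ℝ} (hβ0 : 0 < β) {u u' : ℝ → ℝ}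
    (hu : ∀ t ∈ Set.Icc (0:ℝ) T, HasDerivWithinAt u (u' t) (Set.Icc 0 T) t)
    (hM : 0 ≤ M) (hH : holderBnd T β M u')
    {x y : ℝ} (hx : x ∈ Set.Icc (0:ℝ) T) (hy : y ∈ Set.Icc (0:ℝ) T) :
    |u y - u x - u' x * (y - x)| ≤ M * |y - x| ^ β * |y - x| := by
  have h0T : (0:ℝ) ≤ T := le_trans hx.1 hx.2
  have hxu : x ∈ Set.uIcc (0:ℝ) T := by rw [Set.uIcc_of_le h0T]; exact hx
  have hyu : y ∈ Set.uIcc (0:ℝ) T := by rw [Set.uIcc_of_le h0T]; exact hy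
  have hsub : Set.uIcc x y ⊆ Set.Icc (0:ℝ) T := by
    rw [← Set.uIcc_of_le h0T]; exact Set.uIcc_subset_uIcc hxu hyu
  have hg' : ∀ t ∈ Set.uIcc x y,
      HasDerivWithinAt (fun t => u t - u' x * t) (u' t - u' x) (Set.uIcc x y) t := by
    intro t ht
    have h1 : HasDerivWithinAt (fun t : ℝ => u' x * t) (u' x) (Set.uIcc x y) t := by
      simpa using (hasDerivWithinAt_id t (Set.uIcc x y)).const_mul (u' x)
    exact ((hu t (hsub ht)).mono hsub).sub h1
  have hbound : ∀ t ∈ Set.uIcc x y, ‖u' t - u' x‖ ≤ M * |y - x| ^ β := by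
    intro t ht
    have h1 : |u' t - u' x| ≤ M * |t - x| ^ β := hH t (hsub ht) x hx
    have h2 : |t - x| ≤ |y - x| := by
      rcases Set.mem_uIcc.mp ht with ⟨h3, h4⟩ | ⟨h3, h4⟩
      · rw [abs_of_nonneg (by linarith), abs_of_nonneg (by linarith)]; linarith
      · rw [abs_of_nonpos (by linarith), abs_of_nonpos (by linarith)]; linarith
    calc ‖u' t - u' x‖ = |u' t - u' x| := rfl
      _ ≤ M * |t - x| ^ β := h1
      _ ≤ M * |y - x| ^ β :=
        mul_le_mul_of_nonneg_left (Real.rpow_le_rpow (abs_nonneg _) h2 hβ0.le) hM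
  have key := Convex.norm_image_sub_le_of_norm_hasDerivWithin_le hg' hbound
    (convex_uIcc x y) Set.left_mem_uIcc Set.right_mem_uIcc
  have he : |u y - u x - u' x * (y - x)|
      = ‖(u y - u' x * y) - (u x - u' x * x)‖ := by
    rw [Real.norm_eq_abs]; congr 1; ring
  rw [he]
  calc ‖(u y - u' x * y) - (u x - u' x * x)‖ ≤ M * |y - x| ^ β * ‖y - x‖ := key
    _ = M * |y - x| ^ β * |y - x| := by rw [Real.norm_eq_abs]

/-- Degree-`k` Lagrange interpolation reproduces affine functions when `k ≥ 1`. -/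
lemma lagrange_linear (k : ℕ) (hk : 1 ≤ k) (v : ℕ → ℝ)
    (hv : Set.InjOn v (Finset.range (k+1))) (a b s : ℝ) :
    ∑ l ∈ Finset.range (k+1), (a + b * v l) *
      ∏ i ∈ (Finset.range (k+1)).erase l, (s - v i) / (v l - v i) = a + b * s := by
  classical
  set f : Polynomial ℝ := Polynomial.C b * Polynomial.X + Polynomial.C a with hf
  have hdeg : f.degree < ((Finset.range (k+1)).card : ℕ) := by
    rw [Finset.card_range]
    refine lt_of_le_of_lt Polynomial.degree_linear_le ?_
    exact_mod_cast Nat.lt_succ_of_le hk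
  have key := Lagrange.eq_interpolate (s := Finset.range (k+1)) (v := v) hv hdeg
  have hev := congrArg (Polynomial.eval s) key
  rw [Lagrange.interpolate_apply, Polynomial.eval_finset_sum] at hev
  have heval : ∀ l, Polynomial.eval s (Polynomial.C (f.eval (v l)) *
      Lagrange.basis (Finset.range (k+1)) v l)
      = (a + b * v l) * ∏ i ∈ (Finset.range (k+1)).erase l, (s - v i) / (v l - v i) := by
    intro l
    rw [Polynomial.eval_mul, Polynomial.eval_C]
    congr 1
    · simp [hf]; ring
    · rw [Lagrange.basis, Polynomial.eval_prod]
      refine Finset.prod_congr rfl fun i _ => ?_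
      rw [Lagrange.basisDivisor]
      simp [div_eq_mul_inv]
      ring
  rw [Finset.sum_congr rfl fun l _ => heval l] at hev
  have hfs : Polynomial.eval s f = a + b * s := by simp [hf]; ring
  rw [hfs] at hev
  linarith [hev]

set_option maxHeartbeats 1000000 in
theorem stmt12 (k : ℕ) (hk : 1 ≤ k) (β : ℝ) (hβ0 : 0 < β) (hβ1 : β ≤ 1) :
    ∃ C > 0, ∀ T : ℝ, 0 < T → ∀ u u' : ℝ → ℝ,
      (∀ t ∈ Set.Icc (0:ℝ) T, HasDerivWithinAt u (u' t) (Set.Icc 0 T) t) →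
      ContinuousOn u' (Set.Icc 0 T) →
      ∀ M : ℝ, 0 ≤ M → holderBnd T β M u' →
        ∀ N : ℕ, 0 < N → ∀ τ : ℝ, τ = T / N →
          ∀ j : ℕ, k ≤ j → j ≤ N →
            ∀ s ∈ Set.Icc (((j:ℝ)-1)*τ) ((j:ℝ)*τ),
              |u s - Pik τ u k j s| ≤ C * ((j:ℝ)*τ - s) * τ ^ β * M := by
  have hk1 : (1:ℝ) ≤ (k:ℝ) := by exact_mod_cast hk
  have hk0 : (0:ℝ) < (k:ℝ) := by linarith
  refine ⟨((k:ℝ)+1) * (k:ℝ)^(k+2), by positivity, ?_⟩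
  intro T hT u u' hu hu' M hM hH N hN τ hτ j hjk hjN s hs
  have hN0 : (0:ℝ) < (N:ℝ) := by exact_mod_cast hN
  have hτ0 : 0 < τ := by rw [hτ]; positivity
  have hNτ : (N:ℝ) * τ = T := by rw [hτ]; field_simp
  obtain ⟨hs1, hs2⟩ := hs
  set v : ℕ → ℝ := fun i => ((j:ℝ) - (i:ℝ)) * τ with hv
  have hjk' : (k:ℝ) ≤ (j:ℝ) := by exact_mod_cast hjk
  have hjN' : (j:ℝ) ≤ (N:ℝ) := by exact_mod_cast hjN
  have hsT : s ∈ Set.Icc (0:ℝ) T := by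
    constructor
    · have h1 : 0 ≤ ((j:ℝ)-1)*τ := mul_nonneg (by linarith) hτ0.le
      linarith
    · have h1 : (j:ℝ)*τ ≤ (N:ℝ)*τ := mul_le_mul_of_nonneg_right hjN' hτ0.le
      linarith
  have hvmem : ∀ l, l ≤ k → v l ∈ Set.Icc (0:ℝ) T := by
    intro l hl
    have hlk : (l:ℝ) ≤ k := by exact_mod_cast hl
    constructor
    · exact mul_nonneg (by linarith) hτ0.le
    · have h1 : ((j:ℝ) - l) * τ ≤ (N:ℝ) * τ :=
        mul_le_mul_of_nonneg_right (by linarith) hτ0.le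
      simpa [hv, hNτ] using h1
  have hinj : Set.InjOn v (Finset.range (k+1)) := by
    intro a _ b _ hab
    have h1 : ((j:ℝ) - a) * τ = ((j:ℝ) - b) * τ := hab
    have h2 : (a:ℝ) = b := by
      have := mul_right_cancel₀ hτ0.ne' h1
      linarith
    exact_mod_cast h2
  -- local notation
  set D : ℝ := (j:ℝ)*τ - s with hD
  have hD0 : 0 ≤ D := by simp [hD]; linarith
  have hDτ : D ≤ τ := by simp [hD]; linarith
  -- numerator and denominator bounds
  have hnum : ∀ i : ℕ, i ≤ k → |s - v i| ≤ (k:ℝ) * τ := by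
    intro i hi
    have hik : (i:ℝ) ≤ k := by exact_mod_cast hi
    have h1 : (i:ℝ) * τ ≤ (k:ℝ) * τ := mul_le_mul_of_nonneg_right hik hτ0.le
    have h2 : (0:ℝ) ≤ (i:ℝ) * τ := mul_nonneg (Nat.cast_nonneg i) hτ0.le
    have h3 : τ ≤ (k:ℝ) * τ := le_mul_of_one_le_left hτ0.le hk1
    rw [abs_le]
    constructor
    · simp only [hv]; ring_nf; ring_nf at hs1 hs2; linarith
    · simp only [hv]; ring_nf; ring_nf at hs1 hs2; linarith
  have hden : ∀ l i : ℕ, i ≠ l → τ ≤ |v l - v i| := by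
    intro l i h
    have h1 : v l - v i = ((i:ℝ) - l) * τ := by simp only [hv]; ring
    rw [h1, abs_mul, abs_of_pos hτ0]
    exact le_mul_of_one_le_left hτ0.le (one_le_abs_cast_sub h)
  have hτβ : (0:ℝ) ≤ τ ^ β := (Real.rpow_pos_of_pos hτ0 β).le
  -- the key per-term bound
  have key : ∀ l ∈ Finset.range (k+1),
      |u s - u' s * s + u' s * v l - u (v l)| *
        |∏ i ∈ (Finset.range (k+1)).erase l, (s - v i) / (v l - v i)|
      ≤ (k:ℝ)^(k+2) * D * τ^β * M := by
    intro l hl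
    have hlk : l ≤ k := Nat.lt_succ_iff.mp (Finset.mem_range.mp hl)
    have htay : |u (v l) - u s - u' s * (v l - s)| ≤ M * |v l - s| ^ β * |v l - s| :=
      taylor_bnd hβ0 hu hM hH hsT (hvmem l hlk)
    have habs : |u s - u' s * s + u' s * v l - u (v l)|
        = |u (v l) - u s - u' s * (v l - s)| := by
      rw [show u s - u' s * s + u' s * v l - u (v l)
        = -(u (v l) - u s - u' s * (v l - s)) by ring, abs_neg]
    rw [habs, Finset.abs_prod]
    have hkpow1 : (1:ℝ) ≤ (k:ℝ)^(k+2) := one_le_pow₀ hk1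
    rcases Nat.eq_zero_or_pos l with hl0 | hl0
    · -- l = 0 case
      subst hl0
      have hv0 : v 0 = (j:ℝ) * τ := by simp [hv]
      have hvd : |v 0 - s| = D := by rw [hv0, hD, abs_of_nonneg (by simp [hD] at hD0 ⊢; linarith)]
      have he1 : |u (v 0) - u s - u' s * (v 0 - s)| ≤ M * τ ^ β * D := by
        refine le_trans htay ?_
        rw [hvd]
        have h1 : D ^ β ≤ τ ^ β := Real.rpow_le_rpow hD0 hDτ hβ0.le
        exact mul_le_mul_of_nonneg_right (mul_le_mul_of_nonneg_left h1 hM) hD0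
      have he2 : ∏ i ∈ (Finset.range (k+1)).erase 0, |(s - v i) / (v 0 - v i)| ≤ 1 := by
        refine Finset.prod_le_one (fun i _ => abs_nonneg _) (fun i hi => ?_)
        obtain ⟨hi0, hir⟩ := Finset.mem_erase.mp hi
        have hik : i ≤ k := Nat.lt_succ_iff.mp (Finset.mem_range.mp hir)
        have hi1 : (1:ℝ) ≤ (i:ℝ) := by exact_mod_cast Nat.one_le_iff_ne_zero.mpr hi0
        have hd : v 0 - v i = (i:ℝ) * τ := by simp only [hv]; ring
        have hdp : (0:ℝ) < (i:ℝ) * τ := mul_pos (by linarith) hτ0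
        have hiτ : τ ≤ (i:ℝ) * τ := le_mul_of_one_le_left hτ0.le hi1
        rw [abs_div, hd, abs_of_pos hdp, div_le_one hdp, abs_le]
        constructor
        · simp only [hv]; ring_nf; ring_nf at hs1 hs2; linarith
        · simp only [hv]; ring_nf; ring_nf at hs1 hs2; linarith
      calc |u (v 0) - u s - u' s * (v 0 - s)| *
            ∏ i ∈ (Finset.range (k+1)).erase 0, |(s - v i) / (v 0 - v i)|
          ≤ (M * τ ^ β * D) * 1 := by
            refine mul_le_mul he1 he2 (Finset.prod_nonneg fun i _ => abs_nonneg _) ?_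
            positivity
        _ = 1 * (M * τ ^ β * D) := by ring
        _ ≤ (k:ℝ)^(k+2) * (M * τ ^ β * D) :=
            mul_le_mul_of_nonneg_right hkpow1 (mul_nonneg (mul_nonneg hM hτβ) hD0)
        _ = (k:ℝ)^(k+2) * D * τ^β * M := by ring
    · -- l ≥ 1 case
      have hl1 : (1:ℝ) ≤ (l:ℝ) := by exact_mod_cast hl0
      have he1 : |u (v l) - u s - u' s * (v l - s)| ≤ M * ((k:ℝ) * τ ^ β) * ((k:ℝ) * τ) := by
        refine le_trans htay ?_
        have h1 : |v l - s| ≤ (k:ℝ) * τ := by rw [abs_sub_comm]; exact hnum l hlk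
        have h2 : |v l - s| ^ β ≤ (k:ℝ) * τ ^ β := by
          calc |v l - s| ^ β ≤ ((k:ℝ) * τ) ^ β :=
              Real.rpow_le_rpow (abs_nonneg _) h1 hβ0.le
            _ = (k:ℝ) ^ β * τ ^ β := Real.mul_rpow hk0.le hτ0.le
            _ ≤ (k:ℝ) * τ ^ β := by
                have : (k:ℝ) ^ β ≤ (k:ℝ) ^ (1:ℝ) :=
                  Real.rpow_le_rpow_of_exponent_le hk1 hβ1
                rw [Real.rpow_one] at this
                exact mul_le_mul_of_nonneg_right this hτβ
        exact mul_le_mul (mul_le_mul_of_nonneg_left h2 hM) h1 (abs_nonneg _)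
          (mul_nonneg hM (mul_nonneg hk0.le hτβ))
      -- product bound
      have h0mem : (0:ℕ) ∈ (Finset.range (k+1)).erase l :=
        Finset.mem_erase.mpr ⟨hl0.ne, Finset.mem_range.mpr (Nat.succ_pos k)⟩
      have hsplit : ∏ i ∈ (Finset.range (k+1)).erase l, |(s - v i) / (v l - v i)|
          = |(s - v 0) / (v l - v 0)| *
            ∏ i ∈ ((Finset.range (k+1)).erase l).erase 0, |(s - v i) / (v l - v i)| :=
        (Finset.mul_prod_erase _ _ h0mem).symm
      have hf0 : |(s - v 0) / (v l - v 0)| ≤ D / τ := by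
        rw [abs_div]
        have hn : |s - v 0| = D := by
          simp only [hv, hD]
          rw [abs_of_nonpos (by push_cast; linarith)]
          push_cast; ring
        rw [hn]
        exact div_le_div₀ hD0 le_rfl hτ0 (hden l 0 hl0.ne)
      have hrest : ∏ i ∈ ((Finset.range (k+1)).erase l).erase 0, |(s - v i) / (v l - v i)|
          ≤ (k:ℝ) ^ k := by
        have hb : ∀ i ∈ ((Finset.range (k+1)).erase l).erase 0,
            |(s - v i) / (v l - v i)| ≤ (k:ℝ) := by
          intro i hi
          obtain ⟨hi0, hil⟩ := Finset.mem_erase.mp hi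
          obtain ⟨hil', hir⟩ := Finset.mem_erase.mp hil
          have hik : i ≤ k := Nat.lt_succ_iff.mp (Finset.mem_range.mp hir)
          rw [abs_div]
          calc |s - v i| / |v l - v i| ≤ ((k:ℝ) * τ) / τ :=
              div_le_div₀ (by positivity) (hnum i hik) hτ0 (hden l i hil')
            _ = (k:ℝ) := mul_div_cancel_right₀ _ hτ0.ne'
        calc ∏ i ∈ ((Finset.range (k+1)).erase l).erase 0, |(s - v i) / (v l - v i)|
            ≤ ∏ _i ∈ ((Finset.range (k+1)).erase l).erase 0, (k:ℝ) :=
              Finset.prod_le_prod (fun i _ => abs_nonneg _) hb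
          _ = (k:ℝ) ^ (((Finset.range (k+1)).erase l).erase 0).card :=
              Finset.prod_const _
          _ ≤ (k:ℝ) ^ k := by
              refine pow_le_pow_right₀ hk1 ?_
              calc (((Finset.range (k+1)).erase l).erase 0).card
                  ≤ ((Finset.range (k+1)).erase l).card := Finset.card_erase_le
                _ = k := by
                    rw [Finset.card_erase_of_mem (Finset.mem_range.mpr
                      (Nat.lt_succ_of_le hlk)), Finset.card_range]
                    omega
      have hprod : ∏ i ∈ (Finset.range (k+1)).erase l, |(s - v i) / (v l - v i)|
          ≤ (D / τ) * (k:ℝ) ^ k := by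
        rw [hsplit]
        exact mul_le_mul hf0 hrest (Finset.prod_nonneg fun i _ => abs_nonneg _)
          (by positivity)
      calc |u (v l) - u s - u' s * (v l - s)| *
            ∏ i ∈ (Finset.range (k+1)).erase l, |(s - v i) / (v l - v i)|
          ≤ (M * ((k:ℝ) * τ ^ β) * ((k:ℝ) * τ)) * ((D / τ) * (k:ℝ) ^ k) := by
            refine mul_le_mul he1 hprod (Finset.prod_nonneg fun i _ => abs_nonneg _) ?_
            positivity
        _ = (k:ℝ)^(k+2) * D * τ^β * M := by
            field_simp
            ring
  -- the interpolation error identity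
  have hPik : Pik τ u k j s = ∑ l ∈ Finset.range (k+1),
      u (v l) * ∏ i ∈ (Finset.range (k+1)).erase l, (s - v i) / (v l - v i) := rfl
  have hid := lagrange_linear k hk v hinj (u s - u' s * s) (u' s) s
  have hus : u s = ∑ l ∈ Finset.range (k+1), (u s - u' s * s + u' s * v l) *
      ∏ i ∈ (Finset.range (k+1)).erase l, (s - v i) / (v l - v i) := by
    rw [hid]; ring
  have hrw : u s - Pik τ u k j s = ∑ l ∈ Finset.range (k+1),
      (u s - u' s * s + u' s * v l - u (v l)) *
      ∏ i ∈ (Finset.range (k+1)).erase l, (s - v i) / (v l - v i) := by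
    rw [hPik]
    conv_lhs => rw [hus]
    rw [← Finset.sum_sub_distrib]
    exact Finset.sum_congr rfl fun l _ => by ring
  calc |u s - Pik τ u k j s|
      = |∑ l ∈ Finset.range (k+1), (u s - u' s * s + u' s * v l - u (v l)) *
        ∏ i ∈ (Finset.range (k+1)).erase l, (s - v i) / (v l - v i)| := by rw [hrw]
    _ ≤ ∑ l ∈ Finset.range (k+1), |(u s - u' s * s + u' s * v l - u (v l)) *
        ∏ i ∈ (Finset.range (k+1)).erase l, (s - v i) / (v l - v i)| :=
        Finset.abs_sum_le_sum_abs _ _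
    _ ≤ ∑ l ∈ Finset.range (k+1), (k:ℝ)^(k+2) * D * τ^β * M := by
        refine Finset.sum_le_sum fun l hl => ?_
        rw [abs_mul]
        exact key l hl
    _ = ((k:ℝ)+1) * (k:ℝ)^(k+2) * ((j:ℝ)*τ - s) * τ^β * M := by
        rw [Finset.sum_const, Finset.card_range, nsmul_eq_mul, hD]
        push_cast
        ring
end

section
/- Let T > 0, 0 < β ≤ 1, and let k, m be integers with 2 ≤ m ≤ k. Let u ∈ C^{m,β}([0,T]). There exists a constant C > 0 depending only on u, k, m, β and T (but not on τ, j or s) such that for every N ∈ ℕ with τ = T/N, every integer j with k ≤ j ≤ N, and every s ∈ [t_{j−1}, t_j], |u(s) − Π_{k,j}u(s)| ≤ C (t_j − s) ( τ^{m−1+β} [u^{(m)}]_{C^{0,β}[0,T]} + τ^m ). -/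
open Set
open scoped Nat

lemma iterDeriv_sub_interval {f : ℝ → ℝ} {n : ℕ} {A B a c : ℝ}
    (hf : ContDiffOn ℝ n f (Set.Icc A B)) (hA : A ≤ a) (hB : c ≤ B) (hac : a < c) :
    ∀ i : ℕ, i ≤ n → ∀ x ∈ Set.Icc a c,
      iteratedDerivWithin i f (Set.Icc a c) x = iteratedDerivWithin i f (Set.Icc A B) x := by
  intro i
  induction i with
  | zero => intro _ x _; simp [iteratedDerivWithin_zero]
  | succ i IH =>
    intro hin x hx
    have hAB : A < B := lt_of_le_of_lt hA (lt_of_lt_of_le hac hB)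
    have hsub : Set.Icc a c ⊆ Set.Icc A B := Set.Icc_subset_Icc hA hB
    have hu1 : UniqueDiffOn ℝ (Set.Icc a c) := uniqueDiffOn_Icc hac
    have hu2 : UniqueDiffOn ℝ (Set.Icc A B) := uniqueDiffOn_Icc hAB
    have hi : i ≤ n := le_trans (Nat.le_succ i) hin
    have hdiff : DifferentiableOn ℝ (iteratedDerivWithin i f (Set.Icc A B)) (Set.Icc A B) :=
      hf.differentiableOn_iteratedDerivWithin
        (by exact_mod_cast Nat.lt_of_lt_of_le (Nat.lt_succ_self i) hin) hu2
    rw [iteratedDerivWithin_succ, iteratedDerivWithin_succ]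
    rw [derivWithin_congr (fun y hy => IH hi y hy) (IH hi x hx)]
    exact (((hdiff x (hsub hx)).hasDerivWithinAt).mono hsub).derivWithin (hu1 x hx)

lemma taylor_holder {T M β : ℝ} (hβ0 : 0 < β) (hM0 : 0 ≤ M) {f : ℝ → ℝ} {p : ℕ}
    (hf : ContDiffOn ℝ (p+1) f (Set.Icc 0 T))
    (hM : ∀ x ∈ Set.Icc (0:ℝ) T, ∀ y ∈ Set.Icc (0:ℝ) T,
      |iteratedDerivWithin (p+1) f (Set.Icc 0 T) x - iteratedDerivWithin (p+1) f (Set.Icc 0 T) y|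
        ≤ M * |x - y| ^ β)
    {a c : ℝ} (h0a : 0 ≤ a) (hcT : c ≤ T) (hac : a < c) :
    ∀ x ∈ Set.Icc a c,
      |f x - (∑ i ∈ Finset.range (p+2),
        iteratedDerivWithin i f (Set.Icc 0 T) a / (i ! : ℝ) * (x - a)^i)|
      ≤ M * (x - a) ^ β * (x - a)^(p+1) / (p+1)! := by
  intro x hx
  have hT : (0:ℝ) < T := lt_of_le_of_lt h0a (lt_of_lt_of_le hac hcT)
  have haT : a ∈ Set.Icc (0:ℝ) T := ⟨h0a, le_trans hac.le hcT⟩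
  rcases eq_or_lt_of_le hx.1 with heq | hax
  · -- x = a
    rw [← heq]
    have : ∑ i ∈ Finset.range (p+2),
        iteratedDerivWithin i f (Set.Icc 0 T) a / i ! * (a - a)^i = f a := by
      rw [Finset.sum_eq_single 0]
      · simp [iteratedDerivWithin_zero]
      · intro i _ hi
        simp [sub_self, zero_pow hi]
      · simp
    rw [this, sub_self, abs_zero, sub_self]
    have : (0:ℝ) ^ β = 0 := Real.zero_rpow (ne_of_gt hβ0)
    rw [this]
    simp
  · -- a < x
    have hxT : x ≤ T := le_trans hx.2 hcT
    have hfint : ContDiffOn ℝ (p+1) f (Set.Icc a x) :=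
      hf.mono (Set.Icc_subset_Icc h0a hxT)
    have hconv := iterDeriv_sub_interval hf h0a hxT hax
    have hf' : DifferentiableOn ℝ (iteratedDerivWithin p f (Set.Icc a x)) (Set.Ioo a x) :=
      (hfint.differentiableOn_iteratedDerivWithin (by exact_mod_cast Nat.lt_succ_self p)
        (uniqueDiffOn_Icc hax)).mono Set.Ioo_subset_Icc_self
    obtain ⟨ξ, hξ, hrem⟩ := taylor_mean_remainder_lagrange hax.ne
      (by rw [Set.uIcc_of_le hax.le]; exact hfint.of_le (by exact_mod_cast Nat.le_succ p))
      (by rw [Set.uIcc_of_le hax.le, Set.uIoo_of_le hax.le]; exact hf')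
    rw [Set.uIoo_of_le hax.le] at hξ
    rw [Set.uIcc_of_le hax.le] at hrem
    have hξT : ξ ∈ Set.Icc (0:ℝ) T := ⟨le_trans h0a hξ.1.le, le_trans hξ.2.le hxT⟩
    have hξax : ξ ∈ Set.Icc a x := ⟨hξ.1.le, hξ.2.le⟩
    have htay : taylorWithinEval f p (Set.Icc a x) a x =
        ∑ i ∈ Finset.range (p+1),
          iteratedDerivWithin i f (Set.Icc 0 T) a / (i ! : ℝ) * (x - a)^i := by
      rw [taylor_within_apply]
      apply Finset.sum_congr rfl
      intro i hi
      rw [hconv i (le_trans (Nat.le_of_lt_succ (Finset.mem_range.1 hi)) (Nat.le_succ p)) a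
        ⟨le_refl a, hax.le⟩]
      rw [smul_eq_mul]
      ring
    have key : f x - (∑ i ∈ Finset.range (p+2),
        iteratedDerivWithin i f (Set.Icc 0 T) a / (i ! : ℝ) * (x - a)^i)
        = (iteratedDerivWithin (p+1) f (Set.Icc 0 T) ξ
            - iteratedDerivWithin (p+1) f (Set.Icc 0 T) a) * (x - a)^(p+1) / (p+1)! := by
      rw [Finset.sum_range_succ, ← htay]
      rw [hconv (p+1) le_rfl ξ hξax] at hrem
      have : f x - (taylorWithinEval f p (Set.Icc a x) a x
          + iteratedDerivWithin (p+1) f (Set.Icc 0 T) a / ((p+1)!) * (x - a)^(p+1))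
          = (f x - taylorWithinEval f p (Set.Icc a x) a x)
            - iteratedDerivWithin (p+1) f (Set.Icc 0 T) a / ((p+1)!) * (x - a)^(p+1) := by
        ring
      rw [this, hrem]
      ring
    rw [key]
    rw [abs_div, abs_mul]
    have hfac : |((p+1)! : ℝ)| = ((p+1)! : ℝ) := abs_of_pos (by positivity)
    have hxa : (0:ℝ) ≤ x - a := by linarith
    have hpow : |(x - a)^(p+1)| = (x - a)^(p+1) := abs_of_nonneg (by positivity)
    rw [hfac, hpow]
    have habs : |ξ - a| ^ β ≤ (x - a) ^ β := by
      apply Real.rpow_le_rpow (abs_nonneg _) _ hβ0.le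
      rw [abs_of_pos (by linarith [hξ.1] : (0:ℝ) < ξ - a)]
      linarith [hξ.2]
    have hmain : |iteratedDerivWithin (p+1) f (Set.Icc 0 T) ξ
        - iteratedDerivWithin (p+1) f (Set.Icc 0 T) a| ≤ M * (x - a) ^ β :=
      le_trans (hM ξ hξT a haT) (mul_le_mul_of_nonneg_left habs hM0)
    gcongr

lemma lagrange_repro {τ : ℝ} (hτ : 0 < τ) (k : ℕ) (j : ℕ) (P : Polynomial ℝ)
    (hdeg : P.degree < (k+1 : ℕ)) (s : ℝ) :
    ∑ l ∈ Finset.range (k + 1), P.eval (((j:ℝ) - (l:ℝ)) * τ) *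
      ∏ i ∈ (Finset.range (k + 1)).erase l,
        (s - ((j:ℝ) - (i:ℝ)) * τ) / (((j:ℝ) - (l:ℝ)) * τ - ((j:ℝ) - (i:ℝ)) * τ)
    = P.eval s := by
  set v : ℕ → ℝ := fun i => ((j:ℝ) - (i:ℝ)) * τ with hv
  have hinj : Set.InjOn v (Finset.range (k+1)) := by
    intro i _ i' _ h
    simp only [hv] at h
    have h2 : (j:ℝ) - (i:ℝ) = (j:ℝ) - (i':ℝ) := mul_right_cancel₀ (ne_of_gt hτ) h
    have : (i:ℝ) = (i':ℝ) := by linarith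
    exact_mod_cast this
  have h1 := Lagrange.eq_interpolate (v := v) (s := Finset.range (k+1)) hinj
    (by rwa [Finset.card_range])
  have h2 := congrArg (Polynomial.eval s) h1
  rw [Lagrange.interpolate_apply, Polynomial.eval_finset_sum] at h2
  rw [h2]
  apply Finset.sum_congr rfl
  intro l _
  rw [Polynomial.eval_mul, Polynomial.eval_C, Lagrange.basis, Polynomial.eval_prod]
  congr 1
  apply Finset.prod_congr rfl
  intro i _
  simp only [Lagrange.basisDivisor, Polynomial.eval_mul, Polynomial.eval_C, Polynomial.eval_sub,
    Polynomial.eval_X]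
  rw [div_eq_inv_mul]

theorem stmt13 (T : ℝ) (hT : 0 < T) (β : ℝ) (hβ0 : 0 < β) (hβ1 : β ≤ 1)
    (k m : ℕ) (hm2 : 2 ≤ m) (hmk : m ≤ k)
    (u : ℝ → ℝ) (hreg : ContDiffOn ℝ m u (Set.Icc 0 T)) :
    ∃ C > 0, ∀ M : ℝ, 0 ≤ M →
      holderBnd T β M (iteratedDerivWithin m u (Set.Icc 0 T)) →
      ∀ N : ℕ, 0 < N → ∀ τ : ℝ, τ = T / N →
        ∀ j : ℕ, k ≤ j → j ≤ N →
          ∀ s ∈ Set.Icc (((j:ℝ)-1)*τ) ((j:ℝ)*τ),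
            |u s - Pik τ u k j s| ≤
              C * ((j:ℝ)*τ - s) * (τ ^ ((m:ℝ) - 1 + β) * M + τ ^ (m:ℕ)) := by
  obtain ⟨p, rfl⟩ : ∃ p, m = p + 2 := ⟨m - 2, by omega⟩
  have hk0 : 0 < k := by omega
  have hk0' : (0:ℝ) < k := by exact_mod_cast hk0
  refine ⟨3 * (k:ℝ)^(k + p + 4), by positivity, ?_⟩
  intro M hM0 hhold N hN τ hτdef j hkj hjN s hs
  have hτ : 0 < τ := by rw [hτdef]; exact div_pos hT (by exact_mod_cast hN)
  have hk1 : (1:ℝ) ≤ k := by exact_mod_cast hk0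
  set a : ℝ := ((j:ℝ) - k) * τ with ha
  set c : ℝ := (j:ℝ) * τ with hc
  have hjk : (k:ℝ) ≤ (j:ℝ) := by exact_mod_cast hkj
  have h0a : 0 ≤ a := mul_nonneg (by linarith) hτ.le
  have hNτ : (N:ℝ) * τ = T := by rw [hτdef]; field_simp
  have hcT : c ≤ T := by
    rw [← hNτ, hc]
    exact mul_le_mul_of_nonneg_right (by exact_mod_cast hjN) hτ.le
  have hac : a < c := by rw [ha, hc]; nlinarith
  have hsc : s ≤ c := hs.2
  have has : a ≤ s :=
    le_trans (mul_le_mul_of_nonneg_right (by linarith) hτ.le) hs.1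
  have hsac : s ∈ Set.Icc a c := ⟨has, hsc⟩
  have hca : c - a = k * τ := by rw [ha, hc]; ring
  have hcs : 0 ≤ c - s := by linarith
  -- notation
  set G : ℕ → ℝ → ℝ := fun i => iteratedDerivWithin i u (Set.Icc 0 T) with hG
  set v : ℕ → ℝ := fun i => ((j:ℝ) - (i:ℝ)) * τ with hv
  set L : ℕ → ℝ := fun l => ∏ i ∈ (Finset.range (k+1)).erase l,
    (s - ((j:ℝ) - (i:ℝ)) * τ) / (((j:ℝ) - (l:ℝ)) * τ - ((j:ℝ) - (i:ℝ)) * τ) with hL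
  set P : ℝ → ℝ := fun x => ∑ i ∈ Finset.range (p+3), G i a / (i ! : ℝ) * (x - a)^i with hP
  set Q : ℝ → ℝ := fun x => ∑ i ∈ Finset.range (p+2), G (i+1) a / (i ! : ℝ) * (x - a)^i with hQ
  set r : ℝ → ℝ := fun x => u x - P x with hr
  set E : ℝ := τ ^ ((p:ℝ) + 1 + β) with hE
  have hE0 : 0 ≤ E := le_of_lt (Real.rpow_pos_of_pos hτ _)
  -- main identity
  have main_id : u s - Pik τ u k j s
      = ∑ l ∈ Finset.range (k+1), (r s - r (v l)) * L l := by
    classical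
    set Ppoly : Polynomial ℝ := ∑ i ∈ Finset.range (p+3),
      Polynomial.C (G i a / (i ! : ℝ)) * (Polynomial.X - Polynomial.C a)^i with hPp
    have hPeval : ∀ x, Ppoly.eval x = P x := by
      intro x
      rw [hPp, Polynomial.eval_finset_sum]
      apply Finset.sum_congr rfl
      intro i _
      simp [Polynomial.eval_mul, Polynomial.eval_pow]
    have hPdeg : Ppoly.degree < ((k+1:ℕ) : WithBot ℕ) := by
      apply lt_of_le_of_lt (Polynomial.degree_sum_le _ _)
      rw [Finset.sup_lt_iff (by exact_mod_cast bot_lt_iff_ne_bot.2 (by simp) : (⊥:WithBot ℕ) < ((k+1:ℕ) : WithBot ℕ))]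
      intro i hi
      apply lt_of_le_of_lt (Polynomial.degree_mul_le _ _)
      have h1 : (Polynomial.C (G i a / (i ! : ℝ))).degree ≤ 0 := Polynomial.degree_C_le
      have h2 : ((Polynomial.X - Polynomial.C a)^i : Polynomial ℝ).degree ≤ (i : WithBot ℕ) := by
        apply le_trans (Polynomial.degree_pow_le _ _)
        simp [Polynomial.degree_X_sub_C]
      have hik : i ≤ k := by
        have := Finset.mem_range.1 hi; omega
      calc (Polynomial.C (G i a / (i ! : ℝ))).degree
            + ((Polynomial.X - Polynomial.C a)^i : Polynomial ℝ).degree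
          ≤ 0 + (i : WithBot ℕ) := add_le_add h1 h2
        _ = (i : WithBot ℕ) := zero_add _
        _ < ((k+1:ℕ) : WithBot ℕ) := by exact_mod_cast Nat.lt_succ_of_le hik
    have hsumL : ∑ l ∈ Finset.range (k+1), L l = 1 := by
      have h := lagrange_repro hτ k j (Polynomial.C 1)
        (lt_of_le_of_lt Polynomial.degree_C_le (by exact_mod_cast k.succ_pos)) s
      simpa [hL] using h
    have hsumP : ∑ l ∈ Finset.range (k+1), P (v l) * L l = P s := by
      have h := lagrange_repro hτ k j Ppoly hPdeg s
      simp only [hPeval] at h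
      simpa [hL, hv] using h
    have hPik : Pik τ u k j s = ∑ l ∈ Finset.range (k+1), u (v l) * L l := by
      simp [Pik, hL, hv]
    rw [hPik]
    have expand : ∀ l ∈ Finset.range (k+1),
        (r s - r (v l)) * L l = r s * L l - u (v l) * L l + P (v l) * L l := by
      intro l _; simp only [hr]; ring
    rw [Finset.sum_congr rfl expand, Finset.sum_add_distrib, Finset.sum_sub_distrib,
      ← Finset.mul_sum, hsumL, hsumP, mul_one]
    simp only [hr]; ring
  -- Taylor bound for u
  have haT : a ∈ Set.Icc (0:ℝ) T := ⟨h0a, le_trans hac.le hcT⟩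
  have hfacge : ∀ q : ℕ, (1:ℝ) ≤ (q ! : ℝ) := fun q => by
    exact_mod_cast Nat.one_le_iff_ne_zero.2 (Nat.factorial_ne_zero q)
  have hEτ : τ ^ β * τ ^ (p+1) = E := by
    rw [hE, ← Real.rpow_natCast τ (p+1), ← Real.rpow_add hτ]
    congr 1
    push_cast
    ring
  have hrE1 : ∀ x ∈ Set.Icc a c, |r x| ≤ M * (x - a) ^ β * (x - a)^(p+2) / (p+2)! := by
    intro x hx
    have h := taylor_holder (p := p+1) hβ0 hM0 hreg hhold h0a hcT hac x hx
    simpa [hr, hP, hG] using h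
  -- bound on |r| by constants
  have hkβ : (k:ℝ) ^ β ≤ (k:ℝ) := by
    have := Real.rpow_le_rpow_of_exponent_le hk1 hβ1
    rwa [Real.rpow_one] at this
  have hrbound : ∀ x ∈ Set.Icc a c, |r x| ≤ M * (k:ℝ)^(p+3) * E * τ := by
    intro x hx
    have hxa0 : (0:ℝ) ≤ x - a := by linarith [hx.1]
    have hca0 : (0:ℝ) ≤ c - a := by linarith
    have hxca : x - a ≤ c - a := by linarith [hx.2]
    have h1 : |r x| ≤ M * (x - a) ^ β * (x - a)^(p+2) := by
      refine le_trans (hrE1 x hx) (div_le_self ?_ (hfacge _))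
      exact mul_nonneg (mul_nonneg hM0 (Real.rpow_nonneg hxa0 _)) (pow_nonneg hxa0 _)
    have h2 : M * (x - a) ^ β * (x - a)^(p+2) ≤ M * (c - a) ^ β * (c - a)^(p+2) := by
      have hr1 : (x - a) ^ β ≤ (c - a) ^ β := Real.rpow_le_rpow hxa0 hxca hβ0.le
      have hr2 : (x - a)^(p+2) ≤ (c - a)^(p+2) := pow_le_pow_left₀ hxa0 hxca _
      have := mul_le_mul_of_nonneg_left hr1 hM0
      exact mul_le_mul this hr2 (pow_nonneg hxa0 _)
        (mul_nonneg hM0 (Real.rpow_nonneg hca0 _))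
    have h3 : M * (c - a) ^ β * (c - a)^(p+2)
        = M * ((k:ℝ)^β * τ^β) * ((k:ℝ)^(p+2) * τ^(p+2)) := by
      rw [hca, Real.mul_rpow (le_of_lt hk0') hτ.le, mul_pow]
    have h4 : M * ((k:ℝ)^β * τ^β) * ((k:ℝ)^(p+2) * τ^(p+2))
        ≤ M * ((k:ℝ) * τ^β) * ((k:ℝ)^(p+2) * τ^(p+2)) := by
      have hτβ : (0:ℝ) ≤ τ ^ β := Real.rpow_nonneg hτ.le _
      have := mul_le_mul_of_nonneg_right hkβ hτβ
      have := mul_le_mul_of_nonneg_left this hM0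
      exact mul_le_mul_of_nonneg_right this (by positivity)
    have h5 : M * ((k:ℝ) * τ^β) * ((k:ℝ)^(p+2) * τ^(p+2))
        = M * (k:ℝ)^(p+3) * E * τ := by
      rw [← hEτ]; ring
    linarith
  -- derivative (MVT) bound
  have hucd : ContDiffOn ℝ ((p:ℕ∞)+2) u (Set.Icc 0 T) := by exact_mod_cast hreg
  have hg1cd : ContDiffOn ℝ (p+1) (derivWithin u (Set.Icc 0 T)) (Set.Icc 0 T) := by
    apply hreg.derivWithin (uniqueDiffOn_Icc hT)
    exact_mod_cast le_refl (p+2 : ℕ)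
  have hsucc : ∀ i : ℕ, ∀ y ∈ Set.Icc (0:ℝ) T,
      iteratedDerivWithin i (derivWithin u (Set.Icc 0 T)) (Set.Icc 0 T) y = G (i+1) y := by
    intro i y hy
    exact (congrFun (iteratedDerivWithin_succ' (n := i) (f := u) (s := Set.Icc 0 T)) y).symm
  have hg1E2 : ∀ x ∈ Set.Icc a c,
      |derivWithin u (Set.Icc 0 T) x - Q x| ≤ M * (x-a)^β * (x-a)^(p+1) / (p+1)! := by
    intro x hx
    have hold' : ∀ y ∈ Set.Icc (0:ℝ) T, ∀ z ∈ Set.Icc (0:ℝ) T,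
        |iteratedDerivWithin (p+1) (derivWithin u (Set.Icc 0 T)) (Set.Icc 0 T) y
          - iteratedDerivWithin (p+1) (derivWithin u (Set.Icc 0 T)) (Set.Icc 0 T) z|
        ≤ M * |y - z| ^ β := by
      intro y hy z hz
      rw [hsucc (p+1) y hy, hsucc (p+1) z hz]
      exact hhold y hy z hz
    have h := taylor_holder (p := p) hβ0 hM0 hg1cd hold' h0a hcT hac x hx
    have hQeq : (∑ i ∈ Finset.range (p+2),
        iteratedDerivWithin i (derivWithin u (Set.Icc 0 T)) (Set.Icc 0 T) a / (i ! : ℝ)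
          * (x - a)^i) = Q x := by
      apply Finset.sum_congr rfl
      intro i _
      rw [hsucc i a haT]
    rwa [hQeq] at h
  have hQb : ∀ x ∈ Set.Icc s c, |derivWithin u (Set.Icc 0 T) x - Q x|
      ≤ M * (k:ℝ)^(p+2) * E := by
    intro x hx
    have hx' : x ∈ Set.Icc a c := ⟨le_trans has hx.1, hx.2⟩
    have hxa0 : (0:ℝ) ≤ x - a := by linarith [hx'.1]
    have hca0 : (0:ℝ) ≤ c - a := by linarith
    have hxca : x - a ≤ c - a := by linarith [hx'.2]
    have h1 : |derivWithin u (Set.Icc 0 T) x - Q x| ≤ M * (x - a) ^ β * (x - a)^(p+1) := by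
      refine le_trans (hg1E2 x hx') (div_le_self ?_ (hfacge _))
      exact mul_nonneg (mul_nonneg hM0 (Real.rpow_nonneg hxa0 _)) (pow_nonneg hxa0 _)
    have h2 : M * (x - a) ^ β * (x - a)^(p+1) ≤ M * (c - a) ^ β * (c - a)^(p+1) := by
      have hr1 : (x - a) ^ β ≤ (c - a) ^ β := Real.rpow_le_rpow hxa0 hxca hβ0.le
      have hr2 : (x - a)^(p+1) ≤ (c - a)^(p+1) := pow_le_pow_left₀ hxa0 hxca _
      exact mul_le_mul (mul_le_mul_of_nonneg_left hr1 hM0) hr2 (pow_nonneg hxa0 _)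
        (mul_nonneg hM0 (Real.rpow_nonneg hca0 _))
    have h3 : M * (c - a) ^ β * (c - a)^(p+1)
        = M * ((k:ℝ)^β * τ^β) * ((k:ℝ)^(p+1) * τ^(p+1)) := by
      rw [hca, Real.mul_rpow (le_of_lt hk0') hτ.le, mul_pow]
    have h4 : M * ((k:ℝ)^β * τ^β) * ((k:ℝ)^(p+1) * τ^(p+1))
        ≤ M * ((k:ℝ) * τ^β) * ((k:ℝ)^(p+1) * τ^(p+1)) := by
      have hτβ : (0:ℝ) ≤ τ ^ β := Real.rpow_nonneg hτ.le _
      have h5 := mul_le_mul_of_nonneg_right hkβ hτβ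
      have h6 := mul_le_mul_of_nonneg_left h5 hM0
      exact mul_le_mul_of_nonneg_right h6 (by positivity)
    have h7 : M * ((k:ℝ) * τ^β) * ((k:ℝ)^(p+1) * τ^(p+1)) = M * (k:ℝ)^(p+2) * E := by
      rw [← hEτ]; ring
    linarith
  have hrsc : |r s - r c| ≤ M * (k:ℝ)^(p+2) * E * (c - s) := by
    have hder : ∀ x ∈ Set.Icc s c,
        HasDerivWithinAt r (derivWithin u (Set.Icc 0 T) x - Q x) (Set.Icc s c) x := by
      intro x hx
      have hxT : x ∈ Set.Icc (0:ℝ) T :=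
        ⟨le_trans h0a (le_trans has hx.1), le_trans hx.2 hcT⟩
      have hu1 : HasDerivWithinAt u (derivWithin u (Set.Icc 0 T) x) (Set.Icc s c) x := by
        have hdu : DifferentiableWithinAt ℝ u (Set.Icc 0 T) x := by
          refine (hreg.differentiableOn ?_) x hxT
          simp
        exact hdu.hasDerivWithinAt.mono (Set.Icc_subset_Icc (le_trans h0a has) hcT)
      have hPd : HasDerivAt P (Q x) x := by
        have h1 : HasDerivAt P (∑ i ∈ Finset.range (p+3),
            G i a / (i ! : ℝ) * ((i:ℝ) * (x - a)^(i-1) * 1)) x := by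
          apply HasDerivAt.fun_sum
          intro i _
          exact (((hasDerivAt_id x).sub_const a).pow i).const_mul _
        have h2 : (∑ i ∈ Finset.range (p+3),
            G i a / (i ! : ℝ) * ((i:ℝ) * (x - a)^(i-1) * 1)) = Q x := by
          rw [Finset.sum_range_succ']
          simp only [Nat.cast_zero, zero_mul, mul_zero, add_zero, Nat.add_sub_cancel,
            Nat.cast_add, Nat.cast_one, mul_one]
          apply Finset.sum_congr rfl
          intro i _
          have hfne : ((i ! : ℕ) : ℝ) ≠ 0 := by
            exact_mod_cast Nat.factorial_ne_zero i
          have hine : ((i:ℝ) + 1) ≠ 0 := by positivity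
          rw [Nat.factorial_succ]
          push_cast
          field_simp
        rwa [h2] at h1
      exact hu1.sub hPd.hasDerivWithinAt
    have hmvt := (convex_Icc s c).norm_image_sub_le_of_norm_hasDerivWithin_le hder
      (fun x hx => by rw [Real.norm_eq_abs]; exact hQb x hx)
      (Set.right_mem_Icc.2 hsc) (Set.left_mem_Icc.2 hsc)
    rw [Real.norm_eq_abs, Real.norm_eq_abs] at hmvt
    calc |r s - r c| ≤ (M * (k:ℝ)^(p+2) * E) * |s - c| := hmvt
      _ = M * (k:ℝ)^(p+2) * E * (c - s) := by
          rw [abs_sub_comm, abs_of_nonneg hcs]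
  -- Lagrange basis bounds
  have hnum_mem : ∀ i : ℕ, i ≠ 0 → i ≤ k →
      0 ≤ s - ((j:ℝ) - (i:ℝ)) * τ ∧ s - ((j:ℝ) - (i:ℝ)) * τ ≤ (i:ℝ) * τ := by
    intro i hi0 hik
    have hi1 : (1:ℝ) ≤ (i:ℝ) := by exact_mod_cast Nat.one_le_iff_ne_zero.2 hi0
    have h1 : ((j:ℝ)-1)*τ ≤ s := hs.1
    have h2 : s ≤ (j:ℝ)*τ := le_of_le_of_eq hs.2 hc
    constructor
    · linarith [mul_nonneg (by linarith : (0:ℝ) ≤ (i:ℝ)-1) hτ.le]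
    · linarith
  have hL0 : |L 0| ≤ 1 := by
    have : L 0 = ∏ i ∈ (Finset.range (k+1)).erase 0,
        (s - ((j:ℝ) - (i:ℝ)) * τ) / (((j:ℝ) - ((0:ℕ):ℝ)) * τ - ((j:ℝ) - (i:ℝ)) * τ) := by
      rw [hL]
    rw [this, Finset.abs_prod]
    apply Finset.prod_le_one
    · intro i _; exact abs_nonneg _
    · intro i hi
      obtain ⟨hi0, hik⟩ := Finset.mem_erase.1 hi
      have hik' : i ≤ k := Nat.lt_succ_iff.1 (Finset.mem_range.1 hik)
      have hi1 : (1:ℝ) ≤ (i:ℝ) := by exact_mod_cast Nat.one_le_iff_ne_zero.2 hi0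
      obtain ⟨hn0, hn1⟩ := hnum_mem i hi0 hik'
      have hden : ((j:ℝ) - ((0:ℕ):ℝ)) * τ - ((j:ℝ) - (i:ℝ)) * τ = (i:ℝ) * τ := by
        push_cast; ring
      rw [hden, abs_div, abs_of_nonneg hn0, abs_of_pos (by positivity)]
      rw [div_le_one (by positivity)]
      exact hn1
  have hLl : ∀ l, l < k → |L (l+1)| ≤ (c-s)/τ * (k:ℝ)^k := by
    intro l hl
    have hmem0 : 0 ∈ (Finset.range (k+1)).erase (l+1) :=
      Finset.mem_erase.2 ⟨(Nat.succ_ne_zero l).symm, Finset.mem_range.2 (by omega)⟩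
    have hLeq : L (l+1) = (s - ((j:ℝ) - ((0:ℕ):ℝ)) * τ) /
          (((j:ℝ) - ((l+1:ℕ):ℝ)) * τ - ((j:ℝ) - ((0:ℕ):ℝ)) * τ) *
        ∏ i ∈ ((Finset.range (k+1)).erase (l+1)).erase 0,
          (s - ((j:ℝ) - (i:ℝ)) * τ) / (((j:ℝ) - ((l+1:ℕ):ℝ)) * τ - ((j:ℝ) - (i:ℝ)) * τ) := by
      rw [hL]
      exact (Finset.mul_prod_erase _ _ hmem0).symm
    rw [hLeq, abs_mul, Finset.abs_prod]
    have hfac0 : |(s - ((j:ℝ) - ((0:ℕ):ℝ)) * τ) /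
        (((j:ℝ) - ((l+1:ℕ):ℝ)) * τ - ((j:ℝ) - ((0:ℕ):ℝ)) * τ)| ≤ (c - s) / τ := by
      have hnum : |s - ((j:ℝ) - ((0:ℕ):ℝ)) * τ| = c - s := by
        push_cast
        rw [show s - ((j:ℝ) - 0) * τ = -(c - s) by rw [hc]; ring, abs_neg, abs_of_nonneg hcs]
      have hden : |((j:ℝ) - ((l+1:ℕ):ℝ)) * τ - ((j:ℝ) - ((0:ℕ):ℝ)) * τ| = ((l:ℝ)+1) * τ := by
        push_cast
        rw [show ((j:ℝ) - ((l:ℝ)+1)) * τ - ((j:ℝ) - 0) * τ = -(((l:ℝ)+1) * τ) by ring,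
          abs_neg, abs_of_pos (by positivity)]
      rw [abs_div, hnum, hden]
      apply div_le_div_of_nonneg_left hcs hτ
      linarith [mul_nonneg (Nat.cast_nonneg l : (0:ℝ) ≤ (l:ℝ)) hτ.le]
    have hrest : ∏ i ∈ ((Finset.range (k+1)).erase (l+1)).erase 0,
        |(s - ((j:ℝ) - (i:ℝ)) * τ) / (((j:ℝ) - ((l+1:ℕ):ℝ)) * τ - ((j:ℝ) - (i:ℝ)) * τ)|
        ≤ (k:ℝ)^k := by
      have hstep : ∏ i ∈ ((Finset.range (k+1)).erase (l+1)).erase 0,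
          |(s - ((j:ℝ) - (i:ℝ)) * τ) / (((j:ℝ) - ((l+1:ℕ):ℝ)) * τ - ((j:ℝ) - (i:ℝ)) * τ)|
          ≤ ∏ _i ∈ ((Finset.range (k+1)).erase (l+1)).erase 0, (k:ℝ) := by
        apply Finset.prod_le_prod
        · intro i _; exact abs_nonneg _
        · intro i hi
          obtain ⟨hi0, hi'⟩ := Finset.mem_erase.1 hi
          obtain ⟨hil, hik⟩ := Finset.mem_erase.1 hi'
          have hik' : i ≤ k := Nat.lt_succ_iff.1 (Finset.mem_range.1 hik)
          have hik'' : (i:ℝ) ≤ (k:ℝ) := by exact_mod_cast hik'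
          obtain ⟨hn0, hn1⟩ := hnum_mem i hi0 hik'
          have hdenv : ((j:ℝ) - ((l+1:ℕ):ℝ)) * τ - ((j:ℝ) - (i:ℝ)) * τ
              = ((i:ℝ) - ((l:ℝ)+1)) * τ := by push_cast; ring
          have hdge : τ ≤ |((i:ℝ) - ((l:ℝ)+1)) * τ| := by
            rw [abs_mul, abs_of_pos hτ]
            have h1 : (1:ℤ) ≤ |(i:ℤ) - ((l:ℤ)+1)| := by
              have hne : (i:ℤ) ≠ (l:ℤ)+1 := by exact_mod_cast hil
              exact Int.one_le_abs (by omega)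
            have h2 : (1:ℝ) ≤ |(i:ℝ) - ((l:ℝ)+1)| := by exact_mod_cast h1
            calc τ = 1 * τ := (one_mul τ).symm
              _ ≤ |(i:ℝ) - ((l:ℝ)+1)| * τ := mul_le_mul_of_nonneg_right h2 hτ.le
          rw [abs_div, hdenv]
          have hnum_le : |s - ((j:ℝ) - (i:ℝ)) * τ| ≤ (k:ℝ) * τ := by
            rw [abs_of_nonneg hn0]
            have h3 : (i:ℝ) * τ ≤ (k:ℝ) * τ := mul_le_mul_of_nonneg_right hik'' hτ.le
            linarith
          have h4 := div_le_div₀ (by positivity : (0:ℝ) ≤ (k:ℝ) * τ) hnum_le hτ hdge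
          rw [mul_div_assoc, div_self (ne_of_gt hτ), mul_one] at h4
          exact h4
      apply le_trans hstep
      rw [Finset.prod_const]
      apply pow_le_pow_right₀ hk1
      have hmem1 : (l+1) ∈ Finset.range (k+1) := Finset.mem_range.2 (by omega)
      have hce : ((Finset.range (k+1)).erase (l+1)).card = k := by
        rw [Finset.card_erase_of_mem hmem1, Finset.card_range]
        omega
      have hcard := Finset.card_erase_le (s := (Finset.range (k+1)).erase (l+1)) (a := 0)
      omega
    calc |(s - ((j:ℝ) - ((0:ℕ):ℝ)) * τ) /
        (((j:ℝ) - ((l+1:ℕ):ℝ)) * τ - ((j:ℝ) - ((0:ℕ):ℝ)) * τ)| *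
        ∏ i ∈ ((Finset.range (k+1)).erase (l+1)).erase 0,
          |(s - ((j:ℝ) - (i:ℝ)) * τ) / (((j:ℝ) - ((l+1:ℕ):ℝ)) * τ - ((j:ℝ) - (i:ℝ)) * τ)|
        ≤ ((c-s)/τ) * (k:ℝ)^k := by
          apply mul_le_mul hfac0 hrest (Finset.prod_nonneg (fun i _ => abs_nonneg _))
          positivity
      _ = (c-s)/τ * (k:ℝ)^k := rfl
  -- assemble
  have habs : |u s - Pik τ u k j s| ≤ ∑ l ∈ Finset.range (k+1), |r s - r (v l)| * |L l| := by
    rw [main_id]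
    refine le_trans (Finset.abs_sum_le_sum_abs _ _) (le_of_eq ?_)
    exact Finset.sum_congr rfl (fun l _ => abs_mul _ _)
  have hsplit : ∑ l ∈ Finset.range (k+1), |r s - r (v l)| * |L l|
      = (∑ l ∈ Finset.range k, |r s - r (v (l+1))| * |L (l+1)|) + |r s - r (v 0)| * |L 0| :=
    Finset.sum_range_succ' _ k
  have hv0 : v 0 = c := by rw [hv, hc]; push_cast; ring
  have hterm0 : |r s - r (v 0)| * |L 0| ≤ M * (k:ℝ)^(p+2) * E * (c - s) := by
    rw [hv0]
    calc |r s - r c| * |L 0| ≤ (M * (k:ℝ)^(p+2) * E * (c-s)) * 1 := by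
          apply mul_le_mul hrsc hL0 (abs_nonneg _)
          have h0 : (0:ℝ) ≤ M * (k:ℝ)^(p+2) * E := by positivity
          exact mul_nonneg h0 hcs
      _ = M * (k:ℝ)^(p+2) * E * (c - s) := mul_one _
  have hterml : ∀ l ∈ Finset.range k, |r s - r (v (l+1))| * |L (l+1)|
      ≤ (2 * (M * (k:ℝ)^(p+3) * E * τ)) * ((c-s)/τ * (k:ℝ)^k) := by
    intro l hl
    have hlk : l < k := Finset.mem_range.1 hl
    have hvmem : v (l+1) ∈ Set.Icc a c := by
      rw [hv]
      constructor
      · rw [ha]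
        apply mul_le_mul_of_nonneg_right _ hτ.le
        have : ((l+1:ℕ):ℝ) ≤ (k:ℝ) := by exact_mod_cast hlk
        push_cast at this ⊢
        linarith
      · rw [hc]
        apply mul_le_mul_of_nonneg_right _ hτ.le
        have : (0:ℝ) ≤ ((l+1:ℕ):ℝ) := Nat.cast_nonneg _
        push_cast at this ⊢
        linarith
    have h1 : |r s - r (v (l+1))| ≤ 2 * (M * (k:ℝ)^(p+3) * E * τ) := by
      have := abs_sub (r s) (r (v (l+1)))
      have hb1 := hrbound s hsac
      have hb2 := hrbound (v (l+1)) hvmem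
      calc |r s - r (v (l+1))| ≤ |r s| + |r (v (l+1))| := abs_sub _ _
        _ ≤ 2 * (M * (k:ℝ)^(p+3) * E * τ) := by linarith
    apply mul_le_mul h1 (hLl l hlk) (abs_nonneg _)
    positivity
  have hsum_bound : ∑ l ∈ Finset.range k, |r s - r (v (l+1))| * |L (l+1)|
      ≤ (k:ℝ) * ((2 * (M * (k:ℝ)^(p+3) * E * τ)) * ((c-s)/τ * (k:ℝ)^k)) := by
    refine le_trans (Finset.sum_le_sum hterml) (le_of_eq ?_)
    rw [Finset.sum_const, Finset.card_range, nsmul_eq_mul]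
  have hEexp : τ ^ (((p+2:ℕ):ℝ) - 1 + β) = E := by
    rw [hE]
    congr 1
    push_cast
    ring
  have hcancel : (k:ℝ) * ((2 * (M * (k:ℝ)^(p+3) * E * τ)) * ((c-s)/τ * (k:ℝ)^k))
      = 2 * M * (k:ℝ)^(k+p+4) * E * (c-s) := by
    field_simp
    ring
  have hpw : (k:ℝ)^(p+2) ≤ (k:ℝ)^(k+p+4) := pow_le_pow_right₀ hk1 (by omega)
  have t1 : M * (k:ℝ)^(p+2) * E * (c-s) ≤ M * (k:ℝ)^(k+p+4) * E * (c-s) := by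
    have h1 := mul_le_mul_of_nonneg_left hpw hM0
    exact mul_le_mul_of_nonneg_right (mul_le_mul_of_nonneg_right h1 hE0) hcs
  have t3 : (0:ℝ) ≤ 3 * (k:ℝ)^(k+p+4) * (c-s) * τ^(p+2) := by
    have : (0:ℝ) ≤ 3 * (k:ℝ)^(k+p+4) := by positivity
    have h2 : (0:ℝ) ≤ τ^(p+2) := by positivity
    exact mul_nonneg (mul_nonneg this hcs) h2
  calc |u s - Pik τ u k j s|
      ≤ ∑ l ∈ Finset.range (k+1), |r s - r (v l)| * |L l| := habs
    _ = (∑ l ∈ Finset.range k, |r s - r (v (l+1))| * |L (l+1)|) + |r s - r (v 0)| * |L 0| :=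
        hsplit
    _ ≤ (k:ℝ) * ((2 * (M * (k:ℝ)^(p+3) * E * τ)) * ((c-s)/τ * (k:ℝ)^k))
        + M * (k:ℝ)^(p+2) * E * (c - s) := add_le_add hsum_bound hterm0
    _ = 2 * M * (k:ℝ)^(k+p+4) * E * (c-s) + M * (k:ℝ)^(p+2) * E * (c-s) := by rw [hcancel]
    _ ≤ 2 * M * (k:ℝ)^(k+p+4) * E * (c-s) + M * (k:ℝ)^(k+p+4) * E * (c-s) :=
        add_le_add_right t1 _
    _ = 3 * (k:ℝ)^(k+p+4) * (c-s) * (E * M) := by ring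
    _ ≤ 3 * (k:ℝ)^(k+p+4) * (c-s) * (E * M) + 3 * (k:ℝ)^(k+p+4) * (c-s) * τ^(p+2) := by
        linarith
    _ = 3 * (k:ℝ)^(k+p+4) * (c-s) * (E * M + τ^(p+2)) := by ring
    _ = 3 * (k:ℝ)^(k+p+4) * ((j:ℝ)*τ - s) * (τ ^ (((p+2:ℕ):ℝ) - 1 + β) * M + τ^(p+2)) := by
        rw [hEexp, hc]
end
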